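/- arXiv:2204.07798 — 5 statements merged into one kernel-verified Lean document; each statement's English description precedes it below -/
import Mathlib

section
/- Let G and H be finite simple graphs with the same Laplacian permanental polynomial, i.e., per(xI − L(G)) = per(xI − L(H)) as polynomials in x. Then: (i) G and H have the same number of vertices; (ii) G and H have the same number of edges; (iii) the sum of the squares of the vertex degrees of G equals that of H; and (iv) Σ_i d_i(G)³ − 6c₃(G) = Σ_i d_i(H)³ − 6c₃(H), where d_i denotes the degree of the i-th vertex and c₃ denotes the number of triangles in the graph. -/
open scoped Classical
open Polynomial

noncomputable section

/-- The Laplacian permanental polynomial `per(x·I − L(G))` of a graph `G`,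
where `L(G) = D(G) − A(G)` is the Laplacian matrix. -/
def lapPermPoly {V : Type*} [Fintype V] (G : SimpleGraph V) : Polynomial ℚ :=
  Matrix.permanent
    (Matrix.diagonal (fun _ : V => (X : Polynomial ℚ)) - (G.lapMatrix ℚ).map Polynomial.C)

/-- The number of triangles (3-cycles) of `G`, i.e. the number of 3-cliques. -/
def triangleCount {V : Type*} [Fintype V] (G : SimpleGraph V) : ℕ :=
  (G.cliqueFinset 3).card

section Aux
set_option linter.unusedSectionVars false

variable {V : Type*} [Fintype V]

/- ### Coefficients of products of linear factors -/

lemma Q_coeffs (d : V → ℚ) (t : Finset V) :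
    (∏ i ∈ t, (1 - C (d i) * X)).coeff 0 = 1 ∧
    (∏ i ∈ t, (1 - C (d i) * X)).coeff 1 = -(∑ i ∈ t, d i) ∧
    (∏ i ∈ t, (1 - C (d i) * X)).coeff 2 =
      ((∑ i ∈ t, d i)^2 - ∑ i ∈ t, (d i)^2)/2 ∧
    (∏ i ∈ t, (1 - C (d i) * X)).coeff 3 =
      -((∑ i ∈ t, d i)^3 - 3*(∑ i ∈ t, d i)*(∑ i ∈ t, (d i)^2)
         + 2*∑ i ∈ t, (d i)^3)/6 := by
  classical
  induction t using Finset.induction_on with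
  | empty => simp [Polynomial.coeff_one]
  | insert _ _ ha ih =>
    rename_i a t
    obtain ⟨h0, h1, h2, h3⟩ := ih
    set P := ∏ i ∈ t, (1 - C (d i) * X) with hP
    have expand : ∏ i ∈ insert a t, (1 - C (d i) * X)
        = P - C (d a) * (X * P) := by
      rw [Finset.prod_insert ha]; ring
    have cX0 : (X * P).coeff 0 = 0 := by
      rw [Polynomial.mul_coeff_zero]; simp
    have cX : ∀ k : ℕ, (X * P).coeff (k + 1) = P.coeff k := by
      intro k; rw [Polynomial.coeff_X_mul]
    rw [expand]
    simp only [Polynomial.coeff_sub, Polynomial.coeff_C_mul, Finset.sum_insert ha]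
    refine ⟨?_, ?_, ?_, ?_⟩
    · rw [cX0, h0]; ring
    · rw [show (1:ℕ) = 0 + 1 from rfl, cX, h0, h1]; ring
    · rw [show (2:ℕ) = 1 + 1 from rfl, cX, h1, h2]; ring
    · rw [show (3:ℕ) = 2 + 1 from rfl, cX, h2, h3]; ring

/- ### Reflection lemmas -/

lemma natDegree_P_le (d : V → ℚ) (t : Finset V) :
    (∏ i ∈ t, (X - C (d i))).natDegree ≤ t.card := by
  refine le_trans (Polynomial.natDegree_prod_le _ _) ?_
  simp [Polynomial.natDegree_X_sub_C]

lemma reflect_one_X_sub_C (a : ℚ) :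
    reflect 1 (X - C a) = 1 - C a * X := by
  have h : (X : ℚ[X]) - C a = X ^ 1 + C (-a) * X ^ 0 := by
    simp [sub_eq_add_neg]
  rw [h, Polynomial.reflect_add, Polynomial.reflect_monomial,
    Polynomial.reflect_C_mul_X_pow]
  simp [sub_eq_add_neg]

lemma reflect_prod_X_sub_C (d : V → ℚ) (t : Finset V) :
    reflect t.card (∏ i ∈ t, (X - C (d i))) = ∏ i ∈ t, (1 - C (d i) * X) := by
  classical
  induction t using Finset.induction_on with
  | empty => simp
  | insert _ _ ha ih =>
    rename_i a t
    rw [Finset.prod_insert ha, Finset.prod_insert ha,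
      Finset.card_insert_of_notMem ha, show t.card + 1 = 1 + t.card by ring,
      Polynomial.reflect_mul _ _ (by simp [Polynomial.natDegree_X_sub_C] :
        (X - C (d a)).natDegree ≤ 1) (natDegree_P_le d t),
      reflect_one_X_sub_C, ih]

lemma reflect_sum {ι : Type*} (s : Finset ι) (f : ι → ℚ[X]) (N : ℕ) :
    reflect N (∑ i ∈ s, f i) = ∑ i ∈ s, reflect N (f i) := by
  classical
  induction s using Finset.induction_on with
  | empty => simp
  | insert _ _ ha ih =>
    rename_i a s
    rw [Finset.sum_insert ha, Finset.sum_insert ha, Polynomial.reflect_add, ih]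

lemma reflect_C_mul_prod (w : ℚ) (d : V → ℚ) (t : Finset V) :
    reflect (Fintype.card V) (C w * ∏ i ∈ t, (X - C (d i)))
      = C w * (X ^ tᶜ.card * ∏ i ∈ t, (1 - C (d i) * X)) := by
  classical
  rw [Polynomial.reflect_C_mul]
  congr 1
  have hcard : Fintype.card V = tᶜ.card + t.card := by
    rw [add_comm, Finset.card_add_card_compl]
  calc reflect (Fintype.card V) (∏ i ∈ t, (X - C (d i)))
      = reflect (tᶜ.card + t.card) ((1 : ℚ[X]) * ∏ i ∈ t, (X - C (d i))) := by
        rw [← hcard, one_mul]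
    _ = reflect tᶜ.card 1 * reflect t.card (∏ i ∈ t, (X - C (d i))) :=
        Polynomial.reflect_mul _ _ (by simp) (natDegree_P_le d t)
    _ = X ^ tᶜ.card * ∏ i ∈ t, (1 - C (d i) * X) := by
        rw [reflect_prod_X_sub_C, Polynomial.reflect_one]

/- ### Decomposition of the permanental polynomial over permutations -/

/-- The weight of a permutation: the product of the negated off-diagonal Laplacian
entries over its support. -/
def pw (G : SimpleGraph V) (σ : Equiv.Perm V) : ℚ :=
  ∏ i ∈ σ.support, -(G.lapMatrix ℚ (σ i) i)

lemma lapPermPoly_eq_sum (G : SimpleGraph V) :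
    lapPermPoly G = ∑ σ : Equiv.Perm V,
      C (pw G σ) * ∏ i ∈ σ.supportᶜ, (X - C (G.lapMatrix ℚ i i)) := by
  classical
  rw [lapPermPoly, Matrix.permanent]
  refine Finset.sum_congr rfl fun σ _ => ?_
  rw [← Finset.prod_mul_prod_compl σ.support]
  congr 1
  · rw [pw, map_prod]
    refine Finset.prod_congr rfl fun i hi => ?_
    have hne : σ i ≠ i := Equiv.Perm.mem_support.mp hi
    simp [Matrix.sub_apply, Matrix.diagonal_apply_ne _ hne, Matrix.map_apply]
  · refine Finset.prod_congr rfl fun i hi => ?_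
    have heq : σ i = i := Equiv.Perm.notMem_support.mp (Finset.mem_compl.mp hi)
    rw [heq]
    simp [Matrix.sub_apply, Matrix.map_apply]

lemma term_natDegree_le (w : ℚ) (d : V → ℚ) (t : Finset V) :
    (C w * ∏ i ∈ t, (X - C (d i))).natDegree ≤ t.card :=
  le_trans (Polynomial.natDegree_C_mul_le _ _)
    (le_trans (Polynomial.natDegree_prod_le _ _) (by simp [Polynomial.natDegree_X_sub_C]))

lemma prod_univ_monic (d : V → ℚ) :
    (∏ i : V, (X - C (d i))).Monic :=
  Polynomial.monic_prod_of_monic _ _ fun i _ => Polynomial.monic_X_sub_C (d i)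

lemma prod_univ_natDegree (d : V → ℚ) :
    (∏ i : V, (X - C (d i))).natDegree = Fintype.card V := by
  rw [Polynomial.natDegree_prod _ _ fun i _ => Polynomial.X_sub_C_ne_zero (d i)]
  simp [Polynomial.natDegree_X_sub_C]

lemma coeff_card_lapPermPoly (G : SimpleGraph V) :
    (lapPermPoly G).coeff (Fintype.card V) = 1 := by
  classical
  rw [lapPermPoly_eq_sum, Polynomial.finset_sum_coeff]
  rw [Finset.sum_eq_single (1 : Equiv.Perm V)]
  · simp only [Equiv.Perm.support_one, Finset.compl_empty]
    rw [pw, Equiv.Perm.support_one, Finset.prod_empty, map_one, one_mul]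
    have h1 : (Finset.univ : Finset V).prod (fun i => X - C (G.lapMatrix ℚ i i))
        = ∏ i : V, (X - C (G.lapMatrix ℚ i i)) := rfl
    rw [h1, ← prod_univ_natDegree (fun i => G.lapMatrix ℚ i i)]
    exact (prod_univ_monic _).coeff_natDegree
  · intro σ _ hσ
    refine Polynomial.coeff_eq_zero_of_natDegree_lt
      (lt_of_le_of_lt (term_natDegree_le _ _ _) ?_)
    rw [Finset.card_compl]
    have h2 : 0 < σ.support.card :=
      lt_trans one_pos (Equiv.Perm.one_lt_card_support_of_ne_one hσ)
    have h3 : σ.support.card ≤ Fintype.card V := by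
      simpa using Finset.card_le_univ σ.support
    omega
  · intro h; exact absurd (Finset.mem_univ _) h

lemma natDegree_lapPermPoly (G : SimpleGraph V) :
    (lapPermPoly G).natDegree = Fintype.card V := by
  classical
  refine le_antisymm ?_ (Polynomial.le_natDegree_of_ne_zero ?_)
  · rw [lapPermPoly_eq_sum]
    refine le_trans (Polynomial.natDegree_sum_le _ _) ?_
    rw [Finset.fold_max_le]
    refine ⟨Nat.zero_le _, fun σ _ => le_trans (term_natDegree_le _ _ _) ?_⟩
    exact Finset.card_le_univ _
  · rw [coeff_card_lapPermPoly]; exact one_ne_zero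

/- ### Coefficients of the reflected polynomial -/

lemma reflect_lapPermPoly (G : SimpleGraph V) :
    reflect (Fintype.card V) (lapPermPoly G) = ∑ σ : Equiv.Perm V,
      C (pw G σ) * (X ^ σ.support.card *
        ∏ i ∈ σ.supportᶜ, (1 - C (G.lapMatrix ℚ i i) * X)) := by
  rw [lapPermPoly_eq_sum, reflect_sum]
  refine Finset.sum_congr rfl fun σ _ => ?_
  rw [reflect_C_mul_prod, compl_compl]

lemma coeff_reflect_lapPermPoly (G : SimpleGraph V) (k : ℕ) :
    (reflect (Fintype.card V) (lapPermPoly G)).coeff k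
      = ∑ σ : Equiv.Perm V, pw G σ *
          (if σ.support.card ≤ k then
            (∏ i ∈ σ.supportᶜ, (1 - C (G.lapMatrix ℚ i i) * X)).coeff (k - σ.support.card)
           else 0) := by
  rw [reflect_lapPermPoly, Polynomial.finset_sum_coeff]
  refine Finset.sum_congr rfl fun σ _ => ?_
  rw [Polynomial.coeff_C_mul, Polynomial.coeff_X_pow_mul']

lemma coeff_one_reflect (G : SimpleGraph V) :
    (reflect (Fintype.card V) (lapPermPoly G)).coeff 1
      = -(∑ i : V, G.lapMatrix ℚ i i) := by
  rw [coeff_reflect_lapPermPoly]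
  have key : ∀ σ : Equiv.Perm V, pw G σ *
      (if σ.support.card ≤ 1 then
        (∏ i ∈ σ.supportᶜ, (1 - C (G.lapMatrix ℚ i i) * X)).coeff (1 - σ.support.card)
       else 0)
      = if σ = 1 then -(∑ i : V, G.lapMatrix ℚ i i) else 0 := by
    intro σ
    by_cases hσ : σ = 1
    · subst hσ
      simp only [Equiv.Perm.support_one, Finset.card_empty, Finset.compl_empty,
        if_pos (Nat.zero_le 1), if_pos rfl]
      rw [pw, Equiv.Perm.support_one, Finset.prod_empty, one_mul]
      exact (Q_coeffs _ _).2.1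
    · have h2 : ¬ (σ.support.card ≤ 1) := by
        have := Equiv.Perm.one_lt_card_support_of_ne_one hσ; omega
      rw [if_neg h2, mul_zero, if_neg hσ]
  rw [Finset.sum_congr rfl fun σ _ => key σ, Finset.sum_ite_eq' Finset.univ 1]
  simp

lemma coeff_two_reflect (G : SimpleGraph V) :
    (reflect (Fintype.card V) (lapPermPoly G)).coeff 2
      = ((∑ i : V, G.lapMatrix ℚ i i)^2 - ∑ i : V, (G.lapMatrix ℚ i i)^2)/2
        + ∑ σ ∈ Finset.univ.filter (fun σ : Equiv.Perm V => σ.support.card = 2),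
            pw G σ := by
  rw [coeff_reflect_lapPermPoly]
  have key : ∀ σ : Equiv.Perm V, pw G σ *
      (if σ.support.card ≤ 2 then
        (∏ i ∈ σ.supportᶜ, (1 - C (G.lapMatrix ℚ i i) * X)).coeff (2 - σ.support.card)
       else 0)
      = (if σ = 1 then
          ((∑ i : V, G.lapMatrix ℚ i i)^2 - ∑ i : V, (G.lapMatrix ℚ i i)^2)/2 else 0)
        + (if σ.support.card = 2 then pw G σ else 0) := by
    intro σ
    by_cases hσ : σ = 1
    · subst hσ
      simp only [Equiv.Perm.support_one, Finset.card_empty, Finset.compl_empty, pw,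
        Finset.prod_empty, one_mul]
      norm_num [(Q_coeffs (fun i => G.lapMatrix ℚ i i) Finset.univ).2.2.1]
    · have h2 : 2 ≤ σ.support.card := Equiv.Perm.one_lt_card_support_of_ne_one hσ
      rw [if_neg hσ, zero_add]
      by_cases hs : σ.support.card = 2
      · simp only [hs]
        norm_num [(Q_coeffs (fun i => G.lapMatrix ℚ i i) σ.supportᶜ).1]
      · rw [if_neg hs, if_neg (show ¬(σ.support.card ≤ 2) by omega), mul_zero]
  rw [Finset.sum_congr rfl fun σ _ => key σ, Finset.sum_add_distrib,
    Finset.sum_ite_eq' Finset.univ 1, Finset.sum_filter]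
  simp

lemma coeff_three_reflect (G : SimpleGraph V) :
    (reflect (Fintype.card V) (lapPermPoly G)).coeff 3
      = -((∑ i : V, G.lapMatrix ℚ i i)^3
           - 3*(∑ i : V, G.lapMatrix ℚ i i)*(∑ i : V, (G.lapMatrix ℚ i i)^2)
           + 2*∑ i : V, (G.lapMatrix ℚ i i)^3)/6
        + ∑ σ ∈ Finset.univ.filter (fun σ : Equiv.Perm V => σ.support.card = 2),
            pw G σ * (-(∑ i ∈ σ.supportᶜ, G.lapMatrix ℚ i i))
        + ∑ σ ∈ Finset.univ.filter (fun σ : Equiv.Perm V => σ.support.card = 3),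
            pw G σ := by
  rw [coeff_reflect_lapPermPoly]
  have key : ∀ σ : Equiv.Perm V, pw G σ *
      (if σ.support.card ≤ 3 then
        (∏ i ∈ σ.supportᶜ, (1 - C (G.lapMatrix ℚ i i) * X)).coeff (3 - σ.support.card)
       else 0)
      = ((if σ = 1 then
          -((∑ i : V, G.lapMatrix ℚ i i)^3
           - 3*(∑ i : V, G.lapMatrix ℚ i i)*(∑ i : V, (G.lapMatrix ℚ i i)^2)
           + 2*∑ i : V, (G.lapMatrix ℚ i i)^3)/6 else 0)
        + (if σ.support.card = 2 then
             pw G σ * (-(∑ i ∈ σ.supportᶜ, G.lapMatrix ℚ i i)) else 0))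
        + (if σ.support.card = 3 then pw G σ else 0) := by
    intro σ
    by_cases hσ : σ = 1
    · subst hσ
      simp only [Equiv.Perm.support_one, Finset.card_empty, Finset.compl_empty, pw,
        Finset.prod_empty, one_mul]
      norm_num [(Q_coeffs (fun i => G.lapMatrix ℚ i i) Finset.univ).2.2.2]
    · have h2 : 2 ≤ σ.support.card := Equiv.Perm.one_lt_card_support_of_ne_one hσ
      rw [if_neg hσ, zero_add]
      by_cases hs : σ.support.card = 2
      · simp only [hs]
        norm_num [(Q_coeffs (fun i => G.lapMatrix ℚ i i) σ.supportᶜ).2.1]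
      · by_cases hs3 : σ.support.card = 3
        · simp only [hs3]
          norm_num [(Q_coeffs (fun i => G.lapMatrix ℚ i i) σ.supportᶜ).1]
        · rw [if_neg hs, if_neg hs3,
            if_neg (show ¬(σ.support.card ≤ 3) by omega), mul_zero, add_zero]
  rw [Finset.sum_congr rfl fun σ _ => key σ, Finset.sum_add_distrib,
    Finset.sum_add_distrib, Finset.sum_ite_eq' Finset.univ 1,
    Finset.sum_filter, Finset.sum_filter]
  simp
end Aux
section Aux2
set_option linter.unusedSectionVars false
open Finset

variable {V : Type*} [Fintype V]

/- ### Counting with constant fibers -/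

lemma sum_const_fiber {α β : Type*} [DecidableEq β] (s : Finset α) (t : Finset β)
    (Φ : α → β) (c : ℕ)
    (himg : s.image Φ = t) (hfib : ∀ b ∈ t, (s.filter fun a => Φ a = b).card = c)
    (g : β → ℚ) : ∑ a ∈ s, g (Φ a) = c * ∑ b ∈ t, g b := by
  classical
  rw [Finset.sum_comp, himg, Finset.mul_sum]
  refine Finset.sum_congr rfl fun b hb => ?_
  rw [hfib b hb, nsmul_eq_mul]

lemma lap_diag (G : SimpleGraph V) (i : V) :
    G.lapMatrix ℚ i i = (G.degree i : ℚ) := by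
  simp [SimpleGraph.lapMatrix, SimpleGraph.degMatrix, Matrix.sub_apply]

lemma lap_offdiag (G : SimpleGraph V) {i j : V} (h : i ≠ j) :
    -(G.lapMatrix ℚ i j) = if G.Adj i j then 1 else 0 := by
  simp [SimpleGraph.lapMatrix, SimpleGraph.degMatrix, Matrix.sub_apply,
    Matrix.diagonal_apply_ne _ h]

/- ### Transpositions -/

lemma swap_image :
    (Finset.univ.offDiag : Finset (V × V)).image (fun p => Equiv.swap p.1 p.2)
      = Finset.univ.filter (fun σ : Equiv.Perm V => σ.support.card = 2) := by
  ext σ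
  simp only [Finset.mem_image, Finset.mem_filter, Finset.mem_univ, true_and,
    Finset.mem_offDiag]
  constructor
  · rintro ⟨⟨i, j⟩, hij, rfl⟩
    rw [Equiv.Perm.support_swap hij]
    rw [Finset.card_insert_of_notMem (by simp [hij]), Finset.card_singleton]
  · intro h2
    obtain ⟨i, j, hij, rfl⟩ := Equiv.Perm.card_support_eq_two.mp h2
    exact ⟨(i, j), hij, rfl⟩

lemma swap_fiber (σ : Equiv.Perm V) (hσ : σ.support.card = 2) :
    ((Finset.univ.offDiag : Finset (V × V)).filter
        (fun p => Equiv.swap p.1 p.2 = σ)).card = 2 := by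
  obtain ⟨x, y, hxy, rfl⟩ := Equiv.Perm.card_support_eq_two.mp hσ
  have hset : ((Finset.univ.offDiag : Finset (V × V)).filter
        (fun p => Equiv.swap p.1 p.2 = Equiv.swap x y)) = {(x, y), (y, x)} := by
    ext ⟨i, j⟩
    simp only [Finset.mem_filter, Finset.mem_offDiag, Finset.mem_univ, true_and,
      Finset.mem_insert, Finset.mem_singleton, Prod.mk.injEq]
    constructor
    · rintro ⟨hij, heq⟩
      have hj : j = Equiv.swap x y i := by
        rw [← heq, Equiv.swap_apply_left]
      have hi : i ∈ (Equiv.swap x y).support := by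
        rw [← heq, Equiv.Perm.support_swap hij]; simp
      rw [Equiv.Perm.support_swap hxy] at hi
      simp only [Finset.mem_insert, Finset.mem_singleton] at hi
      rcases hi with rfl | rfl
      · left; exact ⟨rfl, by rw [hj, Equiv.swap_apply_left]⟩
      · right; exact ⟨rfl, by rw [hj, Equiv.swap_apply_right]⟩
    · rintro (⟨rfl, rfl⟩ | ⟨rfl, rfl⟩)
      · exact ⟨hxy, rfl⟩
      · exact ⟨hxy.symm, Equiv.swap_comm _ _⟩
  rw [hset]
  rw [Finset.card_insert_of_notMem (by simp [Prod.ext_iff, hxy]), Finset.card_singleton]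

lemma sum_swaps (g : Equiv.Perm V → ℚ) :
    ∑ p ∈ (Finset.univ.offDiag : Finset (V × V)), g (Equiv.swap p.1 p.2)
      = 2 * ∑ σ ∈ Finset.univ.filter
          (fun σ : Equiv.Perm V => σ.support.card = 2), g σ := by
  refine sum_const_fiber _ _ _ 2 swap_image ?_ g
  intro σ hσ
  exact swap_fiber σ (Finset.mem_filter.mp hσ).2

lemma pw_swap (G : SimpleGraph V) {i j : V} (h : i ≠ j) :
    pw G (Equiv.swap i j) = if G.Adj i j then 1 else 0 := by
  rw [pw, Equiv.Perm.support_swap h, Finset.prod_pair h,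
    Equiv.swap_apply_left, Equiv.swap_apply_right,
    lap_offdiag G h.symm, lap_offdiag G h]
  by_cases hadj : G.Adj i j
  · rw [if_pos hadj, if_pos hadj.symm, one_mul]
  · rw [if_neg hadj, mul_zero]

/- ### Evaluating the transposition sums -/

lemma offDiag_to_full (F : V → V → ℚ) (hdiag : ∀ i, F i i = 0) :
    ∑ p ∈ (Finset.univ.offDiag : Finset (V × V)), F p.1 p.2
      = ∑ i : V, ∑ j : V, F i j := by
  classical
  rw [show (Finset.univ.offDiag : Finset (V × V)) = (Finset.univ ×ˢ Finset.univ).filter (fun a : V × V => a.1 ≠ a.2) by ext; simp, Finset.sum_filter, Finset.sum_product]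
  refine Finset.sum_congr rfl fun i _ => Finset.sum_congr rfl fun j _ => ?_
  by_cases hij : i = j
  · subst hij; simp [hdiag]
  · rw [if_pos hij]

lemma row_sum (G : SimpleGraph V) (i : V) :
    ∑ j : V, (if G.Adj i j then (1 : ℚ) else 0) = (G.degree i : ℚ) := by
  rw [Finset.sum_boole, SimpleGraph.degree]
  congr 1
  rw [SimpleGraph.neighborFinset_eq_filter]

lemma col_sum (G : SimpleGraph V) (j : V) :
    ∑ i : V, (if G.Adj i j then (1 : ℚ) else 0) = (G.degree j : ℚ) := by
  rw [← row_sum G j]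
  refine Finset.sum_congr rfl fun i _ => ?_
  simp_rw [SimpleGraph.adj_comm]

lemma hA (G : SimpleGraph V) :
    ∑ i : V, ∑ j : V, (if G.Adj i j then (1 : ℚ) else 0)
      = ∑ i : V, (G.degree i : ℚ) :=
  Finset.sum_congr rfl fun i _ => row_sum G i

lemma hB (G : SimpleGraph V) :
    ∑ i : V, ∑ j : V, (if G.Adj i j then (1 : ℚ) else 0) * (G.degree i : ℚ)
      = ∑ i : V, (G.degree i : ℚ)^2 := by
  refine Finset.sum_congr rfl fun i _ => ?_
  rw [← Finset.sum_mul, row_sum G i, sq]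

lemma hC (G : SimpleGraph V) :
    ∑ i : V, ∑ j : V, (if G.Adj i j then (1 : ℚ) else 0) * (G.degree j : ℚ)
      = ∑ i : V, (G.degree i : ℚ)^2 := by
  rw [Finset.sum_comm]
  refine Finset.sum_congr rfl fun j _ => ?_
  rw [← Finset.sum_mul, col_sum G j, sq]

lemma S2_eval (G : SimpleGraph V) :
    ∑ σ ∈ Finset.univ.filter (fun σ : Equiv.Perm V => σ.support.card = 2), pw G σ
      = (∑ i : V, (G.degree i : ℚ)) / 2 := by
  have h := sum_swaps (fun σ => pw G σ)
  have h2 : ∑ p ∈ (Finset.univ.offDiag : Finset (V × V)), pw G (Equiv.swap p.1 p.2)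
      = ∑ i : V, (G.degree i : ℚ) := by
    have congr1 : ∑ p ∈ (Finset.univ.offDiag : Finset (V × V)), pw G (Equiv.swap p.1 p.2)
        = ∑ p ∈ (Finset.univ.offDiag : Finset (V × V)),
            (if G.Adj p.1 p.2 then (1:ℚ) else 0) := by
      refine Finset.sum_congr rfl fun p hp => ?_
      rw [Finset.mem_offDiag] at hp
      exact pw_swap G hp.2.2
    rw [congr1,
      offDiag_to_full (fun i j => if G.Adj i j then (1:ℚ) else 0) (fun i => by simp), hA]
  rw [h2] at h
  linarith [h]

lemma S2'_eval (G : SimpleGraph V) :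
    ∑ σ ∈ Finset.univ.filter (fun σ : Equiv.Perm V => σ.support.card = 2),
        pw G σ * (-(∑ i ∈ σ.supportᶜ, G.lapMatrix ℚ i i))
      = (2 * (∑ i : V, (G.degree i : ℚ)^2)
          - (∑ i : V, (G.degree i : ℚ))^2) / 2 := by
  have h := sum_swaps (fun σ => pw G σ * (-(∑ i ∈ σ.supportᶜ, G.lapMatrix ℚ i i)))
  have key : ∀ p ∈ (Finset.univ.offDiag : Finset (V × V)),
      pw G (Equiv.swap p.1 p.2) *
          (-(∑ i ∈ (Equiv.swap p.1 p.2).supportᶜ, G.lapMatrix ℚ i i))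
        = (if G.Adj p.1 p.2 then (1:ℚ) else 0) *
            ((G.degree p.1 : ℚ) + (G.degree p.2 : ℚ) - ∑ i : V, (G.degree i : ℚ)) := by
    rintro ⟨i, j⟩ hp
    rw [Finset.mem_offDiag] at hp
    have hij : i ≠ j := hp.2.2
    rw [pw_swap G hij, Equiv.Perm.support_swap hij]
    congr 1
    have hsplit : ∑ k ∈ ({i, j} : Finset V)ᶜ, G.lapMatrix ℚ k k
        + ∑ k ∈ ({i, j} : Finset V), G.lapMatrix ℚ k k = ∑ k : V, G.lapMatrix ℚ k k :=
      Finset.sum_compl_add_sum _ _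
    rw [Finset.sum_pair hij] at hsplit
    simp only [lap_diag] at hsplit ⊢
    linarith [hsplit]
  rw [Finset.sum_congr rfl key] at h
  rw [offDiag_to_full (fun i j => (if G.Adj i j then (1:ℚ) else 0) *
      ((G.degree i : ℚ) + (G.degree j : ℚ) - ∑ k : V, (G.degree k : ℚ)))
      (fun i => by simp)] at h
  have expand : ∑ i : V, ∑ j : V, (if G.Adj i j then (1:ℚ) else 0) *
      ((G.degree i : ℚ) + (G.degree j : ℚ) - ∑ k : V, (G.degree k : ℚ))
      = (∑ i : V, ∑ j : V, (if G.Adj i j then (1:ℚ) else 0) * (G.degree i : ℚ))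
        + (∑ i : V, ∑ j : V, (if G.Adj i j then (1:ℚ) else 0) * (G.degree j : ℚ))
        - (∑ i : V, ∑ j : V, (if G.Adj i j then (1:ℚ) else 0))
            * ∑ k : V, (G.degree k : ℚ) := by
    rw [Finset.sum_mul]
    rw [← Finset.sum_add_distrib, ← Finset.sum_sub_distrib]
    refine Finset.sum_congr rfl fun i _ => ?_
    rw [Finset.sum_mul, ← Finset.sum_add_distrib, ← Finset.sum_sub_distrib]
    refine Finset.sum_congr rfl fun j _ => ?_
    ring
  rw [expand, hB, hC, hA] at h
  linarith [h]
end Aux2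
section Aux3
set_option linter.unusedSectionVars false
open Finset

variable {V : Type*} [Fintype V] {a b c : V}

/- ### Three-cycles -/

/-- The 3-cycle `a ↦ b ↦ c ↦ a`. -/
def cyc (a b c : V) : Equiv.Perm V := Equiv.swap a c * Equiv.swap a b

lemma cyc_apply_a (hab : a ≠ b) (hbc : b ≠ c) :
    cyc a b c a = b := by
  simp only [cyc, Equiv.Perm.mul_apply, Equiv.swap_apply_left]
  exact Equiv.swap_apply_of_ne_of_ne hab.symm hbc

lemma cyc_apply_b : cyc a b c b = c := by
  have h1 : Equiv.swap a b b = a := Equiv.swap_apply_right a b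
  simp only [cyc, Equiv.Perm.mul_apply, h1, Equiv.swap_apply_left]

lemma cyc_apply_c (hac : a ≠ c) (hbc : b ≠ c) :
    cyc a b c c = a := by
  have h1 : Equiv.swap a b c = c := Equiv.swap_apply_of_ne_of_ne hac.symm hbc.symm
  simp only [cyc, Equiv.Perm.mul_apply, h1, Equiv.swap_apply_right]

lemma cyc_apply_other {x : V} (hxa : x ≠ a) (hxb : x ≠ b) (hxc : x ≠ c) :
    cyc a b c x = x := by
  have h1 : Equiv.swap a b x = x := Equiv.swap_apply_of_ne_of_ne hxa hxb
  simp only [cyc, Equiv.Perm.mul_apply, h1]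
  exact Equiv.swap_apply_of_ne_of_ne hxa hxc

lemma support_cyc (hab : a ≠ b) (hac : a ≠ c) (hbc : b ≠ c) :
    (cyc a b c).support = {a, b, c} := by
  ext x
  rw [Equiv.Perm.mem_support]
  simp only [Finset.mem_insert, Finset.mem_singleton]
  by_cases hxa : x = a
  · subst hxa; rw [cyc_apply_a hab hbc]; simp [hab.symm]
  · by_cases hxb : x = b
    · subst hxb; rw [cyc_apply_b]; simp [hbc, hbc.symm]
    · by_cases hxc : x = c
      · subst hxc; rw [cyc_apply_c hac hbc]; simp [hac, hac.symm, hxa, hxb]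
      · rw [cyc_apply_other hxa hxb hxc]; simp [hxa, hxb, hxc]

lemma card_triple (hab : a ≠ b) (hac : a ≠ c) (hbc : b ≠ c) :
    ({a, b, c} : Finset V).card = 3 := by
  rw [Finset.card_insert_of_notMem (by simp [hab, hac]),
    Finset.card_insert_of_notMem (by simp [hbc]), Finset.card_singleton]

lemma eq_cyc_of_support (σ : Equiv.Perm V) (hab : a ≠ b) (hac : a ≠ c) (hbc : b ≠ c)
    (hs : σ.support = {a, b, c}) (ha : σ a = b) : σ = cyc a b c := by
  have hmem : ∀ x : V, x ∈ σ.support ↔ (x = a ∨ x = b ∨ x = c) := by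
    intro x; rw [hs]; simp
  have hamem : a ∈ σ.support := (hmem a).mpr (Or.inl rfl)
  have hbmem : b ∈ σ.support := (hmem b).mpr (Or.inr (Or.inl rfl))
  have hcmem : c ∈ σ.support := (hmem c).mpr (Or.inr (Or.inr rfl))
  have hb : σ b = c := by
    have h1 : σ b ≠ b := Equiv.Perm.mem_support.mp hbmem
    have h2 : σ b ∈ σ.support := Equiv.Perm.apply_mem_support.mpr hbmem
    rcases (hmem (σ b)).mp h2 with h | h | h
    · exfalso
      have hc1 : σ c ≠ c := Equiv.Perm.mem_support.mp hcmem
      have hc2 : σ c ∈ σ.support := Equiv.Perm.apply_mem_support.mpr hcmem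
      have hc3 : σ c ≠ b := by
        intro hh; exact hac (σ.injective (by rw [hh, ha]))
      have hc4 : σ c ≠ a := by
        intro hh; exact hbc (σ.injective (by rw [hh, h]))
      rcases (hmem (σ c)).mp hc2 with h' | h' | h' <;>
        [exact hc4 h'; exact hc3 h'; exact hc1 h']
    · exact absurd h h1
    · exact h
  have hc : σ c = a := by
    have h1 : σ c ≠ c := Equiv.Perm.mem_support.mp hcmem
    have h2 : σ c ∈ σ.support := Equiv.Perm.apply_mem_support.mpr hcmem
    have h3 : σ c ≠ b := by
      intro hh; exact hac (σ.injective (by rw [hh, ha]))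
    rcases (hmem (σ c)).mp h2 with h' | h' | h' <;>
      [exact h'; exact absurd h' h3; exact absurd h' h1]
  ext x
  by_cases hxa : x = a
  · subst hxa; rw [ha, cyc_apply_a hab hbc]
  · by_cases hxb : x = b
    · subst hxb; rw [hb, cyc_apply_b]
    · by_cases hxc : x = c
      · subst hxc; rw [hc, cyc_apply_c hac hbc]
      · rw [cyc_apply_other hxa hxb hxc]
        have hns : x ∉ σ.support := by
          rw [hmem x]; push_neg; exact ⟨hxa, hxb, hxc⟩
        exact Equiv.Perm.notMem_support.mp hns

lemma fiber_cycles (σ : Equiv.Perm V) (hab : a ≠ b) (hac : a ≠ c) (hbc : b ≠ c)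
    (hs : σ.support = {a, b, c}) : σ = cyc a b c ∨ σ = cyc a c b := by
  have hamem : a ∈ σ.support := by rw [hs]; simp
  have h1 : σ a ≠ a := Equiv.Perm.mem_support.mp hamem
  have h2 : σ a ∈ σ.support := Equiv.Perm.apply_mem_support.mpr hamem
  rw [hs] at h2
  simp only [Finset.mem_insert, Finset.mem_singleton] at h2
  rcases h2 with h | h | h
  · exact absurd h h1
  · exact Or.inl (eq_cyc_of_support σ hab hac hbc hs h)
  · refine Or.inr (eq_cyc_of_support σ hac hab hbc.symm ?_ h)
    rw [hs]; rw [Finset.pair_comm b c]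

/- ### The weight of a 3-cycle detects triangles -/

lemma swap_or (σ : Equiv.Perm V) (h3 : σ.support.card = 3) {u v : V}
    (hu : u ∈ σ.support) (hv : v ∈ σ.support) (huv : u ≠ v) :
    σ u = v ∨ σ v = u := by
  by_contra hcon
  push_neg at hcon
  obtain ⟨h1, h2⟩ := hcon
  have hsub : ({σ u, σ v} : Finset V) ⊆ σ.support \ {u, v} := by
    intro x hx
    simp only [Finset.mem_insert, Finset.mem_singleton] at hx
    rw [Finset.mem_sdiff]
    rcases hx with rfl | rfl
    · refine ⟨Equiv.Perm.apply_mem_support.mpr hu, ?_⟩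
      simp only [Finset.mem_insert, Finset.mem_singleton]
      push_neg
      exact ⟨Equiv.Perm.mem_support.mp hu, h1⟩
    · refine ⟨Equiv.Perm.apply_mem_support.mpr hv, ?_⟩
      simp only [Finset.mem_insert, Finset.mem_singleton]
      push_neg
      exact ⟨h2, Equiv.Perm.mem_support.mp hv⟩
  have hcard1 : ({σ u, σ v} : Finset V).card = 2 := by
    rw [Finset.card_insert_of_notMem (by simp [huv]), Finset.card_singleton]
  have hcard2 : (σ.support \ {u, v}).card = 1 := by
    rw [Finset.card_sdiff_of_subset (by intro x hx; simp only [Finset.mem_insert, Finset.mem_singleton] at hx; rcases hx with rfl | rfl <;> assumption)]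
    rw [h3, Finset.card_insert_of_notMem (by simp [huv]), Finset.card_singleton]
  have hle := Finset.card_le_card hsub
  omega

lemma pw_card_three (G : SimpleGraph V) (σ : Equiv.Perm V) (h3 : σ.support.card = 3) :
    pw G σ = if σ.support ∈ G.cliqueFinset 3 then 1 else 0 := by
  by_cases hcl : σ.support ∈ G.cliqueFinset 3
  · rw [if_pos hcl, pw]
    refine Finset.prod_eq_one fun x hx => ?_
    have h1 : σ x ≠ x := Equiv.Perm.mem_support.mp hx
    have h2 : σ x ∈ σ.support := Equiv.Perm.apply_mem_support.mpr hx
    have hclique : G.IsClique (σ.support : Set V) :=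
      (SimpleGraph.mem_cliqueFinset_iff.mp hcl).1
    have hadj : G.Adj (σ x) x :=
      hclique (Finset.mem_coe.mpr h2) (Finset.mem_coe.mpr hx) h1
    rw [lap_offdiag G h1, if_pos hadj]
  · rw [if_neg hcl, pw]
    have hnc : ¬ G.IsClique (σ.support : Set V) := by
      intro hcl'
      exact hcl (SimpleGraph.mem_cliqueFinset_iff.mpr ⟨hcl', h3⟩)
    rw [SimpleGraph.isClique_iff, Set.Pairwise] at hnc
    push_neg at hnc
    obtain ⟨u, hu, v, hv, huv, hnadj⟩ := hnc
    have hu' : u ∈ σ.support := Finset.mem_coe.mp hu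
    have hv' : v ∈ σ.support := Finset.mem_coe.mp hv
    rcases swap_or σ h3 hu' hv' huv with h | h
    · refine Finset.prod_eq_zero hu' ?_
      rw [h, lap_offdiag G (fun hh => huv hh.symm), if_neg fun hadj => hnadj hadj.symm]
    · refine Finset.prod_eq_zero hv' ?_
      rw [h, lap_offdiag G huv, if_neg hnadj]

/- ### Evaluating the 3-cycle sum -/

lemma fiber_card_cycles (t : Finset V) (ht : t.card = 3) :
    (((Finset.univ.filter (fun σ : Equiv.Perm V => σ.support.card = 3))).filter
        (fun σ => σ.support = t)).card = 2 := by
  obtain ⟨a, b, c, hab, hac, hbc, rfl⟩ := Finset.card_eq_three.mp ht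
  have hset : ((Finset.univ.filter (fun σ : Equiv.Perm V => σ.support.card = 3))).filter
      (fun σ => σ.support = ({a, b, c} : Finset V)) = {cyc a b c, cyc a c b} := by
    ext σ
    simp only [Finset.mem_filter, Finset.mem_univ, true_and, Finset.mem_insert,
      Finset.mem_singleton]
    constructor
    · rintro ⟨-, hs⟩
      exact fiber_cycles σ hab hac hbc hs
    · rintro (rfl | rfl)
      · rw [support_cyc hab hac hbc]
        exact ⟨card_triple hab hac hbc, rfl⟩
      · constructor
        · rw [support_cyc hac hab hbc.symm, card_triple hac hab hbc.symm]
        · rw [support_cyc hac hab hbc.symm, Finset.pair_comm c b]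
  rw [hset]
  have hne : cyc a b c ≠ cyc a c b := by
    intro hh
    have h1 : cyc a b c a = b := cyc_apply_a hab hbc
    have h2 : cyc a c b a = c := cyc_apply_a hac hbc.symm
    rw [hh, h2] at h1
    exact hbc h1.symm
  rw [Finset.card_insert_of_notMem (by simp [hne]), Finset.card_singleton]

lemma clique_sub_image (G : SimpleGraph V) :
    G.cliqueFinset 3 ⊆ (Finset.univ.filter
      (fun σ : Equiv.Perm V => σ.support.card = 3)).image Equiv.Perm.support := by
  intro t ht
  have ht3 : t.card = 3 := (SimpleGraph.mem_cliqueFinset_iff.mp ht).2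
  obtain ⟨a, b, c, hab, hac, hbc, rfl⟩ := Finset.card_eq_three.mp ht3
  rw [Finset.mem_image]
  refine ⟨cyc a b c, ?_, support_cyc hab hac hbc⟩
  rw [Finset.mem_filter]
  refine ⟨Finset.mem_univ _, ?_⟩
  rw [support_cyc hab hac hbc, card_triple hab hac hbc]

lemma S3_eval (G : SimpleGraph V) :
    ∑ σ ∈ Finset.univ.filter (fun σ : Equiv.Perm V => σ.support.card = 3), pw G σ
      = 2 * ((G.cliqueFinset 3).card : ℚ) := by
  set F := Finset.univ.filter (fun σ : Equiv.Perm V => σ.support.card = 3) with hF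
  have step1 : ∑ σ ∈ F, pw G σ
      = ∑ σ ∈ F, (fun t => if t ∈ G.cliqueFinset 3 then (1:ℚ) else 0) σ.support := by
    refine Finset.sum_congr rfl fun σ hσ => ?_
    rw [hF, Finset.mem_filter] at hσ
    exact pw_card_three G σ hσ.2
  have hfib : ∀ t ∈ F.image Equiv.Perm.support,
      (F.filter fun σ => σ.support = t).card = 2 := by
    intro t ht
    rw [Finset.mem_image] at ht
    obtain ⟨σ₀, hσ₀, rfl⟩ := ht
    rw [hF, Finset.mem_filter] at hσ₀
    exact fiber_card_cycles _ hσ₀.2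
  have step2 := sum_const_fiber F (F.image Equiv.Perm.support) Equiv.Perm.support 2 rfl
    hfib (fun t => if t ∈ G.cliqueFinset 3 then (1:ℚ) else 0)
  rw [step1, step2]
  congr 1
  rw [Finset.sum_boole, Finset.filter_mem_eq_inter,
    Finset.inter_eq_right.mpr (clique_sub_image G)]
end Aux3
section Final
set_option linter.unusedSectionVars false

variable {V : Type*} [Fintype V]

lemma R1 (G : SimpleGraph V) :
    (reflect (Fintype.card V) (lapPermPoly G)).coeff 1
      = -(∑ v, (G.degree v : ℚ)) := by
  rw [coeff_one_reflect]
  simp only [lap_diag]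

lemma R2 (G : SimpleGraph V) :
    (reflect (Fintype.card V) (lapPermPoly G)).coeff 2
      = ((∑ v, (G.degree v : ℚ))^2 - ∑ v, (G.degree v : ℚ)^2)/2
        + (∑ v, (G.degree v : ℚ))/2 := by
  rw [coeff_two_reflect, S2_eval]
  simp only [lap_diag]

lemma R3 (G : SimpleGraph V) :
    (reflect (Fintype.card V) (lapPermPoly G)).coeff 3
      = -((∑ v, (G.degree v : ℚ))^3
           - 3*(∑ v, (G.degree v : ℚ))*(∑ v, (G.degree v : ℚ)^2)
           + 2*∑ v, (G.degree v : ℚ)^3)/6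
        + (2 * (∑ v, (G.degree v : ℚ)^2) - (∑ v, (G.degree v : ℚ))^2)/2
        + 2 * (triangleCount G : ℚ) := by
  rw [coeff_three_reflect, S2'_eval, S3_eval, triangleCount]
  simp only [lap_diag]

end Final

/-- **Lemma 2.3.** If two graphs have the same Laplacian permanental polynomial, then they
have the same number of vertices, the same number of edges, the same sum of squares of
vertex degrees, and the same value of `∑ dᵢ³ − 6·c₃`, where `c₃` is the number of
triangles. -/
theorem lapPermPoly_invariants
    {V W : Type*} [Fintype V] [Fintype W] (G : SimpleGraph V) (H : SimpleGraph W)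
    (h : lapPermPoly G = lapPermPoly H) :
    Fintype.card V = Fintype.card W ∧
    G.edgeFinset.card = H.edgeFinset.card ∧
    (∑ v, (G.degree v) ^ 2) = (∑ w, (H.degree w) ^ 2) ∧
    ((∑ v, (G.degree v : ℤ) ^ 3) - 6 * (triangleCount G : ℤ)
      = (∑ w, (H.degree w : ℤ) ^ 3) - 6 * (triangleCount H : ℤ)) := by
  have hn : Fintype.card V = Fintype.card W := by
    rw [← natDegree_lapPermPoly G, ← natDegree_lapPermPoly H, h]
  have hR : reflect (Fintype.card V) (lapPermPoly G)
      = reflect (Fintype.card W) (lapPermPoly H) := by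
    rw [h, hn]
  -- coefficient 1 : sum of degrees
  have e1 : (reflect (Fintype.card V) (lapPermPoly G)).coeff 1
      = (reflect (Fintype.card W) (lapPermPoly H)).coeff 1 := by rw [hR]
  rw [R1, R1] at e1
  have hp1 : ∑ v, (G.degree v : ℚ) = ∑ w, (H.degree w : ℚ) := by linarith
  -- coefficient 2 : sum of squares of degrees
  have e2 : (reflect (Fintype.card V) (lapPermPoly G)).coeff 2
      = (reflect (Fintype.card W) (lapPermPoly H)).coeff 2 := by rw [hR]
  rw [R2, R2, hp1] at e2
  have hp2 : ∑ v, (G.degree v : ℚ)^2 = ∑ w, (H.degree w : ℚ)^2 := by linarith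
  -- coefficient 3
  have e3 : (reflect (Fintype.card V) (lapPermPoly G)).coeff 3
      = (reflect (Fintype.card W) (lapPermPoly H)).coeff 3 := by rw [hR]
  rw [R3, R3, hp1, hp2] at e3
  have hp3 : (∑ v, (G.degree v : ℚ)^3) - 6 * (triangleCount G : ℚ)
      = (∑ w, (H.degree w : ℚ)^3) - 6 * (triangleCount H : ℚ) := by linarith
  refine ⟨hn, ?_, ?_, ?_⟩
  · -- edges
    have hG := SimpleGraph.sum_degrees_eq_twice_card_edges G
    have hH := SimpleGraph.sum_degrees_eq_twice_card_edges H
    have hq : ((2 * G.edgeFinset.card : ℕ) : ℚ) = ((2 * H.edgeFinset.card : ℕ) : ℚ) := by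
      rw [← hG, ← hH]
      push_cast
      rw [hp1]
    have : (2 * G.edgeFinset.card : ℕ) = 2 * H.edgeFinset.card := by exact_mod_cast hq
    omega
  · -- sum of squares
    have : ((∑ v, (G.degree v)^2 : ℕ) : ℚ) = ((∑ w, (H.degree w)^2 : ℕ) : ℚ) := by
      push_cast
      rw [hp2]
    exact_mod_cast this
  · -- cubes and triangles
    exact_mod_cast hp3
end
end

section
/- Let G and H be finite simple graphs with the same signless Laplacian permanental polynomial, i.e., per(xI − Q(G)) = per(xI − Q(H)) as polynomials in x. Then: (i) G and H have the same number of vertices; (ii) G and H have the same number of edges; (iii) the sum of the squares of the vertex degrees of G equals that of H; and (iv) Σ_i d_i(G)³ + 6c₃(G) = Σ_i d_i(H)³ + 6c₃(H), where d_i denotes the degree of the i-th vertex and c₃ denotes the number of triangles in the graph. -/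
open scoped Classical
open Polynomial

noncomputable section

/-- The signless Laplacian matrix `Q(G) = D(G) + A(G)` of a graph `G`. -/
def signlessLapMatrix {V : Type*} [Fintype V] (G : SimpleGraph V) : Matrix V V ℚ :=
  G.degMatrix ℚ + G.adjMatrix ℚ

/-- The signless Laplacian permanental polynomial `per(x·I − Q(G))` of a graph `G`. -/
def qPermPoly {V : Type*} [Fintype V] (G : SimpleGraph V) : Polynomial ℚ :=
  Matrix.permanent
    (Matrix.diagonal (fun _ : V => (X : Polynomial ℚ)) - (signlessLapMatrix G).map Polynomial.C)

open scoped Classical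
open Polynomial Equiv Finset

noncomputable section

namespace QPerm

variable {V : Type*} [Fintype V]

def cmat (M : Matrix V V ℚ) : Matrix V V (Polynomial ℚ) :=
  Matrix.diagonal (fun _ : V => (X : Polynomial ℚ)) - M.map C

lemma term_eq (M : Matrix V V ℚ) (σ : Perm V) :
    (∏ i, cmat M (σ i) i) =
      C (∏ i ∈ σ.support, (-(M (σ i) i))) * ∏ i ∈ σ.supportᶜ, (X - C (M i i)) := by
  rw [map_prod, ← Finset.prod_mul_prod_compl σ.support]
  congr 1
  · apply Finset.prod_congr rfl; intro i hi
    have h : σ i ≠ i := by simpa using hi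
    simp [cmat, Matrix.diagonal_apply_ne _ h, Matrix.map_apply, Matrix.sub_apply]
  · apply Finset.prod_congr rfl; intro i hi
    have h : σ i = i := by simpa using hi
    rw [h]
    simp [cmat, Matrix.map_apply, Matrix.sub_apply, Matrix.diagonal_apply_eq]

lemma term_coeff_zero (M : Matrix V V ℚ) (σ : Perm V) {k : ℕ} (hk : k ≤ Fintype.card V)
    (hs : k < #σ.support) :
    (∏ i, cmat M (σ i) i).coeff (Fintype.card V - k) = 0 := by
  rw [term_eq]
  apply Polynomial.coeff_eq_zero_of_natDegree_lt
  have h1 : (∏ i ∈ σ.supportᶜ, (X - C (M i i))).natDegree = #σ.supportᶜ := by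
    rw [Polynomial.natDegree_prod_of_monic _ _ (fun i _ => monic_X_sub_C _)]
    simp
  have h2 : (C (∏ i ∈ σ.support, (-(M (σ i) i))) *
      ∏ i ∈ σ.supportᶜ, (X - C (M i i))).natDegree ≤ #σ.supportᶜ := by
    refine le_trans (Polynomial.natDegree_mul_le) ?_
    rw [Polynomial.natDegree_C, h1, zero_add]
  refine lt_of_le_of_lt h2 ?_
  have h3 : #σ.support ≤ Fintype.card V := σ.support.card_le_univ
  rw [Finset.card_compl]
  omega

lemma term_coeff (M : Matrix V V ℚ) (σ : Perm V) {k : ℕ} (hk : k ≤ Fintype.card V)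
    (hs : #σ.support ≤ k) :
    (∏ i, cmat M (σ i) i).coeff (Fintype.card V - k)
      = (∏ i ∈ σ.support, (-(M (σ i) i))) *
        ∑ t ∈ σ.supportᶜ.powersetCard (k - #σ.support), ∏ i ∈ t, (-(M i i)) := by
  rw [term_eq, Polynomial.coeff_C_mul]
  congr 1
  have hcompl : #σ.supportᶜ = Fintype.card V - #σ.support := Finset.card_compl _
  have h3 : #σ.support ≤ Fintype.card V := σ.support.card_le_univ
  have hle : Fintype.card V - k ≤ #σ.supportᶜ := by omega
  have := Finset.prod_X_add_C_coeff σ.supportᶜ (fun i => -(M i i)) hle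
  simp only [sub_eq_add_neg, ← Polynomial.C_neg] at *
  rw [this]
  congr 2
  rw [hcompl]
  omega

end QPerm

section Classify
variable {V : Type*} [Fintype V]

lemma sum_classify (g : Perm V → ℚ) (h4 : ∀ σ : Perm V, 3 < #σ.support → g σ = 0) :
    ∑ σ : Perm V, g σ = g 1 + (∑ σ ∈ univ.filter (fun σ : Perm V => #σ.support = 2), g σ)
      + ∑ σ ∈ univ.filter (fun σ : Perm V => #σ.support = 3), g σ := by
  classical
  rw [← Finset.sum_filter_add_sum_filter_not univ (fun σ : Perm V => 3 < #σ.support) g]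
  have h0 : ∑ σ ∈ univ.filter (fun σ : Perm V => 3 < #σ.support), g σ = 0 :=
    Finset.sum_eq_zero fun σ hσ => h4 σ (by simpa using (Finset.mem_filter.mp hσ).2)
  rw [h0, zero_add]
  rw [← Finset.sum_filter_add_sum_filter_not
    (univ.filter (fun σ : Perm V => ¬3 < #σ.support)) (fun σ => #σ.support = 0) g]
  rw [← Finset.sum_filter_add_sum_filter_not
    ((univ.filter (fun σ : Perm V => ¬3 < #σ.support)).filter (fun σ => ¬#σ.support = 0))
    (fun σ => #σ.support = 2) g]
  simp only [Finset.filter_filter]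
  have e1 : Finset.filter (fun σ : Perm V => ¬3 < #σ.support ∧ #σ.support = 0) univ = {1} := by
    ext σ
    simp [Equiv.Perm.card_support_eq_zero]
    intro h; simp [h]
  have e2 : Finset.filter (fun σ : Perm V => (¬3 < #σ.support ∧ ¬#σ.support = 0) ∧ #σ.support = 2)
      univ = Finset.filter (fun σ : Perm V => #σ.support = 2) univ := by
    ext σ
    simp only [Finset.mem_filter, Finset.mem_univ, true_and]
    constructor
    · exact fun h => h.2
    · intro h; omega
  have e3 : Finset.filter (fun σ : Perm V => (¬3 < #σ.support ∧ ¬#σ.support = 0) ∧ ¬#σ.support = 2)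
      univ = Finset.filter (fun σ : Perm V => #σ.support = 3) univ := by
    ext σ
    simp only [Finset.mem_filter, Finset.mem_univ, true_and]
    have := σ.card_support_ne_one
    constructor
    · intro h; omega
    · intro h; omega
  rw [e1, e2, e3, Finset.sum_singleton, add_assoc]

end Classify

namespace QPerm

section Swaps
variable {V : Type*} [Fintype V]

lemma swap_fiber {a b : V} (hab : a ≠ b) :
    (univ : Finset V).offDiag.filter (fun p => Equiv.swap p.1 p.2 = Equiv.swap a b)
      = {(a, b), (b, a)} := by
  ext ⟨x, y⟩
  simp only [Finset.mem_filter, Finset.mem_offDiag, Finset.mem_univ, true_and,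
    Finset.mem_insert, Finset.mem_singleton, Prod.mk.injEq]
  constructor
  · rintro ⟨hxy, hs⟩
    have hsupp : ({x, y} : Finset V) = {a, b} := by
      rw [← Equiv.Perm.support_swap hxy, ← Equiv.Perm.support_swap hab, hs]
    have hx : x = a ∨ x = b := by
      have : x ∈ ({a, b} : Finset V) := hsupp ▸ (by simp : x ∈ ({x, y} : Finset V))
      simpa using this
    have hy : y = a ∨ y = b := by
      have : y ∈ ({a, b} : Finset V) := hsupp ▸ (by simp : y ∈ ({x, y} : Finset V))
      simpa using this
    rcases hx with rfl | rfl <;> rcases hy with h | h <;> simp_all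
  · rintro (⟨rfl, rfl⟩ | ⟨rfl, rfl⟩)
    · exact ⟨hab, rfl⟩
    · exact ⟨hab.symm, Equiv.swap_comm _ _⟩

lemma sum_swaps (F : Perm V → ℚ) :
    ∑ p ∈ (univ : Finset V).offDiag, F (Equiv.swap p.1 p.2)
      = 2 * ∑ σ ∈ univ.filter (fun σ : Perm V => #σ.support = 2), F σ := by
  rw [Finset.sum_comp F (fun p : V × V => Equiv.swap p.1 p.2)]
  have himg : (univ : Finset V).offDiag.image (fun p => Equiv.swap p.1 p.2)
      = univ.filter (fun σ : Perm V => #σ.support = 2) := by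
    ext σ
    simp only [Finset.mem_image, Finset.mem_filter, Finset.mem_univ, true_and,
      Finset.mem_offDiag, Equiv.Perm.card_support_eq_two]
    constructor
    · rintro ⟨⟨a, b⟩, hmem, rfl⟩
      exact ⟨a, b, hmem, rfl⟩
    · rintro ⟨a, b, hab, rfl⟩
      exact ⟨(a, b), hab, rfl⟩
  rw [himg, Finset.mul_sum]
  apply Finset.sum_congr rfl
  intro σ hσ
  obtain ⟨a, b, hab, rfl⟩ : σ.IsSwap :=
    Equiv.Perm.card_support_eq_two.mp (by simpa using hσ)
  rw [swap_fiber hab]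
  rw [Finset.card_insert_of_notMem (by simp [Prod.ext_iff, hab.symm]), Finset.card_singleton]
  rw [nsmul_eq_mul]
  norm_num

end Swaps

end QPerm

namespace QPerm

section Cycles
variable {V : Type*} [Fintype V]

/-- The 3-cycle `a → b → c → a`. -/
def cyc (a b c : V) : Perm V := Equiv.swap a c * Equiv.swap a b

variable {a b c : V}

lemma cyc_apply_a (hab : a ≠ b) (hac : a ≠ c) (hbc : b ≠ c) : cyc a b c a = b := by
  simp [cyc, Equiv.Perm.mul_apply, Equiv.swap_apply_left,
    Equiv.swap_apply_of_ne_of_ne hab.symm hbc]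

lemma cyc_apply_b (hab : a ≠ b) (hac : a ≠ c) (hbc : b ≠ c) : cyc a b c b = c := by
  simp [cyc, Equiv.Perm.mul_apply, Equiv.swap_apply_right, Equiv.swap_apply_left]

lemma cyc_apply_c (hab : a ≠ b) (hac : a ≠ c) (hbc : b ≠ c) : cyc a b c c = a := by
  simp [cyc, Equiv.Perm.mul_apply, Equiv.swap_apply_of_ne_of_ne hac.symm hbc.symm,
    Equiv.swap_apply_right]

lemma cyc_apply_other {x : V} (hxa : x ≠ a) (hxb : x ≠ b) (hxc : x ≠ c) : cyc a b c x = x := by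
  simp [cyc, Equiv.Perm.mul_apply, Equiv.swap_apply_of_ne_of_ne hxa hxb,
    Equiv.swap_apply_of_ne_of_ne hxa hxc]

lemma support_cyc (hab : a ≠ b) (hac : a ≠ c) (hbc : b ≠ c) :
    (cyc a b c).support = {a, b, c} := by
  ext x
  simp only [Equiv.Perm.mem_support, Finset.mem_insert, Finset.mem_singleton]
  constructor
  · intro hx
    by_contra hcon
    push_neg at hcon
    exact hx (cyc_apply_other hcon.1 hcon.2.1 hcon.2.2)
  · rintro (rfl | rfl | rfl)
    · rw [cyc_apply_a hab hac hbc]; exact hab.symm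
    · rw [cyc_apply_b hab hac hbc]; exact hbc.symm
    · rw [cyc_apply_c hab hac hbc]; exact hac

lemma card_support_cyc (hab : a ≠ b) (hac : a ≠ c) (hbc : b ≠ c) :
    #(cyc a b c).support = 3 := by
  rw [support_cyc hab hac hbc]
  rw [Finset.card_insert_of_notMem (by simp [hab, hac]),
    Finset.card_insert_of_notMem (by simp [hbc]), Finset.card_singleton]

lemma cyc_rotate (hab : a ≠ b) (hac : a ≠ c) (hbc : b ≠ c) : cyc a b c = cyc b c a := by
  apply Equiv.ext
  intro x
  by_cases hxa : x = a
  · subst hxa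
    rw [cyc_apply_a hab hac hbc, cyc_apply_c hbc hab.symm hac.symm]
  by_cases hxb : x = b
  · subst hxb
    rw [cyc_apply_b hab hac hbc, cyc_apply_a hbc hab.symm hac.symm]
  by_cases hxc : x = c
  · subst hxc
    rw [cyc_apply_c hab hac hbc, cyc_apply_b hbc hab.symm hac.symm]
  · rw [cyc_apply_other hxa hxb hxc, cyc_apply_other hxb hxc hxa]

/-- The index set for ordered distinct triples. -/
def T3 (V : Type*) [Fintype V] : Finset (V × V × V) :=
  (univ : Finset (V × V × V)).filter
    (fun t => t.1 ≠ t.2.1 ∧ t.1 ≠ t.2.2 ∧ t.2.1 ≠ t.2.2)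

lemma image_cyc :
    (T3 V).image (fun t => cyc t.1 t.2.1 t.2.2)
      = univ.filter (fun σ : Perm V => #σ.support = 3) := by
  ext σ
  simp only [T3, Finset.mem_image, Finset.mem_filter, Finset.mem_univ, true_and]
  constructor
  · rintro ⟨⟨a, b, c⟩, ⟨hab, hac, hbc⟩, rfl⟩
    exact card_support_cyc hab hac hbc
  · intro hσ
    have hpos : 0 < #σ.support := by omega
    obtain ⟨x, hx⟩ := Finset.card_pos.mp hpos
    have hxy : σ x ≠ x := Equiv.Perm.mem_support.mp hx
    have hyS : σ x ∈ σ.support := Equiv.Perm.apply_mem_support.mpr hx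
    have hzy : σ (σ x) ≠ σ x := Equiv.Perm.mem_support.mp hyS
    have hzS : σ (σ x) ∈ σ.support := Equiv.Perm.apply_mem_support.mpr hyS
    have hzx : σ (σ x) ≠ x := by
      intro hzx0
      have hsub : ({x, σ x} : Finset V) ⊆ σ.support := by
        intro w hw
        rcases Finset.mem_insert.mp hw with rfl | hw
        · exact hx
        · rw [Finset.mem_singleton.mp hw]; exact hyS
      have hne : (σ.support \ ({x, σ x} : Finset V)).Nonempty := by
        rw [← Finset.card_pos, Finset.card_sdiff_of_subset hsub]
        have : #({x, σ x} : Finset V) = 2 := by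
          rw [Finset.card_insert_of_notMem (by simp [Ne.symm hxy]), Finset.card_singleton]
        omega
      obtain ⟨t, ht⟩ := hne
      obtain ⟨htS, htne⟩ := Finset.mem_sdiff.mp ht
      have htx : t ≠ x := by intro h; exact htne (by simp [h])
      have hty : t ≠ σ x := by intro h; exact htne (by simp [h])
      have hsub3 : ({x, σ x, t} : Finset V) ⊆ σ.support := by
        intro w hw
        rcases Finset.mem_insert.mp hw with rfl | hw
        · exact hx
        rcases Finset.mem_insert.mp hw with rfl | hw
        · exact hyS
        · rw [Finset.mem_singleton.mp hw]; exact htS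
      have hcard3 : #({x, σ x, t} : Finset V) = 3 := by
        rw [Finset.card_insert_of_notMem (by simp [Ne.symm hxy, Ne.symm htx]),
          Finset.card_insert_of_notMem (by simp [Ne.symm hty]), Finset.card_singleton]
      have heq : ({x, σ x, t} : Finset V) = σ.support :=
        Finset.eq_of_subset_of_card_le hsub3 (by omega)
      have hσt : σ t ∈ ({x, σ x, t} : Finset V) := by
        rw [heq]; exact Equiv.Perm.apply_mem_support.mpr htS
      have h1 : σ t ≠ x := by
        intro h; exact hty (σ.injective (h.trans hzx0.symm))
      have h2 : σ t ≠ σ x := fun h => htx (σ.injective h)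
      have h3 : σ t ≠ t := Equiv.Perm.mem_support.mp htS
      rcases Finset.mem_insert.mp hσt with h | h
      · exact h1 h
      rcases Finset.mem_insert.mp h with h | h
      · exact h2 h
      · exact h3 (Finset.mem_singleton.mp h)
    -- now x, σ x, σ (σ x) are distinct
    refine ⟨(x, σ x, σ (σ x)), ⟨hxy.symm, hzx.symm, hzy.symm⟩, ?_⟩
    have hsub3 : ({x, σ x, σ (σ x)} : Finset V) ⊆ σ.support := by
      intro w hw
      rcases Finset.mem_insert.mp hw with rfl | hw
      · exact hx
      rcases Finset.mem_insert.mp hw with rfl | hw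
      · exact hyS
      · rw [Finset.mem_singleton.mp hw]; exact hzS
    have hcard3 : #({x, σ x, σ (σ x)} : Finset V) = 3 := by
      rw [Finset.card_insert_of_notMem (by simp [Ne.symm hxy, Ne.symm hzx]),
        Finset.card_insert_of_notMem (by simp [Ne.symm hzy]), Finset.card_singleton]
    have hsupp : ({x, σ x, σ (σ x)} : Finset V) = σ.support :=
      Finset.eq_of_subset_of_card_le hsub3 (by omega)
    apply Equiv.ext
    intro w
    by_cases hwx : w = x
    · subst hwx; rw [cyc_apply_a hxy.symm hzx.symm hzy.symm]
    by_cases hwy : w = σ x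
    · subst hwy; rw [cyc_apply_b hxy.symm hzx.symm hzy.symm]
    by_cases hwz : w = σ (σ x)
    · subst hwz
      rw [cyc_apply_c hxy.symm hzx.symm hzy.symm]
      have hwS : σ (σ (σ x)) ∈ σ.support := Equiv.Perm.apply_mem_support.mpr hzS
      rw [← hsupp] at hwS
      rcases Finset.mem_insert.mp hwS with h | h
      · exact h.symm
      exfalso
      rcases Finset.mem_insert.mp h with h | h
      · exact hzx (σ.injective h)
      · exact hzy (σ.injective (Finset.mem_singleton.mp h))
    · rw [cyc_apply_other hwx hwy hwz]
      have : w ∉ σ.support := by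
        rw [← hsupp]
        simp only [Finset.mem_insert, Finset.mem_singleton]
        push_neg
        exact ⟨hwx, hwy, hwz⟩
      exact (Equiv.Perm.notMem_support.mp this).symm

lemma cyc_fiber (hab : a ≠ b) (hac : a ≠ c) (hbc : b ≠ c) :
    (T3 V).filter (fun t => cyc t.1 t.2.1 t.2.2 = cyc a b c)
      = {(a, b, c), (b, c, a), (c, a, b)} := by
  ext ⟨x, y, z⟩
  simp only [T3, Finset.filter_filter, Finset.mem_filter, Finset.mem_univ, true_and,
    Finset.mem_insert, Finset.mem_singleton, Prod.mk.injEq]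
  constructor
  · rintro ⟨⟨hxy, hxz, hyz⟩, heq⟩
    have hy : y = cyc a b c x := by rw [← heq, cyc_apply_a hxy hxz hyz]
    have hz : z = cyc a b c y := by rw [← heq, cyc_apply_b hxy hxz hyz]
    have hxmem : x ∈ ({a, b, c} : Finset V) := by
      rw [← support_cyc hab hac hbc, ← heq, support_cyc hxy hxz hyz]
      simp
    rcases Finset.mem_insert.mp hxmem with rfl | h
    · left
      rw [cyc_apply_a hab hac hbc] at hy
      subst hy
      rw [cyc_apply_b hab hac hbc] at hz
      exact ⟨rfl, rfl, hz⟩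
    rcases Finset.mem_insert.mp h with rfl | h
    · right; left
      rw [cyc_apply_b hab hac hbc] at hy
      subst hy
      rw [cyc_apply_c hab hac hbc] at hz
      exact ⟨rfl, rfl, hz⟩
    · have hxc := Finset.mem_singleton.mp h
      subst hxc
      right; right
      rw [cyc_apply_c hab hac hbc] at hy
      subst hy
      rw [cyc_apply_a hab hac hbc] at hz
      exact ⟨rfl, rfl, hz⟩
  · rintro (⟨rfl, rfl, rfl⟩ | ⟨rfl, rfl, rfl⟩ | ⟨rfl, rfl, rfl⟩)
    · exact ⟨⟨hab, hac, hbc⟩, rfl⟩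
    · exact ⟨⟨hbc, hab.symm, hac.symm⟩, (cyc_rotate hab hac hbc).symm⟩
    · exact ⟨⟨hac.symm, hbc.symm, hab⟩,
        by rw [cyc_rotate hab hac hbc, cyc_rotate hbc hab.symm hac.symm]⟩

lemma sum_cycles (F : Perm V → ℚ) :
    ∑ t ∈ T3 V, F (cyc t.1 t.2.1 t.2.2)
      = 3 * ∑ σ ∈ univ.filter (fun σ : Perm V => #σ.support = 3), F σ := by
  rw [Finset.sum_comp F (fun t : V × V × V => cyc t.1 t.2.1 t.2.2), image_cyc, Finset.mul_sum]
  refine Finset.sum_congr rfl fun σ hσ => ?_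
  have hσ' : σ ∈ (T3 V).image (fun t => cyc t.1 t.2.1 t.2.2) := by rw [image_cyc]; exact hσ
  obtain ⟨⟨x, y, z⟩, hmem, rfl⟩ := Finset.mem_image.mp hσ'
  obtain ⟨hxy, hxz, hyz⟩ : x ≠ y ∧ x ≠ z ∧ y ≠ z := by
    simpa [T3] using hmem
  have : Finset.filter (fun t => cyc t.1 t.2.1 t.2.2 = cyc x y z) (T3 V)
      = {(x, y, z), (y, z, x), (z, x, y)} := cyc_fiber hxy hxz hyz
  rw [this]
  have hcard : #({(x, y, z), (y, z, x), (z, x, y)} : Finset (V × V × V)) = 3 := by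
    rw [Finset.card_insert_of_notMem (by simp [Prod.ext_iff, hxy, hxz]),
      Finset.card_insert_of_notMem (by simp [Prod.ext_iff, hyz, hxy.symm]),
      Finset.card_singleton]
  rw [hcard, nsmul_eq_mul]
  norm_num

end Cycles

end QPerm

namespace QPerm

section Sums
variable {V : Type*} [Fintype V]

lemma sum_ite_pull {P : Prop} [Decidable P] (f : V → ℚ) :
    ∑ c, (if P then f c else 0) = if P then ∑ c, f c else 0 := by
  split <;> simp

lemma sum_offDiag (g : V → V → ℚ) :
    ∑ p ∈ (univ : Finset V).offDiag, g p.1 p.2 = (∑ a, ∑ b, g a b) - ∑ a, g a a := by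
  have h1 : (univ : Finset V).offDiag = (univ ×ˢ univ).filter (fun p => ¬ p.1 = p.2) := by
    ext ⟨a, b⟩; simp [Finset.mem_offDiag]
  have key : ∀ a b : V, (if ¬a = b then g a b else 0) = g a b - (if a = b then g a b else 0) := by
    intro a b; by_cases h : a = b <;> simp [h]
  rw [h1, Finset.sum_filter, Finset.sum_product]
  simp only [key, Finset.sum_sub_distrib, Finset.sum_ite_eq, Finset.mem_univ, if_true]

lemma sum_T3 (g : V → V → V → ℚ) :
    ∑ t ∈ T3 V, g t.1 t.2.1 t.2.2
      = (∑ a, ∑ b, ∑ c, g a b c) - (∑ a, ∑ c, g a a c) - (∑ a, ∑ b, g a b a)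
        - (∑ a, ∑ b, g a b b) + 2 * ∑ a, g a a a := by
  have key : ∀ a b c : V, (if a ≠ b ∧ a ≠ c ∧ b ≠ c then g a b c else 0)
      = g a b c - (if a = b then g a b c else 0) - (if a = c then g a b c else 0)
        - (if b = c then g a b c else 0) + 2 * (if a = b then (if b = c then g a b c else 0) else 0)
      := by
    intro a b c
    by_cases h1 : a = b <;> by_cases h2 : a = c <;> by_cases h3 : b = c <;>
      simp_all <;> ring
  rw [T3, Finset.sum_filter, Fintype.sum_prod_type]
  simp only [Fintype.sum_prod_type, key, Finset.sum_sub_distrib, Finset.sum_add_distrib,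
    sum_ite_pull, Finset.sum_ite_eq, Finset.mem_univ, if_true, ← Finset.mul_sum]

end Sums

end QPerm

namespace QPerm

section Clique
variable {V : Type*} [Fintype V]

lemma triple_fiber {x y z : V} (hxy : x ≠ y) (hxz : x ≠ z) (hyz : y ≠ z) :
    (T3 V).filter (fun t => ({t.1, t.2.1, t.2.2} : Finset V) = {x, y, z})
      = {(x, y, z), (x, z, y), (y, x, z), (y, z, x), (z, x, y), (z, y, x)} := by
  ext ⟨a, b, c⟩
  simp only [T3, Finset.filter_filter, Finset.mem_filter, Finset.mem_univ, true_and,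
    Finset.mem_insert, Finset.mem_singleton, Prod.mk.injEq]
  constructor
  · rintro ⟨⟨hab, hac, hbc⟩, hS⟩
    have ha : a = x ∨ a = y ∨ a = z := by
      have : a ∈ ({x, y, z} : Finset V) := hS ▸ (by simp)
      simpa using this
    have hb : b = x ∨ b = y ∨ b = z := by
      have : b ∈ ({x, y, z} : Finset V) := hS ▸ (by simp)
      simpa using this
    have hc : c = x ∨ c = y ∨ c = z := by
      have : c ∈ ({x, y, z} : Finset V) := hS ▸ (by simp)
      simpa using this
    rcases ha with rfl | rfl | rfl <;> rcases hb with rfl | rfl | rfl <;>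
      rcases hc with rfl | rfl | rfl <;> simp_all
  · have hset : ∀ (p q r : V), ({p, q, r} : Finset V) = {x, y, z} →
        ((p = x ∨ p = y ∨ p = z) → True) := fun _ _ _ _ _ => trivial
    rintro (⟨rfl, rfl, rfl⟩ | ⟨rfl, rfl, rfl⟩ | ⟨rfl, rfl, rfl⟩ | ⟨rfl, rfl, rfl⟩ |
      ⟨rfl, rfl, rfl⟩ | ⟨rfl, rfl, rfl⟩)
    · exact ⟨⟨hxy, hxz, hyz⟩, rfl⟩
    · exact ⟨⟨hxz, hxy, hyz.symm⟩, by ext w; simp; tauto⟩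
    · exact ⟨⟨hxy.symm, hyz, hxz⟩, by ext w; simp; tauto⟩
    · exact ⟨⟨hyz, hxy.symm, hxz.symm⟩, by ext w; simp; tauto⟩
    · exact ⟨⟨hxz.symm, hyz.symm, hxy⟩, by ext w; simp; tauto⟩
    · exact ⟨⟨hyz.symm, hxz.symm, hxy.symm⟩, by ext w; simp; tauto⟩

lemma sum_adj_T3 (G : SimpleGraph V) :
    ∑ t ∈ T3 V, (G.adjMatrix ℚ t.1 t.2.1 * G.adjMatrix ℚ t.2.1 t.2.2 * G.adjMatrix ℚ t.2.2 t.1)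
      = 6 * (triangleCount G : ℚ) := by
  have hpoint : ∀ t ∈ T3 V,
      G.adjMatrix ℚ t.1 t.2.1 * G.adjMatrix ℚ t.2.1 t.2.2 * G.adjMatrix ℚ t.2.2 t.1
        = (fun S : Finset V => if G.IsNClique 3 S then (1 : ℚ) else 0)
            ({t.1, t.2.1, t.2.2} : Finset V) := by
    rintro ⟨a, b, c⟩ ht
    obtain ⟨hab, hac, hbc⟩ : a ≠ b ∧ a ≠ c ∧ b ≠ c := by simpa [T3] using ht
    simp only [SimpleGraph.adjMatrix_apply, SimpleGraph.is3Clique_triple_iff]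
    by_cases h1 : G.Adj a b <;> by_cases h2 : G.Adj b c <;> by_cases h3 : G.Adj c a <;>
      simp_all [G.adj_comm c a]
  rw [Finset.sum_congr rfl hpoint,
    Finset.sum_comp (fun S : Finset V => if G.IsNClique 3 S then (1 : ℚ) else 0)
      (fun t : V × V × V => ({t.1, t.2.1, t.2.2} : Finset V))]
  have himg : (T3 V).image (fun t : V × V × V => ({t.1, t.2.1, t.2.2} : Finset V))
      = (univ : Finset V).powersetCard 3 := by
    ext S
    simp only [Finset.mem_image, Finset.mem_powersetCard]
    constructor
    · rintro ⟨⟨a, b, c⟩, ht, rfl⟩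
      obtain ⟨hab, hac, hbc⟩ : a ≠ b ∧ a ≠ c ∧ b ≠ c := by simpa [T3] using ht
      refine ⟨Finset.subset_univ _, ?_⟩
      rw [Finset.card_insert_of_notMem (by simp [hab, hac]),
        Finset.card_insert_of_notMem (by simp [hbc]), Finset.card_singleton]
    · rintro ⟨-, hcard⟩
      obtain ⟨x, y, z, hxy, hxz, hyz, rfl⟩ := Finset.card_eq_three.mp hcard
      exact ⟨(x, y, z), by simp [T3, hxy, hxz, hyz], rfl⟩
  rw [himg]
  have hfib : ∀ S ∈ (univ : Finset V).powersetCard 3,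
      #((T3 V).filter (fun t : V × V × V => ({t.1, t.2.1, t.2.2} : Finset V) = S)) = 6 := by
    intro S hS
    obtain ⟨x, y, z, hxy, hxz, hyz, rfl⟩ :=
      Finset.card_eq_three.mp (Finset.mem_powersetCard.mp hS).2
    rw [triple_fiber hxy hxz hyz]
    rw [Finset.card_insert_of_notMem (by simp [Prod.ext_iff, hxy, hxz, hyz]),
      Finset.card_insert_of_notMem
        (by simp [Prod.ext_iff, hxy, hxz, hyz, Ne.symm hxy, Ne.symm hxz, Ne.symm hyz]),
      Finset.card_insert_of_notMem
        (by simp [Prod.ext_iff, hxy, hxz, hyz, Ne.symm hxy, Ne.symm hxz, Ne.symm hyz]),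
      Finset.card_insert_of_notMem
        (by simp [Prod.ext_iff, hxy, hxz, hyz, Ne.symm hxy, Ne.symm hxz, Ne.symm hyz]),
      Finset.card_insert_of_notMem
        (by simp [Prod.ext_iff, hxy, hxz, hyz, Ne.symm hxy, Ne.symm hxz, Ne.symm hyz]),
      Finset.card_singleton]
  calc ∑ S ∈ (univ : Finset V).powersetCard 3,
        #((T3 V).filter (fun t : V × V × V => ({t.1, t.2.1, t.2.2} : Finset V) = S)) •
          (if G.IsNClique 3 S then (1 : ℚ) else 0)
      = ∑ S ∈ (univ : Finset V).powersetCard 3,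
          6 * (if G.IsNClique 3 S then (1 : ℚ) else 0) := by
        refine Finset.sum_congr rfl fun S hS => ?_
        rw [hfib S hS, nsmul_eq_mul]
        norm_num
    _ = 6 * (triangleCount G : ℚ) := by
        rw [← Finset.mul_sum]
        congr 1
        rw [Finset.sum_boole]
        have : Finset.filter (fun S => G.IsNClique 3 S) ((univ : Finset V).powersetCard 3)
            = G.cliqueFinset 3 := by
          ext S
          simp only [Finset.mem_filter, Finset.mem_powersetCard, SimpleGraph.mem_cliqueFinset_iff]
          exact ⟨fun h => h.2, fun h => ⟨⟨Finset.subset_univ _, h.2⟩, h⟩⟩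
        rw [this, triangleCount]
end Clique

end QPerm

namespace QPerm

section ESymm
variable {V : Type*} [Fintype V]

lemma sum_powersetCard_one (s : Finset V) (f : V → ℚ) :
    ∑ t ∈ s.powersetCard 1, ∏ i ∈ t, f i = ∑ i ∈ s, f i := by
  rw [Finset.powersetCard_one, Finset.sum_map]
  simp

lemma pair_fiber {a b : V} (hab : a ≠ b) :
    (univ : Finset V).offDiag.filter (fun p => ({p.1, p.2} : Finset V) = {a, b})
      = {(a, b), (b, a)} := by
  ext ⟨x, y⟩
  simp only [Finset.mem_filter, Finset.mem_offDiag, Finset.mem_univ, true_and,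
    Finset.mem_insert, Finset.mem_singleton, Prod.mk.injEq]
  constructor
  · rintro ⟨hxy, hs⟩
    have hx : x = a ∨ x = b := by
      have : x ∈ ({a, b} : Finset V) := hs ▸ (by simp)
      simpa using this
    have hy : y = a ∨ y = b := by
      have : y ∈ ({a, b} : Finset V) := hs ▸ (by simp)
      simpa using this
    rcases hx with rfl | rfl <;> rcases hy with h | h <;> simp_all
  · rintro (⟨rfl, rfl⟩ | ⟨rfl, rfl⟩)
    · exact ⟨hab, rfl⟩
    · exact ⟨hab.symm, by ext w; simp; tauto⟩

lemma sum_powersetCard_two (f : V → ℚ) :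
    2 * ∑ t ∈ (univ : Finset V).powersetCard 2, ∏ i ∈ t, f i
      = (∑ i, f i) ^ 2 - ∑ i, (f i) ^ 2 := by
  have himg : (univ : Finset V).offDiag.image (fun p => ({p.1, p.2} : Finset V))
      = (univ : Finset V).powersetCard 2 := by
    ext S
    simp only [Finset.mem_image, Finset.mem_powersetCard, Finset.mem_offDiag, Finset.mem_univ,
      true_and]
    constructor
    · rintro ⟨⟨a, b⟩, hab, rfl⟩
      exact ⟨Finset.subset_univ _, Finset.card_pair hab⟩
    · rintro ⟨-, hcard⟩
      obtain ⟨a, b, hab, rfl⟩ := Finset.card_eq_two.mp hcard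
      exact ⟨(a, b), hab, rfl⟩
  have hstep : ∑ p ∈ (univ : Finset V).offDiag, ∏ i ∈ ({p.1, p.2} : Finset V), f i
      = 2 * ∑ t ∈ (univ : Finset V).powersetCard 2, ∏ i ∈ t, f i := by
    rw [Finset.sum_comp (fun S : Finset V => ∏ i ∈ S, f i)
      (fun p : V × V => ({p.1, p.2} : Finset V)), himg, Finset.mul_sum]
    refine Finset.sum_congr rfl fun S hS => ?_
    obtain ⟨a, b, hab, rfl⟩ := Finset.card_eq_two.mp (Finset.mem_powersetCard.mp hS).2
    rw [pair_fiber hab,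
      Finset.card_insert_of_notMem (by simp [Prod.ext_iff, hab.symm]), Finset.card_singleton,
      nsmul_eq_mul]
    norm_num
  rw [← hstep]
  have hpt : ∀ p ∈ (univ : Finset V).offDiag,
      ∏ i ∈ ({p.1, p.2} : Finset V), f i = f p.1 * f p.2 := by
    rintro ⟨a, b⟩ hab
    have : a ≠ b := (Finset.mem_offDiag.mp hab).2.2
    rw [Finset.prod_pair this]
  rw [Finset.sum_congr rfl hpt, sum_offDiag (fun a b => f a * f b)]
  have h1 : ∑ a : V, ∑ b : V, f a * f b = (∑ i, f i) * (∑ i, f i) :=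
    (Finset.sum_mul_sum univ univ f f).symm
  have h2 : ∑ a : V, f a * f a = ∑ a, (f a) ^ 2 := by
    apply Finset.sum_congr rfl; intro a _; ring
  rw [h1, h2]
  ring

lemma sum_powersetCard_three (f : V → ℚ) :
    6 * ∑ t ∈ (univ : Finset V).powersetCard 3, ∏ i ∈ t, f i
      = (∑ i, f i) ^ 3 - 3 * (∑ i, f i) * (∑ i, (f i) ^ 2) + 2 * ∑ i, (f i) ^ 3 := by
  have himg : (T3 V).image (fun t : V × V × V => ({t.1, t.2.1, t.2.2} : Finset V))
      = (univ : Finset V).powersetCard 3 := by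
    ext S
    simp only [Finset.mem_image, Finset.mem_powersetCard]
    constructor
    · rintro ⟨⟨a, b, c⟩, ht, rfl⟩
      obtain ⟨hab, hac, hbc⟩ : a ≠ b ∧ a ≠ c ∧ b ≠ c := by simpa [T3] using ht
      refine ⟨Finset.subset_univ _, ?_⟩
      rw [Finset.card_insert_of_notMem (by simp [hab, hac]),
        Finset.card_insert_of_notMem (by simp [hbc]), Finset.card_singleton]
    · rintro ⟨-, hcard⟩
      obtain ⟨x, y, z, hxy, hxz, hyz, rfl⟩ := Finset.card_eq_three.mp hcard
      exact ⟨(x, y, z), by simp [T3, hxy, hxz, hyz], rfl⟩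
  have hstep : ∑ t ∈ T3 V, ∏ i ∈ ({t.1, t.2.1, t.2.2} : Finset V), f i
      = 6 * ∑ t ∈ (univ : Finset V).powersetCard 3, ∏ i ∈ t, f i := by
    rw [Finset.sum_comp (fun S : Finset V => ∏ i ∈ S, f i)
      (fun t : V × V × V => ({t.1, t.2.1, t.2.2} : Finset V)), himg, Finset.mul_sum]
    refine Finset.sum_congr rfl fun S hS => ?_
    obtain ⟨x, y, z, hxy, hxz, hyz, rfl⟩ :=
      Finset.card_eq_three.mp (Finset.mem_powersetCard.mp hS).2
    rw [triple_fiber hxy hxz hyz,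
      Finset.card_insert_of_notMem (by simp [Prod.ext_iff, hxy, hxz, hyz]),
      Finset.card_insert_of_notMem
        (by simp [Prod.ext_iff, hxy, hxz, hyz, Ne.symm hxy, Ne.symm hxz, Ne.symm hyz]),
      Finset.card_insert_of_notMem
        (by simp [Prod.ext_iff, hxy, hxz, hyz, Ne.symm hxy, Ne.symm hxz, Ne.symm hyz]),
      Finset.card_insert_of_notMem
        (by simp [Prod.ext_iff, hxy, hxz, hyz, Ne.symm hxy, Ne.symm hxz, Ne.symm hyz]),
      Finset.card_insert_of_notMem
        (by simp [Prod.ext_iff, hxy, hxz, hyz, Ne.symm hxy, Ne.symm hxz, Ne.symm hyz]),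
      Finset.card_singleton, nsmul_eq_mul]
    norm_num
  rw [← hstep]
  have hpt : ∀ t ∈ T3 V,
      ∏ i ∈ ({t.1, t.2.1, t.2.2} : Finset V), f i = f t.1 * f t.2.1 * f t.2.2 := by
    rintro ⟨a, b, c⟩ ht
    obtain ⟨hab, hac, hbc⟩ : a ≠ b ∧ a ≠ c ∧ b ≠ c := by simpa [T3] using ht
    rw [Finset.prod_insert (by simp [hab, hac]), Finset.prod_pair hbc, mul_assoc]
  rw [Finset.sum_congr rfl hpt, sum_T3 (fun a b c => f a * f b * f c)]
  have e1 : ∑ a : V, ∑ b : V, ∑ c : V, f a * f b * f c = (∑ i, f i) ^ 3 := by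
    have h1 : ∀ a b : V, ∑ c : V, f a * f b * f c = f a * f b * ∑ c, f c := by
      intro a b; rw [Finset.mul_sum]
    have h2 : ∀ a : V, ∑ b : V, f a * f b * ∑ c, f c = f a * (∑ b, f b) * ∑ c, f c := by
      intro a; rw [← Finset.sum_mul, ← Finset.mul_sum]
    calc ∑ a : V, ∑ b : V, ∑ c : V, f a * f b * f c
        = ∑ a : V, ∑ b : V, f a * f b * ∑ c, f c :=
          Finset.sum_congr rfl fun a _ => Finset.sum_congr rfl fun b _ => h1 a b
      _ = ∑ a : V, f a * (∑ b, f b) * ∑ c, f c := Finset.sum_congr rfl fun a _ => h2 a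
      _ = (∑ i, f i) ^ 3 := by rw [← Finset.sum_mul, ← Finset.sum_mul]; ring
  have e2 : ∑ a : V, ∑ c : V, f a * f a * f c = (∑ i, (f i) ^ 2) * (∑ i, f i) := by
    have h1 : ∀ a : V, ∑ c : V, f a * f a * f c = (f a) ^ 2 * ∑ c, f c := by
      intro a; rw [Finset.mul_sum]; apply Finset.sum_congr rfl; intro c _; ring
    rw [Finset.sum_congr rfl (fun a _ => h1 a), ← Finset.sum_mul]
  have e3 : ∑ a : V, ∑ b : V, f a * f b * f a = (∑ i, (f i) ^ 2) * (∑ i, f i) := by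
    have : ∀ a : V, ∑ b : V, f a * f b * f a = (f a) ^ 2 * ∑ b, f b := by
      intro a; rw [Finset.mul_sum]; apply Finset.sum_congr rfl; intro b _; ring
    rw [Finset.sum_congr rfl (fun a _ => this a), ← Finset.sum_mul]
  have e4 : ∑ a : V, ∑ b : V, f a * f b * f b = (∑ i, f i) * (∑ i, (f i) ^ 2) := by
    have : ∀ a : V, ∑ b : V, f a * f b * f b = f a * ∑ b, (f b) ^ 2 := by
      intro a; rw [Finset.mul_sum]; apply Finset.sum_congr rfl; intro b _; ring
    rw [Finset.sum_congr rfl (fun a _ => this a), ← Finset.sum_mul]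
  have e5 : ∑ a : V, f a * f a * f a = ∑ a, (f a) ^ 3 := by
    apply Finset.sum_congr rfl; intro a _; ring
  rw [e1, e2, e3, e4, e5]
  ring

end ESymm

end QPerm

namespace QPerm

section Graph
variable {V : Type*} [Fintype V] (G : SimpleGraph V)

lemma term_natDegree_le (M : Matrix V V ℚ) (σ : Perm V) :
    (∏ i, cmat M (σ i) i).natDegree ≤ #σ.supportᶜ := by
  rw [term_eq]
  refine le_trans Polynomial.natDegree_mul_le ?_
  rw [Polynomial.natDegree_C, zero_add]
  rw [Polynomial.natDegree_prod_of_monic _ _ (fun i _ => monic_X_sub_C _)]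
  simp

lemma prod_neg_eq (t : Finset V) (f : V → ℚ) :
    ∏ i ∈ t, (-f i) = (-1 : ℚ) ^ #t * ∏ i ∈ t, f i := by
  rw [← Finset.prod_const, ← Finset.prod_mul_distrib]
  simp [neg_one_mul]

lemma Q_diag (v : V) : signlessLapMatrix G v v = (G.degree v : ℚ) := by
  simp [signlessLapMatrix, SimpleGraph.degMatrix]

lemma Q_off {a b : V} (h : a ≠ b) : signlessLapMatrix G a b = G.adjMatrix ℚ a b := by
  simp [signlessLapMatrix, SimpleGraph.degMatrix, Matrix.diagonal_apply_ne _ h]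

lemma adj_symm (a b : V) : G.adjMatrix ℚ a b = G.adjMatrix ℚ b a := by
  simp [SimpleGraph.adjMatrix_apply, G.adj_comm]

lemma adj_row_sum (a : V) : ∑ b, G.adjMatrix ℚ a b = (G.degree a : ℚ) := by
  simp only [SimpleGraph.adjMatrix_apply, Finset.sum_boole, SimpleGraph.degree]
  congr 1
  rw [SimpleGraph.neighborFinset_eq_filter]

lemma qPermPoly_coeff (k : ℕ) :
    (qPermPoly G).coeff k
      = ∑ σ : Perm V, (∏ i, cmat (signlessLapMatrix G) (σ i) i).coeff k := by
  have : qPermPoly G = Matrix.permanent (cmat (signlessLapMatrix G)) := rfl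
  rw [this, Matrix.permanent, Polynomial.finset_sum_coeff]

lemma term_one_coeff (M : Matrix V V ℚ) {k : ℕ} (hk : k ≤ Fintype.card V) :
    (∏ i, cmat M ((1 : Perm V) i) i).coeff (Fintype.card V - k)
      = ∑ t ∈ (univ : Finset V).powersetCard k, ∏ i ∈ t, (-(M i i)) := by
  rw [term_coeff M 1 hk (by simp)]
  simp [Equiv.Perm.support_one]

lemma term_swap_prod {a b : V} (hab : a ≠ b) :
    ∏ i ∈ (Equiv.swap a b).support, (-(signlessLapMatrix G (Equiv.swap a b i) i))
      = G.adjMatrix ℚ a b := by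
  rw [Equiv.Perm.support_swap hab, Finset.prod_pair hab, Equiv.swap_apply_left,
    Equiv.swap_apply_right, Q_off G hab.symm, Q_off G hab, neg_mul_neg,
    adj_symm G b a]
  by_cases h : G.Adj a b <;> simp [SimpleGraph.adjMatrix_apply, h]

lemma term_swap_coeff2 {a b : V} (hab : a ≠ b) (hk : 2 ≤ Fintype.card V) :
    (∏ i, cmat (signlessLapMatrix G) (Equiv.swap a b i) i).coeff (Fintype.card V - 2)
      = G.adjMatrix ℚ a b := by
  rw [term_coeff _ _ hk (by rw [Equiv.Perm.card_support_swap hab])]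
  rw [Equiv.Perm.card_support_swap hab, Nat.sub_self, Finset.powersetCard_zero,
    Finset.sum_singleton, Finset.prod_empty, mul_one, term_swap_prod G hab]

lemma term_swap_coeff3 {a b : V} (hab : a ≠ b) (hk : 3 ≤ Fintype.card V) :
    (∏ i, cmat (signlessLapMatrix G) (Equiv.swap a b i) i).coeff (Fintype.card V - 3)
      = -(G.adjMatrix ℚ a b *
          ((∑ v, (G.degree v : ℚ)) - (G.degree a : ℚ) - (G.degree b : ℚ))) := by
  rw [term_coeff _ _ hk (by rw [Equiv.Perm.card_support_swap hab]; omega)]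
  rw [term_swap_prod G hab, Equiv.Perm.card_support_swap hab]
  have h1 : (3 : ℕ) - 2 = 1 := rfl
  rw [h1, sum_powersetCard_one]
  have h2 : ∑ i ∈ (Equiv.swap a b).supportᶜ, (-(signlessLapMatrix G i i))
      = -((∑ v, (G.degree v : ℚ)) - (G.degree a : ℚ) - (G.degree b : ℚ)) := by
    have h3 : ∑ i ∈ (Equiv.swap a b).support, (signlessLapMatrix G i i)
        = (G.degree a : ℚ) + (G.degree b : ℚ) := by
      rw [Equiv.Perm.support_swap hab, Finset.sum_pair hab, Q_diag, Q_diag]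
    have h4 := Finset.sum_add_sum_compl (Equiv.swap a b).support
      (fun i => signlessLapMatrix G i i)
    have h5 : ∑ v, signlessLapMatrix G v v = ∑ v, (G.degree v : ℚ) :=
      Finset.sum_congr rfl fun v _ => Q_diag G v
    rw [h3, h5] at h4
    rw [Finset.sum_neg_distrib]
    linarith
  rw [h2]
  ring

lemma term_cyc_coeff3 {a b c : V} (hab : a ≠ b) (hac : a ≠ c) (hbc : b ≠ c)
    (hk : 3 ≤ Fintype.card V) :
    (∏ i, cmat (signlessLapMatrix G) (cyc a b c i) i).coeff (Fintype.card V - 3)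
      = -(G.adjMatrix ℚ a b * G.adjMatrix ℚ b c * G.adjMatrix ℚ c a) := by
  rw [term_coeff _ _ hk (by rw [card_support_cyc hab hac hbc])]
  rw [card_support_cyc hab hac hbc, Nat.sub_self, Finset.powersetCard_zero,
    Finset.sum_singleton, Finset.prod_empty, mul_one, support_cyc hab hac hbc]
  rw [Finset.prod_insert (by simp [hab, hac]), Finset.prod_pair hbc]
  rw [cyc_apply_a hab hac hbc, cyc_apply_b hab hac hbc, cyc_apply_c hab hac hbc]
  rw [Q_off G (Ne.symm hab), Q_off G (Ne.symm hbc), Q_off G hac]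
  rw [adj_symm G b a, adj_symm G c b, adj_symm G a c]
  ring

lemma coeff_card : (qPermPoly G).coeff (Fintype.card V) = 1 := by
  rw [qPermPoly_coeff]
  rw [Finset.sum_eq_single 1]
  · have h0 : Fintype.card V = Fintype.card V - 0 := rfl
    rw [h0, term_one_coeff _ (Nat.zero_le _)]
    simp
  · intro σ _ hσ
    have hs : 0 < #σ.support := by
      rcases Nat.eq_zero_or_pos #σ.support with h | h
      · exact absurd (Equiv.Perm.card_support_eq_zero.mp h) hσ
      · exact h
    have h0 : Fintype.card V = Fintype.card V - 0 := rfl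
    rw [h0]
    exact term_coeff_zero _ _ (Nat.zero_le _) hs
  · simp

lemma natDegree_qPermPoly : (qPermPoly G).natDegree = Fintype.card V := by
  apply le_antisymm
  · have : qPermPoly G = Matrix.permanent (cmat (signlessLapMatrix G)) := rfl
    rw [this, Matrix.permanent]
    refine Polynomial.natDegree_sum_le_of_forall_le _ _ fun σ _ => ?_
    exact le_trans (term_natDegree_le _ σ) (Finset.card_le_univ _)
  · exact Polynomial.le_natDegree_of_ne_zero (by rw [coeff_card]; exact one_ne_zero)

lemma coeff_one (h1 : 1 ≤ Fintype.card V) :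
    (qPermPoly G).coeff (Fintype.card V - 1) = -∑ v, (G.degree v : ℚ) := by
  rw [qPermPoly_coeff]
  rw [Finset.sum_eq_single 1]
  · rw [term_one_coeff _ h1, sum_powersetCard_one]
    rw [← Finset.sum_neg_distrib]
    exact Finset.sum_congr rfl fun v _ => by rw [Q_diag]
  · intro σ _ hσ
    refine term_coeff_zero _ _ h1 ?_
    have := σ.card_support_ne_one
    have h0 : ¬ #σ.support ≤ 1 := fun hle =>
      hσ (Equiv.Perm.card_support_le_one.mp hle)
    omega
  · simp

lemma coeff_two (h2 : 2 ≤ Fintype.card V) :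
    2 * (qPermPoly G).coeff (Fintype.card V - 2)
      = ((∑ v, (G.degree v : ℚ)) ^ 2 - ∑ v, (G.degree v : ℚ) ^ 2)
        + ∑ v, (G.degree v : ℚ) := by
  rw [qPermPoly_coeff]
  rw [sum_classify _ (fun σ hσ => term_coeff_zero _ σ h2 (by omega))]
  have hg1 : (∏ i, cmat (signlessLapMatrix G) ((1 : Perm V) i) i).coeff (Fintype.card V - 2)
      = ∑ t ∈ (univ : Finset V).powersetCard 2, ∏ i ∈ t, (G.degree i : ℚ) := by
    rw [term_one_coeff _ h2]
    refine Finset.sum_congr rfl fun t ht => ?_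
    have hcard : #t = 2 := (Finset.mem_powersetCard.mp ht).2
    rw [prod_neg_eq, hcard]
    have : ∏ i ∈ t, signlessLapMatrix G i i = ∏ i ∈ t, (G.degree i : ℚ) :=
      Finset.prod_congr rfl fun i _ => Q_diag G i
    rw [this]
    ring
  have hg3 : ∑ σ ∈ univ.filter (fun σ : Perm V => #σ.support = 3),
      (∏ i, cmat (signlessLapMatrix G) (σ i) i).coeff (Fintype.card V - 2) = 0 :=
    Finset.sum_eq_zero fun σ hσ => term_coeff_zero _ σ h2
      (by have := (Finset.mem_filter.mp hσ).2; omega)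
  have hswap := sum_swaps (V := V)
    (fun σ => (∏ i, cmat (signlessLapMatrix G) (σ i) i).coeff (Fintype.card V - 2))
  have hswapval : ∑ p ∈ (univ : Finset V).offDiag,
      (∏ i, cmat (signlessLapMatrix G) (Equiv.swap p.1 p.2 i) i).coeff (Fintype.card V - 2)
      = ∑ v, (G.degree v : ℚ) := by
    have : ∀ p ∈ (univ : Finset V).offDiag,
        (∏ i, cmat (signlessLapMatrix G) (Equiv.swap p.1 p.2 i) i).coeff (Fintype.card V - 2)
          = G.adjMatrix ℚ p.1 p.2 := fun p hp =>
      term_swap_coeff2 G (Finset.mem_offDiag.mp hp).2.2 h2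
    rw [Finset.sum_congr rfl this, sum_offDiag (fun a b => G.adjMatrix ℚ a b)]
    rw [Finset.sum_congr rfl fun a (_ : a ∈ univ) => adj_row_sum G a]
    have hz : ∑ a : V, G.adjMatrix ℚ a a = 0 := by simp [SimpleGraph.adjMatrix_apply]
    rw [hz, sub_zero]
  rw [hg1, hg3, add_zero]
  rw [hswapval] at hswap
  have h2E := sum_powersetCard_two (fun v => (G.degree v : ℚ))
  linarith

lemma coeff_three (h3 : 3 ≤ Fintype.card V) :
    6 * (qPermPoly G).coeff (Fintype.card V - 3)
      = -((∑ v, (G.degree v : ℚ)) ^ 3 - 3 * (∑ v, (G.degree v : ℚ)) * (∑ v, (G.degree v : ℚ) ^ 2)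
          + 2 * ∑ v, (G.degree v : ℚ) ^ 3)
        - 3 * ((∑ v, (G.degree v : ℚ)) ^ 2 - 2 * ∑ v, (G.degree v : ℚ) ^ 2)
        - 12 * (triangleCount G : ℚ) := by
  rw [qPermPoly_coeff]
  rw [sum_classify _ (fun σ hσ => term_coeff_zero _ σ h3 (by omega))]
  -- identity part
  have hg1 : 6 * (∏ i, cmat (signlessLapMatrix G) ((1 : Perm V) i) i).coeff (Fintype.card V - 3)
      = -((∑ v, (G.degree v : ℚ)) ^ 3
          - 3 * (∑ v, (G.degree v : ℚ)) * (∑ v, (G.degree v : ℚ) ^ 2)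
          + 2 * ∑ v, (G.degree v : ℚ) ^ 3) := by
    rw [term_one_coeff _ h3]
    have : ∑ t ∈ (univ : Finset V).powersetCard 3, ∏ i ∈ t, (-(signlessLapMatrix G i i))
        = -∑ t ∈ (univ : Finset V).powersetCard 3, ∏ i ∈ t, (G.degree i : ℚ) := by
      rw [← Finset.sum_neg_distrib]
      refine Finset.sum_congr rfl fun t ht => ?_
      have hcard : #t = 3 := (Finset.mem_powersetCard.mp ht).2
      rw [prod_neg_eq, hcard]
      have : ∏ i ∈ t, signlessLapMatrix G i i = ∏ i ∈ t, (G.degree i : ℚ) :=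
        Finset.prod_congr rfl fun i _ => Q_diag G i
      rw [this]
      ring
    rw [this]
    have h6 := sum_powersetCard_three (fun v => (G.degree v : ℚ))
    linarith
  -- swap part
  have hswap := sum_swaps (V := V)
    (fun σ => (∏ i, cmat (signlessLapMatrix G) (σ i) i).coeff (Fintype.card V - 3))
  have hswapval : ∑ p ∈ (univ : Finset V).offDiag,
      (∏ i, cmat (signlessLapMatrix G) (Equiv.swap p.1 p.2 i) i).coeff (Fintype.card V - 3)
      = -((∑ v, (G.degree v : ℚ)) ^ 2 - 2 * ∑ v, (G.degree v : ℚ) ^ 2) := by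
    have hpt : ∀ p ∈ (univ : Finset V).offDiag,
        (∏ i, cmat (signlessLapMatrix G) (Equiv.swap p.1 p.2 i) i).coeff (Fintype.card V - 3)
          = -(G.adjMatrix ℚ p.1 p.2 *
              ((∑ v, (G.degree v : ℚ)) - (G.degree p.1 : ℚ) - (G.degree p.2 : ℚ))) :=
      fun p hp => term_swap_coeff3 G (Finset.mem_offDiag.mp hp).2.2 h3
    rw [Finset.sum_congr rfl hpt]
    rw [sum_offDiag (fun a b => -(G.adjMatrix ℚ a b *
      ((∑ v, (G.degree v : ℚ)) - (G.degree a : ℚ) - (G.degree b : ℚ))))]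
    have hdiag : ∑ a : V, -(G.adjMatrix ℚ a a *
        ((∑ v, (G.degree v : ℚ)) - (G.degree a : ℚ) - (G.degree a : ℚ))) = 0 := by
      apply Finset.sum_eq_zero
      intro a _
      simp [SimpleGraph.adjMatrix_apply]
    rw [hdiag, sub_zero]
    have hmain : ∑ a : V, ∑ b : V, -(G.adjMatrix ℚ a b *
        ((∑ v, (G.degree v : ℚ)) - (G.degree a : ℚ) - (G.degree b : ℚ)))
        = -((∑ v, (G.degree v : ℚ)) ^ 2 - 2 * ∑ v, (G.degree v : ℚ) ^ 2) := by
      have hinner : ∀ a : V, ∑ b : V, -(G.adjMatrix ℚ a b *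
          ((∑ v, (G.degree v : ℚ)) - (G.degree a : ℚ) - (G.degree b : ℚ)))
          = -((G.degree a : ℚ) * ((∑ v, (G.degree v : ℚ)) - (G.degree a : ℚ))
              - ∑ b, G.adjMatrix ℚ a b * (G.degree b : ℚ)) := by
        intro a
        have expand : ∀ b : V, -(G.adjMatrix ℚ a b *
            ((∑ v, (G.degree v : ℚ)) - (G.degree a : ℚ) - (G.degree b : ℚ)))
            = -(G.adjMatrix ℚ a b * ((∑ v, (G.degree v : ℚ)) - (G.degree a : ℚ)))
              + G.adjMatrix ℚ a b * (G.degree b : ℚ) := by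
          intro b; ring
        rw [Finset.sum_congr rfl (fun b _ => expand b), Finset.sum_add_distrib,
          Finset.sum_neg_distrib, ← Finset.sum_mul, adj_row_sum]
        ring
      rw [Finset.sum_congr rfl (fun a _ => hinner a)]
      have hcol : ∑ a : V, ∑ b : V, G.adjMatrix ℚ a b * (G.degree b : ℚ)
          = ∑ v, (G.degree v : ℚ) ^ 2 := by
        rw [Finset.sum_comm]
        have : ∀ b : V, ∑ a : V, G.adjMatrix ℚ a b * (G.degree b : ℚ)
            = (G.degree b : ℚ) ^ 2 := by
          intro b
          rw [← Finset.sum_mul]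
          have : ∑ a : V, G.adjMatrix ℚ a b = (G.degree b : ℚ) := by
            rw [Finset.sum_congr rfl (fun a _ => adj_symm G a b), adj_row_sum]
          rw [this]; ring
        rw [Finset.sum_congr rfl (fun b _ => this b)]
      have hfirst : ∑ a : V, -((G.degree a : ℚ) * ((∑ v, (G.degree v : ℚ)) - (G.degree a : ℚ))
          - ∑ b, G.adjMatrix ℚ a b * (G.degree b : ℚ))
          = -((∑ v, (G.degree v : ℚ)) ^ 2 - (∑ v, (G.degree v : ℚ) ^ 2))
            + ∑ a : V, ∑ b : V, G.adjMatrix ℚ a b * (G.degree b : ℚ) := by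
        have expand2 : ∀ a : V, -((G.degree a : ℚ) * ((∑ v, (G.degree v : ℚ))
            - (G.degree a : ℚ)) - ∑ b, G.adjMatrix ℚ a b * (G.degree b : ℚ))
            = -((G.degree a : ℚ) * (∑ v, (G.degree v : ℚ))) + (G.degree a : ℚ) ^ 2
              + ∑ b, G.adjMatrix ℚ a b * (G.degree b : ℚ) := by
          intro a; ring
        rw [Finset.sum_congr rfl (fun a _ => expand2 a), Finset.sum_add_distrib,
          Finset.sum_add_distrib, Finset.sum_neg_distrib, ← Finset.sum_mul]
        ring
      rw [hfirst, hcol]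
      ring
    rw [hmain]
  -- cycle part
  have hcyc := sum_cycles (V := V)
    (fun σ => (∏ i, cmat (signlessLapMatrix G) (σ i) i).coeff (Fintype.card V - 3))
  have hcycval : ∑ t ∈ T3 V,
      (∏ i, cmat (signlessLapMatrix G) (cyc t.1 t.2.1 t.2.2 i) i).coeff (Fintype.card V - 3)
      = -(6 * (triangleCount G : ℚ)) := by
    have hpt : ∀ t ∈ T3 V,
        (∏ i, cmat (signlessLapMatrix G) (cyc t.1 t.2.1 t.2.2 i) i).coeff (Fintype.card V - 3)
          = -(G.adjMatrix ℚ t.1 t.2.1 * G.adjMatrix ℚ t.2.1 t.2.2 * G.adjMatrix ℚ t.2.2 t.1) := by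
      rintro ⟨a, b, c⟩ ht
      obtain ⟨hab, hac, hbc⟩ : a ≠ b ∧ a ≠ c ∧ b ≠ c := by simpa [T3] using ht
      exact term_cyc_coeff3 G hab hac hbc h3
    rw [Finset.sum_congr rfl hpt, Finset.sum_neg_distrib, sum_adj_T3]
  rw [hswapval] at hswap
  rw [hcycval] at hcyc
  linarith

end Graph

end QPerm

/-- **Lemma 2.4.** If two graphs have the same signless Laplacian permanental polynomial,
then they have the same number of vertices, the same number of edges, the same sum of
squares of vertex degrees, and the same value of `∑ dᵢ³ + 6·c₃`, where `c₃` is the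
number of triangles. -/
theorem qPermPoly_invariants
    {V W : Type*} [Fintype V] [Fintype W] (G : SimpleGraph V) (H : SimpleGraph W)
    (h : qPermPoly G = qPermPoly H) :
    Fintype.card V = Fintype.card W ∧
    G.edgeFinset.card = H.edgeFinset.card ∧
    (∑ v, (G.degree v) ^ 2) = (∑ w, (H.degree w) ^ 2) ∧
    ((∑ v, (G.degree v : ℤ) ^ 3) + 6 * (triangleCount G : ℤ)
      = (∑ w, (H.degree w : ℤ) ^ 3) + 6 * (triangleCount H : ℤ)) := by
  classical
  have hn : Fintype.card V = Fintype.card W := by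
    rw [← QPerm.natDegree_qPermPoly G, ← QPerm.natDegree_qPermPoly H, h]
  -- degree sums
  have hs1 : ∑ v, G.degree v = ∑ w, H.degree w := by
    rcases Nat.eq_zero_or_pos (Fintype.card V) with h0 | hpos
    · have hV : IsEmpty V := Fintype.card_eq_zero_iff.mp h0
      have hW : IsEmpty W := Fintype.card_eq_zero_iff.mp (hn ▸ h0)
      simp
    · have c1G := QPerm.coeff_one G hpos
      have c1H := QPerm.coeff_one H (hn ▸ hpos)
      rw [h, hn, c1H, neg_inj] at c1G
      exact_mod_cast c1G.symm
  have hs1Q : ∑ v, (G.degree v : ℚ) = ∑ w, (H.degree w : ℚ) := by exact_mod_cast hs1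
  have hedge : G.edgeFinset.card = H.edgeFinset.card := by
    have hG := G.sum_degrees_eq_twice_card_edges
    have hH := H.sum_degrees_eq_twice_card_edges
    omega
  have hs2 : ∑ v, (G.degree v) ^ 2 = ∑ w, (H.degree w) ^ 2 := by
    by_cases h2 : 2 ≤ Fintype.card V
    · have c2G := QPerm.coeff_two G h2
      have c2H := QPerm.coeff_two H (hn ▸ h2)
      rw [h, hn] at c2G
      have : ∑ v, (G.degree v : ℚ) ^ 2 = ∑ w, (H.degree w : ℚ) ^ 2 := by
        rw [c2H] at c2G
        rw [hs1Q] at c2G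
        linarith
      exact_mod_cast this
    · have hdG : ∀ v, G.degree v = 0 := fun v => by
        have : Nonempty V := ⟨v⟩
        have := G.degree_lt_card_verts v
        omega
      have hdH : ∀ w, H.degree w = 0 := fun w => by
        have : Nonempty W := ⟨w⟩
        have := H.degree_lt_card_verts w
        omega
      simp [hdG, hdH]
  have hs2Q : ∑ v, (G.degree v : ℚ) ^ 2 = ∑ w, (H.degree w : ℚ) ^ 2 := by exact_mod_cast hs2
  refine ⟨hn, hedge, hs2, ?_⟩
  by_cases h3 : 3 ≤ Fintype.card V
  · have c3G := QPerm.coeff_three G h3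
    have c3H := QPerm.coeff_three H (hn ▸ h3)
    rw [h, hn] at c3G
    rw [c3H] at c3G
    rw [hs1Q, hs2Q] at c3G
    have hQ : ∑ v, (G.degree v : ℚ) ^ 3 + 6 * (triangleCount G : ℚ)
        = ∑ w, (H.degree w : ℚ) ^ 3 + 6 * (triangleCount H : ℚ) := by linarith
    have := hQ
    exact_mod_cast this
  · have hclG : triangleCount G = 0 := by
      rw [triangleCount, Finset.card_eq_zero]
      ext S
      simp only [SimpleGraph.mem_cliqueFinset_iff, Finset.notMem_empty, iff_false]
      intro hS
      have hc := hS.2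
      have := Finset.card_le_univ S
      omega
    have hclH : triangleCount H = 0 := by
      rw [triangleCount, Finset.card_eq_zero]
      ext S
      simp only [SimpleGraph.mem_cliqueFinset_iff, Finset.notMem_empty, iff_false]
      intro hS
      have hc := hS.2
      have := Finset.card_le_univ S
      omega
    have hdG : ∀ v, (G.degree v : ℤ) ^ 3 = (G.degree v : ℤ) := by
      intro v
      have : Nonempty V := ⟨v⟩
      have hlt := G.degree_lt_card_verts v
      have hd : G.degree v = 0 ∨ G.degree v = 1 := by omega
      rcases hd with h0 | h0 <;> simp [h0]
    have hdH : ∀ w, (H.degree w : ℤ) ^ 3 = (H.degree w : ℤ) := by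
      intro w
      have : Nonempty W := ⟨w⟩
      have hlt := H.degree_lt_card_verts w
      have hd : H.degree w = 0 ∨ H.degree w = 1 := by omega
      rcases hd with h0 | h0 <;> simp [h0]
    rw [Finset.sum_congr rfl (fun v _ => hdG v), Finset.sum_congr rfl (fun w _ => hdH w),
      hclG, hclH]
    push_cast
    exact_mod_cast congrArg (Nat.cast : ℕ → ℤ) hs1
end
end
end

section
/- Let G be a simple graph with n vertices, m edges and degree sequence (d_1, …, d_n), and write its Laplacian permanental polynomial as π(L(G); x) = Σ_i p_i(G) x^{n−i}. Then: (i) p_0(G) = 1; (ii) p_1(G) = −2m; (iii) p_2(G) = 2m² + m − (1/2) Σ_i d_i²; and (iv) p_3(G) = −(1/3) Σ_i d_i³ + (m+1) Σ_i d_i² − (4/3)m³ − 2m² + 2c₃(G), where c₃(G) is the number of triangles in G. -/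
open scoped Classical
open Polynomial

noncomputable section

namespace LPP

open Finset Equiv

/-! ### Coefficients of products of reversed linear factors -/

variable {V : Type*}

/-- reversed linear-factor product -/
def Rv (d : V → ℚ) (s : Finset V) : ℚ[X] := ∏ i ∈ s, (1 - C (d i) * X)

def Qv (d : V → ℚ) (s : Finset V) : ℚ[X] := ∏ i ∈ s, (X - C (d i))

lemma coeff_one_sub_C_mul_X_mul (r : ℚ) (p : ℚ[X]) (k : ℕ) :
    ((1 - C r * X) * p).coeff (k+1) = p.coeff (k+1) - r * p.coeff k := by
  rw [sub_mul, one_mul, Polynomial.coeff_sub, mul_assoc, Polynomial.coeff_C_mul,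
    Polynomial.coeff_X_mul]

lemma coeff_one_sub_C_mul_X_mul_zero (r : ℚ) (p : ℚ[X]) :
    ((1 - C r * X) * p).coeff 0 = p.coeff 0 := by
  simp [sub_mul, mul_assoc]

lemma Rv_coeffs (d : V → ℚ) (s : Finset V) :
    (Rv d s).coeff 0 = 1 ∧
    (Rv d s).coeff 1 = -∑ i ∈ s, d i ∧
    (Rv d s).coeff 2 = ((∑ i ∈ s, d i)^2 - ∑ i ∈ s, (d i)^2)/2 ∧
    (Rv d s).coeff 3 = -((∑ i ∈ s, d i)^3 - 3*(∑ i ∈ s, d i)*(∑ i ∈ s, (d i)^2)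
        + 2*∑ i ∈ s, (d i)^3)/6 := by
  classical
  induction s using Finset.cons_induction with
  | empty => norm_num [Rv, Polynomial.coeff_one]
  | cons a t ha ih =>
    obtain ⟨h0, h1, h2, h3⟩ := ih
    have hR : Rv d (Finset.cons a t ha) = (1 - C (d a) * X) * Rv d t := by
      rw [Rv, Finset.prod_cons]; rfl
    have e0 := coeff_one_sub_C_mul_X_mul_zero (d a) (Rv d t)
    have e1 := coeff_one_sub_C_mul_X_mul (d a) (Rv d t) 0
    have e2 := coeff_one_sub_C_mul_X_mul (d a) (Rv d t) 1
    have e3 := coeff_one_sub_C_mul_X_mul (d a) (Rv d t) 2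
    norm_num at e1 e2 e3
    simp only [hR, Finset.sum_cons, e0, e1, e2, e3, h0, h1, h2, h3]
    exact ⟨trivial, by ring, by ring, by ring⟩

lemma Qv_natDegree (d : V → ℚ) (s : Finset V) : (Qv d s).natDegree = s.card := by
  rw [Qv, Polynomial.natDegree_prod_of_monic _ _ fun i _ => Polynomial.monic_X_sub_C (d i)]
  simp

lemma reverse_X_sub_C (c : ℚ) : (X - C c).reverse = 1 - C c * X := by
  ext n
  rw [Polynomial.coeff_reverse, Polynomial.natDegree_X_sub_C]
  match n with
  | 0 => simp
  | 1 => simp [Polynomial.coeff_one]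
  | (k+2) =>
    rw [Polynomial.revAt_eq_self_of_lt (by omega)]
    simp [Polynomial.coeff_X, Polynomial.coeff_one]

lemma Qv_reverse (d : V → ℚ) (s : Finset V) : (Qv d s).reverse = Rv d s := by
  classical
  induction s using Finset.cons_induction with
  | empty => simp [Qv, Rv, Polynomial.reverse, Polynomial.reflect_one]
  | cons a t ha ih =>
    rw [Qv, Finset.prod_cons, Polynomial.reverse_mul_of_domain, reverse_X_sub_C, ← Qv, ih,
      Rv, Rv, Finset.prod_cons]

lemma Qv_coeff (d : V → ℚ) (s : Finset V) {k : ℕ} (hk : k ≤ s.card) :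
    (Qv d s).coeff (s.card - k) = (Rv d s).coeff k := by
  rw [← Qv_reverse, Polynomial.coeff_reverse, Qv_natDegree,
    Polynomial.revAt_le (by omega : k ≤ s.card)]

/-! ### Permutations of small support -/

variable [Fintype V]

lemma support_card_le_one {σ : Equiv.Perm V} (h : σ.support.card ≤ 1) : σ = 1 := by
  have h1 := Equiv.Perm.card_support_ne_one σ
  have h0 : σ.support.card = 0 := by omega
  exact Equiv.Perm.support_eq_empty_iff.mp (Finset.card_eq_zero.mp h0)

lemma three_cycle_classify (σ : Equiv.Perm V) (h : σ.support.card = 3) :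
    ∃ i j k, i ≠ j ∧ j ≠ k ∧ i ≠ k ∧ σ i = j ∧ σ j = k ∧ σ k = i ∧
      σ.support = {i, j, k} := by
  obtain ⟨i, hi⟩ : σ.support.Nonempty := by rw [← Finset.card_pos, h]; norm_num
  have hij : i ≠ σ i := fun e => (Equiv.Perm.mem_support.mp hi) e.symm
  have hj : σ i ∈ σ.support := Equiv.Perm.apply_mem_support.mpr hi
  have hjk : σ i ≠ σ (σ i) := fun e => (Equiv.Perm.mem_support.mp hj) e.symm
  have hk : σ (σ i) ∈ σ.support := Equiv.Perm.apply_mem_support.mpr hj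
  have hik : i ≠ σ (σ i) := by
    intro e
    obtain ⟨l, hl, hlij⟩ : ∃ l ∈ σ.support, l ∉ ({i, σ i} : Finset V) := by
      by_contra hc
      push_neg at hc
      have hsub : σ.support ⊆ {i, σ i} := fun x hx => hc x hx
      have := Finset.card_le_card hsub
      have h2 : ({i, σ i} : Finset V).card ≤ 2 := Finset.card_insert_le _ _
      omega
    simp only [Finset.mem_insert, Finset.mem_singleton, not_or] at hlij
    obtain ⟨hli, hlj⟩ := hlij
    have hc3 : ({i, σ i, l} : Finset V).card = 3 :=
      Finset.card_eq_three.mpr ⟨i, σ i, l, hij, Ne.symm hli, Ne.symm hlj, rfl⟩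
    have hset : ({i, σ i, l} : Finset V) = σ.support := by
      apply Finset.eq_of_subset_of_card_le
      · intro x hx
        simp only [Finset.mem_insert, Finset.mem_singleton] at hx
        rcases hx with rfl | rfl | rfl <;> assumption
      · omega
    have hσl : σ l ∈ σ.support := Equiv.Perm.apply_mem_support.mpr hl
    rw [← hset] at hσl
    simp only [Finset.mem_insert, Finset.mem_singleton] at hσl
    rcases hσl with e1 | e1 | e1
    · exact hlj (σ.injective (e1.trans e))
    · exact hli (σ.injective e1)
    · exact (Equiv.Perm.mem_support.mp hl) e1
  have hcard3 : ({i, σ i, σ (σ i)} : Finset V).card = 3 :=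
    Finset.card_eq_three.mpr ⟨i, σ i, σ (σ i), hij, hik, hjk, rfl⟩
  have hset : ({i, σ i, σ (σ i)} : Finset V) = σ.support := by
    apply Finset.eq_of_subset_of_card_le
    · intro x hx
      simp only [Finset.mem_insert, Finset.mem_singleton] at hx
      rcases hx with rfl | rfl | rfl <;> assumption
    · omega
  have hσk : σ (σ (σ i)) = i := by
    have h1 : σ (σ (σ i)) ∈ σ.support := Equiv.Perm.apply_mem_support.mpr hk
    rw [← hset] at h1
    simp only [Finset.mem_insert, Finset.mem_singleton] at h1
    rcases h1 with e1 | e1 | e1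
    · exact e1
    · exact absurd (σ.injective e1) hik.symm
    · exact absurd (σ.injective e1) hjk.symm
  exact ⟨i, σ i, σ (σ i), hij, hjk, hik, rfl, rfl, hσk, hset.symm⟩

def cyc (p q r : V) : Equiv.Perm V := Equiv.swap p q * Equiv.swap q r

lemma cyc_apply₁ {p q r : V} (hpq : p ≠ q) (hpr : p ≠ r) : cyc p q r p = q := by
  simp [cyc, Equiv.Perm.mul_apply, Equiv.swap_apply_of_ne_of_ne hpq hpr]

lemma cyc_apply₂ {p q r : V} (hpq : p ≠ q) (hqr : q ≠ r) (hpr : p ≠ r) : cyc p q r q = r := by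
  simp [cyc, Equiv.Perm.mul_apply, Equiv.swap_apply_of_ne_of_ne hpr.symm hqr.symm]

lemma cyc_apply₃ {p q r : V} (hqr : q ≠ r) : cyc p q r r = p := by
  simp [cyc, Equiv.Perm.mul_apply, Equiv.swap_apply_of_ne_of_ne]

lemma cyc_apply_fix {p q r x : V} (hxp : x ≠ p) (hxq : x ≠ q) (hxr : x ≠ r) :
    cyc p q r x = x := by
  simp [cyc, Equiv.Perm.mul_apply, Equiv.swap_apply_of_ne_of_ne hxq hxr,
    Equiv.swap_apply_of_ne_of_ne hxp hxq]

lemma cyc_support {p q r : V} (hpq : p ≠ q) (hqr : q ≠ r) (hpr : p ≠ r) :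
    (cyc p q r).support = {p, q, r} := by
  ext x
  simp only [Equiv.Perm.mem_support, Finset.mem_insert, Finset.mem_singleton]
  constructor
  · intro hx
    by_contra hc
    push_neg at hc
    exact hx (cyc_apply_fix hc.1 hc.2.1 hc.2.2)
  · rintro (rfl | rfl | rfl)
    · rw [cyc_apply₁ hpq hpr]; exact hpq.symm
    · rw [cyc_apply₂ hpq hqr hpr]; exact hqr.symm
    · rw [cyc_apply₃ hqr]; exact hpr

lemma cyc_support_card {p q r : V} (hpq : p ≠ q) (hqr : q ≠ r) (hpr : p ≠ r) :
    (cyc p q r).support.card = 3 := by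
  rw [cyc_support hpq hqr hpr]
  exact Finset.card_eq_three.mpr ⟨p, q, r, hpq, hpr, hqr, rfl⟩

lemma swap_fiber {i j : V} (hij : i ≠ j) :
    (Finset.univ.offDiag.filter fun p : V × V => Equiv.swap p.1 p.2 = Equiv.swap i j)
      = {(i, j), (j, i)} := by
  ext ⟨x, y⟩
  simp only [Finset.mem_filter, Finset.mem_offDiag, Finset.mem_insert, Finset.mem_singleton,
    Finset.mem_univ, true_and, Prod.mk.injEq]
  constructor
  · rintro ⟨hxy, hs⟩
    have h1 : Equiv.swap i j x = y := by rw [← hs, Equiv.swap_apply_left]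
    by_cases hxi : x = i
    · subst hxi; rw [Equiv.swap_apply_left] at h1; left; exact ⟨rfl, h1.symm⟩
    by_cases hxj : x = j
    · subst hxj; rw [Equiv.swap_apply_right] at h1; right; exact ⟨rfl, h1.symm⟩
    · rw [Equiv.swap_apply_of_ne_of_ne hxi hxj] at h1; exact absurd h1 hxy
  · rintro (⟨rfl, rfl⟩ | ⟨rfl, rfl⟩)
    · exact ⟨hij, rfl⟩
    · exact ⟨hij.symm, Equiv.swap_comm _ _⟩

lemma sum_swap_fiberwise (F : Equiv.Perm V → ℚ) :
    ∑ p ∈ Finset.univ.offDiag, F (Equiv.swap p.1 p.2)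
      = 2 * ∑ σ ∈ Finset.univ.filter (fun σ : Equiv.Perm V => σ.support.card = 2), F σ := by
  have hmap : ∀ p ∈ Finset.univ.offDiag, Equiv.swap p.1 p.2 ∈
      Finset.univ.filter (fun σ : Equiv.Perm V => σ.support.card = 2) := by
    rintro ⟨x, y⟩ hp
    have hxy : x ≠ y := (Finset.mem_offDiag.mp hp).2.2
    simp only [Finset.mem_filter, Finset.mem_univ, true_and]
    rw [Equiv.Perm.support_swap hxy]
    exact Finset.card_eq_two.mpr ⟨x, y, hxy, rfl⟩
  rw [← Finset.sum_fiberwise_of_maps_to hmap (fun p : V × V => F (Equiv.swap p.1 p.2)),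
    Finset.mul_sum]
  refine Finset.sum_congr rfl fun σ hσ => ?_
  obtain ⟨i, j, hij, rfl⟩ := Equiv.Perm.card_support_eq_two.mp (Finset.mem_filter.mp hσ).2
  have hcongr : ∀ p ∈ (Finset.univ.offDiag.filter
      fun p : V × V => Equiv.swap p.1 p.2 = Equiv.swap i j), F (Equiv.swap p.1 p.2)
        = F (Equiv.swap i j) := fun p hp => by rw [(Finset.mem_filter.mp hp).2]
  rw [Finset.sum_congr rfl hcongr, Finset.sum_const, swap_fiber hij,
    Finset.card_insert_of_notMem (by simp [hij]), Finset.card_singleton]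
  push_cast
  ring

lemma eq_cyc {σ : Equiv.Perm V} {i j k : V} (hij : i ≠ j) (hjk : j ≠ k) (hik : i ≠ k)
    (h1 : σ i = j) (h2 : σ j = k) (h3 : σ k = i) (hsupp : σ.support = {i, j, k}) :
    σ = cyc i j k := by
  ext x
  by_cases hxi : x = i
  · subst hxi; rw [h1, cyc_apply₁ hij hik]
  by_cases hxj : x = j
  · subst hxj; rw [h2, cyc_apply₂ hij hjk hik]
  by_cases hxk : x = k
  · subst hxk; rw [h3, cyc_apply₃ hjk]
  · rw [cyc_apply_fix hxi hxj hxk]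
    have : x ∉ σ.support := by
      rw [hsupp]; simp [hxi, hxj, hxk]
    simpa using Equiv.Perm.notMem_support.mp this

def T3 (V : Type*) [Fintype V] : Finset (V × V × V) :=
  Finset.univ.filter fun x => x.1 ≠ x.2.1 ∧ x.2.1 ≠ x.2.2 ∧ x.1 ≠ x.2.2

lemma cyc_fiber {i j k : V} (hij : i ≠ j) (hjk : j ≠ k) (hik : i ≠ k) :
    ((T3 V).filter fun x => cyc x.1 x.2.1 x.2.2 = cyc i j k)
      = {(i, j, k), (j, k, i), (k, i, j)} := by
  have hsup : (cyc i j k).support = {i, j, k} := cyc_support hij hjk hik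
  ext ⟨p, q, r⟩
  simp only [T3, Finset.mem_filter, Finset.mem_univ, true_and, Finset.mem_insert,
    Finset.mem_singleton, Prod.mk.injEq]
  constructor
  · rintro ⟨⟨hpq, hqr, hpr⟩, hc⟩
    have hsup2 : ({p, q, r} : Finset V) = {i, j, k} := by
      rw [← cyc_support hpq hqr hpr, hc, hsup]
    have hp : p ∈ ({i, j, k} : Finset V) := by rw [← hsup2]; simp
    have e1 : cyc i j k p = q := by rw [← hc, cyc_apply₁ hpq hpr]
    have e2 : cyc i j k q = r := by rw [← hc, cyc_apply₂ hpq hqr hpr]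
    simp only [Finset.mem_insert, Finset.mem_singleton] at hp
    rcases hp with rfl | rfl | rfl
    · rw [cyc_apply₁ hij hik] at e1; subst e1
      rw [cyc_apply₂ hij hjk hik] at e2; subst e2
      exact Or.inl ⟨rfl, rfl, rfl⟩
    · rw [cyc_apply₂ hij hjk hik] at e1; subst e1
      rw [cyc_apply₃ hjk] at e2; subst e2
      exact Or.inr (Or.inl ⟨rfl, rfl, rfl⟩)
    · rw [cyc_apply₃ hjk] at e1; subst e1
      rw [cyc_apply₁ hij hik] at e2; subst e2
      exact Or.inr (Or.inr ⟨rfl, rfl, rfl⟩)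
  · rintro (⟨rfl, rfl, rfl⟩ | ⟨rfl, rfl, rfl⟩ | ⟨rfl, rfl, rfl⟩)
    · exact ⟨⟨hij, hjk, hik⟩, rfl⟩
    · refine ⟨⟨hjk, hik.symm, hij.symm⟩, ?_⟩
      refine eq_cyc hij hjk hik ?_ ?_ ?_ ?_
      · exact cyc_apply₃ hik.symm
      · exact cyc_apply₁ hjk hij.symm
      · exact cyc_apply₂ hjk hik.symm hij.symm
      · rw [cyc_support hjk hik.symm hij.symm]
        ext x; simp; tauto
    · refine ⟨⟨hik.symm, hij, hjk.symm⟩, ?_⟩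
      refine eq_cyc hij hjk hik ?_ ?_ ?_ ?_
      · exact cyc_apply₂ hik.symm hij hjk.symm
      · exact cyc_apply₃ hij
      · exact cyc_apply₁ hik.symm hjk.symm
      · rw [cyc_support hik.symm hij hjk.symm]
        ext x; simp; tauto

lemma sum_cyc_fiberwise (F : Equiv.Perm V → ℚ) :
    ∑ x ∈ T3 V, F (cyc x.1 x.2.1 x.2.2)
      = 3 * ∑ σ ∈ Finset.univ.filter (fun σ : Equiv.Perm V => σ.support.card = 3), F σ := by
  have hmap : ∀ x ∈ T3 V, cyc x.1 x.2.1 x.2.2 ∈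
      Finset.univ.filter (fun σ : Equiv.Perm V => σ.support.card = 3) := by
    rintro ⟨p, q, r⟩ hx
    obtain ⟨hpq, hqr, hpr⟩ : p ≠ q ∧ q ≠ r ∧ p ≠ r := by
      simpa [T3] using hx
    simp only [Finset.mem_filter, Finset.mem_univ, true_and]
    exact cyc_support_card hpq hqr hpr
  rw [← Finset.sum_fiberwise_of_maps_to hmap (fun x : V × V × V => F (cyc x.1 x.2.1 x.2.2)),
    Finset.mul_sum]
  refine Finset.sum_congr rfl fun σ hσ => ?_
  obtain ⟨i, j, k, hij, hjk, hik, h1, h2, h3, hsupp⟩ :=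
    LPP.three_cycle_classify σ (Finset.mem_filter.mp hσ).2
  have hσc : σ = cyc i j k := eq_cyc hij hjk hik h1 h2 h3 hsupp
  subst hσc
  have hcongr : ∀ x ∈ ((T3 V).filter fun x => cyc x.1 x.2.1 x.2.2 = cyc i j k),
      F (cyc x.1 x.2.1 x.2.2) = F (cyc i j k) := fun x hx => by
    rw [(Finset.mem_filter.mp hx).2]
  rw [Finset.sum_congr rfl hcongr, Finset.sum_const, cyc_fiber hij hjk hik]
  have hcard : ({(i, j, k), (j, k, i), (k, i, j)} : Finset (V × V × V)).card = 3 := by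
    rw [Finset.card_insert_of_notMem (by simp [Prod.ext_iff]; tauto),
      Finset.card_insert_of_notMem (by simp [Prod.ext_iff]; tauto), Finset.card_singleton]
  rw [hcard]
  push_cast
  ring

/-! ### Graph quantities -/

variable (G : SimpleGraph V)

def av (i j : V) : ℚ := if G.Adj i j then 1 else 0
def dv (v : V) : ℚ := G.degree v

lemma av_symm (i j : V) : av G i j = av G j i := by simp [av, SimpleGraph.adj_comm]
lemma av_self (i : V) : av G i i = 0 := by simp [av]
lemma av_ne_zero {i j : V} (h : av G i j ≠ 0) : G.Adj i j := by
  by_contra hc; simp [av, hc] at h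
lemma av_mul (i j : V) : av G j i * av G i j = av G i j := by
  by_cases h : G.Adj i j <;> simp [av, h, SimpleGraph.adj_comm]

lemma av_row_sum (i : V) : ∑ j, av G i j = dv G i := by
  simp only [av, dv, Finset.sum_boole]
  rw [SimpleGraph.degree, SimpleGraph.neighborFinset_eq_filter]

lemma dv_sum : ∑ v, dv G v = 2 * (G.edgeFinset.card : ℚ) := by
  have h := G.sum_degrees_eq_twice_card_edges
  simp only [dv]
  rw [← Nat.cast_sum, h]
  push_cast
  ring

lemma dv_sq_sum : ∑ i, ∑ j, av G i j * dv G i = ∑ i, dv G i ^ 2 := by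
  refine Finset.sum_congr rfl fun i _ => ?_
  rw [← Finset.sum_mul, av_row_sum, sq]

lemma dv_sq_sum' : ∑ i, ∑ j, av G i j * dv G j = ∑ i, dv G i ^ 2 := by
  rw [Finset.sum_comm]
  refine Finset.sum_congr rfl fun j _ => ?_
  rw [← Finset.sum_mul]
  rw [Finset.sum_congr rfl fun i _ => av_symm G i j, av_row_sum, sq]

set_option maxHeartbeats 1000000 in
lemma triangle_sum :
    ∑ x : V × V × V, av G x.1 x.2.1 * av G x.2.1 x.2.2 * av G x.2.2 x.1
      = 6 * ((G.cliqueFinset 3).card : ℚ) := by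
  have hstep : ∑ x : V × V × V, av G x.1 x.2.1 * av G x.2.1 x.2.2 * av G x.2.2 x.1
      = ((Finset.univ.filter fun x : V × V × V =>
          G.Adj x.1 x.2.1 ∧ G.Adj x.2.1 x.2.2 ∧ G.Adj x.2.2 x.1).card : ℚ) := by
    rw [← Finset.sum_boole]
    refine Finset.sum_congr rfl fun x _ => ?_
    by_cases h1 : G.Adj x.1 x.2.1 <;> by_cases h2 : G.Adj x.2.1 x.2.2 <;>
      by_cases h3 : G.Adj x.2.2 x.1 <;> simp [av, h1, h2, h3]
  rw [hstep]
  norm_cast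
  have hmap : ∀ x ∈ (Finset.univ.filter fun x : V × V × V =>
      G.Adj x.1 x.2.1 ∧ G.Adj x.2.1 x.2.2 ∧ G.Adj x.2.2 x.1),
      ({x.1, x.2.1, x.2.2} : Finset V) ∈ G.cliqueFinset 3 := by
    rintro ⟨p, q, r⟩ hx
    obtain ⟨h1, h2, h3⟩ : G.Adj p q ∧ G.Adj q r ∧ G.Adj r p := by simpa using hx
    rw [SimpleGraph.mem_cliqueFinset_iff]
    exact SimpleGraph.is3Clique_triple_iff.mpr ⟨h1, h3.symm, h2⟩
  rw [Finset.card_eq_sum_card_fiberwise hmap]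
  have hfib : ∀ s ∈ G.cliqueFinset 3,
      ((Finset.univ.filter fun x : V × V × V =>
        G.Adj x.1 x.2.1 ∧ G.Adj x.2.1 x.2.2 ∧ G.Adj x.2.2 x.1).filter
          fun x => ({x.1, x.2.1, x.2.2} : Finset V) = s).card = 6 := by
    intro s hs
    obtain ⟨a, b, c, hab, hac, hbc, rfl⟩ :=
      SimpleGraph.is3Clique_iff.mp (SimpleGraph.mem_cliqueFinset_iff.mp hs)
    have hab' : a ≠ b := hab.ne
    have hac' : a ≠ c := hac.ne
    have hbc' : b ≠ c := hbc.ne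
    have hset : (Finset.univ.filter fun x : V × V × V =>
        G.Adj x.1 x.2.1 ∧ G.Adj x.2.1 x.2.2 ∧ G.Adj x.2.2 x.1).filter
          (fun x => ({x.1, x.2.1, x.2.2} : Finset V) = {a, b, c})
        = {(a,b,c), (a,c,b), (b,a,c), (b,c,a), (c,a,b), (c,b,a)} := by
      ext ⟨p, q, r⟩
      simp only [Finset.mem_filter, Finset.mem_univ, true_and, Finset.mem_insert,
        Finset.mem_singleton, Prod.mk.injEq]
      constructor
      · rintro ⟨⟨h1, h2, h3⟩, hset⟩
        have hmem : ∀ x : V, (x = p ∨ x = q ∨ x = r) ↔ (x = a ∨ x = b ∨ x = c) := by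
          intro x
          have := Finset.ext_iff.mp hset x
          simpa using this
        have hp := (hmem p).mp (Or.inl rfl)
        have hq := (hmem q).mp (Or.inr (Or.inl rfl))
        have hr := (hmem r).mp (Or.inr (Or.inr rfl))
        have hpq : p ≠ q := h1.ne
        have hqr : q ≠ r := h2.ne
        have hrp : r ≠ p := h3.ne
        clear hmem hset h1 h2 h3 hstep hmap hs
        rcases hp with rfl | rfl | rfl <;> rcases hq with rfl | rfl | rfl <;>
          rcases hr with rfl | rfl | rfl <;> tauto
      · rintro (⟨rfl, rfl, rfl⟩ | ⟨rfl, rfl, rfl⟩ | ⟨rfl, rfl, rfl⟩ | ⟨rfl, rfl, rfl⟩ |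
          ⟨rfl, rfl, rfl⟩ | ⟨rfl, rfl, rfl⟩) <;>
        refine ⟨⟨?_, ?_, ?_⟩, ?_⟩ <;>
        first
          | exact hab | exact hab.symm | exact hac | exact hac.symm
          | exact hbc | exact hbc.symm
          | (ext x; simp; try tauto)
    rw [hset]
    rw [Finset.card_insert_of_notMem (by simp [Prod.ext_iff]; tauto),
      Finset.card_insert_of_notMem (by simp [Prod.ext_iff]; tauto),
      Finset.card_insert_of_notMem (by simp [Prod.ext_iff]; tauto),
      Finset.card_insert_of_notMem (by simp [Prod.ext_iff]; tauto),
      Finset.card_insert_of_notMem (by simp [Prod.ext_iff]; tauto),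
      Finset.card_singleton]
  rw [Finset.sum_congr rfl hfib, Finset.sum_const, smul_eq_mul, mul_comm]

/-! ### The term of a permutation and its coefficients -/

def term (σ : Equiv.Perm V) : ℚ[X] :=
  (∏ i ∈ σ.support, C (av G (σ i) i)) * Qv (dv G) σ.supportᶜ

lemma entry (i j : V) :
    (Matrix.diagonal (fun _ : V => (X : ℚ[X])) - (G.lapMatrix ℚ).map C) i j
      = if i = j then X - C (dv G i) else C (av G i j) := by
  rcases eq_or_ne i j with rfl | h
  · simp [SimpleGraph.lapMatrix, SimpleGraph.degMatrix, dv, av, Matrix.sub_apply,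
      Matrix.map_apply, Matrix.diagonal_apply_eq]
  · simp [SimpleGraph.lapMatrix, SimpleGraph.degMatrix, dv, av, Matrix.sub_apply,
      Matrix.map_apply, Matrix.diagonal_apply_ne _ h, h, SimpleGraph.adjMatrix_apply,
      apply_ite C]

lemma perm_sum : lapPermPoly G = ∑ σ : Equiv.Perm V, term G σ := by
  rw [lapPermPoly, Matrix.permanent]
  refine Finset.sum_congr rfl fun σ _ => ?_
  rw [term, ← Finset.prod_mul_prod_compl σ.support]
  congr 1
  · refine Finset.prod_congr rfl fun i hi => ?_
    rw [entry, if_neg (Equiv.Perm.mem_support.mp hi)]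
  · refine Finset.prod_congr rfl fun i hi => ?_
    have hfix : σ i = i := by
      simpa using (Equiv.Perm.notMem_support.mp (Finset.mem_compl.mp hi))
    rw [hfix, entry, if_pos rfl]

lemma term_coeff (σ : Equiv.Perm V) (t : ℕ) (ht : σ.support.card + t ≤ Fintype.card V) :
    (term G σ).coeff (Fintype.card V - σ.support.card - t)
      = (∏ i ∈ σ.support, av G (σ i) i) * (Rv (dv G) σ.supportᶜ).coeff t := by
  have hcompl : (σ.supportᶜ : Finset V).card = Fintype.card V - σ.support.card :=
    Finset.card_compl _
  have hcard : σ.support.card ≤ Fintype.card V := le_trans (Nat.le_add_right _ _) ht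
  rw [term, ← map_prod (Polynomial.C : ℚ →+* ℚ[X]), Polynomial.coeff_C_mul,
    show Fintype.card V - σ.support.card - t = (σ.supportᶜ : Finset V).card - t by omega,
    Qv_coeff _ _ (by omega)]

lemma term_coeff_vanish (σ : Equiv.Perm V) (k : ℕ) (h : k < σ.support.card) :
    (term G σ).coeff (Fintype.card V - k) = 0 := by
  apply Polynomial.coeff_eq_zero_of_natDegree_lt
  have h1 : (term G σ).natDegree ≤ (Qv (dv G) σ.supportᶜ).natDegree := by
    rw [term, ← map_prod (Polynomial.C : ℚ →+* ℚ[X])]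
    exact Polynomial.natDegree_C_mul_le _ _
  rw [Qv_natDegree, Finset.card_compl] at h1
  have h2 : σ.support.card ≤ Fintype.card V := Finset.card_le_univ _
  omega

lemma term_one_coeff (t : ℕ) (ht : t ≤ Fintype.card V) :
    (term G 1).coeff (Fintype.card V - t) = (Rv (dv G) Finset.univ).coeff t := by
  have := term_coeff G 1 t (by simpa using ht)
  simpa [Equiv.Perm.support_one] using this

lemma term_swap_coeff {i j : V} (hij : i ≠ j) (t : ℕ) (ht : 2 + t ≤ Fintype.card V) :
    (term G (Equiv.swap i j)).coeff (Fintype.card V - 2 - t)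
      = av G i j * (Rv (dv G) (({i, j} : Finset V)ᶜ)).coeff t := by
  have hsup : (Equiv.swap i j).support = {i, j} := Equiv.Perm.support_swap hij
  have hcard : (Equiv.swap i j).support.card = 2 := by
    rw [hsup]; exact Finset.card_pair hij
  have h := term_coeff G (Equiv.swap i j) t (by rw [hcard]; exact ht)
  rw [hcard] at h
  rw [h]
  congr 1
  · rw [hsup, Finset.prod_pair hij, Equiv.swap_apply_left, Equiv.swap_apply_right]
    exact av_mul G i j
  · rw [hsup]

lemma term_cyc_coeff {p q r : V} (hpq : p ≠ q) (hqr : q ≠ r) (hpr : p ≠ r)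
    (hn : 3 ≤ Fintype.card V) :
    (term G (cyc p q r)).coeff (Fintype.card V - 3)
      = av G p q * av G q r * av G r p := by
  have hcard : (cyc p q r).support.card = 3 := cyc_support_card hpq hqr hpr
  have h := term_coeff G (cyc p q r) 0 (by rw [hcard]; omega)
  rw [hcard, Nat.sub_zero] at h
  rw [h, (Rv_coeffs (dv G) _).1, mul_one, cyc_support hpq hqr hpr]
  rw [Finset.prod_insert (by simp [hpq, hpr]),
    Finset.prod_pair hqr, cyc_apply₁ hpq hpr, cyc_apply₂ hpq hqr hpr, cyc_apply₃ hqr]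
  rw [av_symm G q p, av_symm G r q, av_symm G p r]
  ring

/-! ### The off-diagonal / triple sums -/

lemma sum_offDiag_eq (f : V × V → ℚ) (hf : ∀ p : V × V, p.1 = p.2 → f p = 0) :
    ∑ p ∈ Finset.univ.offDiag, f p = ∑ i, ∑ j, f (i, j) := by
  have h1 : (Finset.univ.offDiag : Finset (V × V))
      = (Finset.univ ×ˢ Finset.univ).filter (fun p : V × V => p.1 ≠ p.2) := by ext p; simp [Finset.mem_offDiag]
  rw [h1, Finset.sum_filter_of_ne (p := fun p : V × V => p.1 ≠ p.2)
    (fun x _ hx => fun he => hx (hf x he)), Finset.sum_product]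

lemma sum_T3_eq (f : V × V × V → ℚ)
    (hf : ∀ x : V × V × V, x.1 = x.2.1 ∨ x.2.1 = x.2.2 ∨ x.1 = x.2.2 → f x = 0) :
    ∑ x ∈ T3 V, f x = ∑ x : V × V × V, f x := by
  rw [T3, Finset.sum_filter_of_ne
    (p := fun x : V × V × V => x.1 ≠ x.2.1 ∧ x.2.1 ≠ x.2.2 ∧ x.1 ≠ x.2.2) ?_]
  intro x _ hx
  refine ⟨fun h => hx (hf x (Or.inl h)), fun h => hx (hf x (Or.inr (Or.inl h))),
    fun h => hx (hf x (Or.inr (Or.inr h)))⟩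


/-! ### The four leading coefficients -/

lemma coeff_p0 : (lapPermPoly G).coeff (Fintype.card V) = 1 := by
  rw [perm_sum, Polynomial.finset_sum_coeff]
  rw [Finset.sum_eq_single (1 : Equiv.Perm V)]
  · have h := term_one_coeff G 0 (Nat.zero_le _)
    rw [Nat.sub_zero] at h
    rw [h, (Rv_coeffs (dv G) Finset.univ).1]
  · intro σ _ hσ
    have hc : 0 < σ.support.card := by
      rcases Nat.eq_zero_or_pos σ.support.card with h0 | h
      · exact absurd (support_card_le_one (by omega)) hσ
      · exact h
    have h := term_coeff_vanish G σ 0 hc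
    rwa [Nat.sub_zero] at h
  · intro h; exact absurd (Finset.mem_univ 1) h

lemma support_card_big {σ : Equiv.Perm V} (hσ : σ ≠ 1) (h2 : σ.support.card ≠ 2)
    (h3 : σ.support.card ≠ 3) : 3 < σ.support.card := by
  have h1 := Equiv.Perm.card_support_ne_one σ
  have h0 : σ.support.card ≠ 0 := by
    intro h
    exact hσ (support_card_le_one (by omega))
  omega

lemma coeff_p1 (hn : 1 ≤ Fintype.card V) :
    (lapPermPoly G).coeff (Fintype.card V - 1) = -2 * (G.edgeFinset.card : ℚ) := by
  rw [perm_sum, Polynomial.finset_sum_coeff]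
  rw [Finset.sum_eq_single (1 : Equiv.Perm V)]
  · rw [term_one_coeff G 1 hn, (Rv_coeffs (dv G) Finset.univ).2.1, dv_sum]
    ring
  · intro σ _ hσ
    have h1 := Equiv.Perm.card_support_ne_one σ
    have h0 : σ.support.card ≠ 0 := fun h => hσ (support_card_le_one (by omega))
    exact term_coeff_vanish G σ 1 (by omega)
  · intro h; exact absurd (Finset.mem_univ 1) h

lemma sum_av_av (hn : 2 ≤ Fintype.card V) :
    ∑ p ∈ Finset.univ.offDiag,
        (term G (Equiv.swap p.1 p.2)).coeff (Fintype.card V - 2)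
      = 2 * (G.edgeFinset.card : ℚ) := by
  have hcongr : ∀ p ∈ (Finset.univ.offDiag : Finset (V × V)),
      (term G (Equiv.swap p.1 p.2)).coeff (Fintype.card V - 2) = av G p.1 p.2 := by
    rintro ⟨i, j⟩ hp
    have hij : i ≠ j := (Finset.mem_offDiag.mp hp).2.2
    have h := term_swap_coeff G hij 0 (by omega)
    rw [Nat.sub_zero] at h
    rw [h, (Rv_coeffs (dv G) _).1, mul_one]
  rw [Finset.sum_congr rfl hcongr,
    sum_offDiag_eq (fun p => av G p.1 p.2) (fun p hp => by beta_reduce; rw [← hp]; exact av_self G p.1),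
    Finset.sum_congr rfl (fun i _ => av_row_sum G i), dv_sum]

lemma coeff_p2 (hn : 2 ≤ Fintype.card V) :
    (lapPermPoly G).coeff (Fintype.card V - 2) =
      2 * (G.edgeFinset.card : ℚ) ^ 2 + (G.edgeFinset.card : ℚ)
        - (1/2) * ∑ v, dv G v ^ 2 := by
  rw [perm_sum, Polynomial.finset_sum_coeff,
    ← Finset.sum_filter_add_sum_filter_not Finset.univ
      (fun σ : Equiv.Perm V => σ.support.card = 2)
      (fun σ => (term G σ).coeff (Fintype.card V - 2))]
  have hrest : ∑ σ ∈ Finset.univ.filter (fun σ : Equiv.Perm V => ¬ σ.support.card = 2),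
      (term G σ).coeff (Fintype.card V - 2)
        = ((∑ i, dv G i)^2 - ∑ i, dv G i ^ 2)/2 := by
    rw [Finset.sum_eq_single_of_mem (1 : Equiv.Perm V)
      (Finset.mem_filter.mpr ⟨Finset.mem_univ _,
        by simp only [Equiv.Perm.support_one, Finset.card_empty]; omega⟩)]
    · rw [term_one_coeff G 2 hn, (Rv_coeffs (dv G) Finset.univ).2.2.1]
    · intro σ hσ hσ1
      have h2 : σ.support.card ≠ 2 := by
        simpa using (Finset.mem_filter.mp hσ).2
      rcases eq_or_ne σ.support.card 3 with h3 | h3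
      · exact term_coeff_vanish G σ 2 (by omega)
      · exact term_coeff_vanish G σ 2 (by have := support_card_big hσ1 h2 h3; omega)
  have hswap := (sum_swap_fiberwise (fun σ : Equiv.Perm V =>
    (term G σ).coeff (Fintype.card V - 2))).symm
  rw [sum_av_av G hn] at hswap
  rw [hrest, dv_sum]
  linear_combination (1/2) * hswap

lemma sum_swap3 (hn : 3 ≤ Fintype.card V) :
    ∑ p ∈ Finset.univ.offDiag,
        (term G (Equiv.swap p.1 p.2)).coeff (Fintype.card V - 3)
      = -(2 * (G.edgeFinset.card : ℚ)) * (2 * (G.edgeFinset.card : ℚ))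
        + 2 * ∑ i, dv G i ^ 2 := by
  have hcongr : ∀ p ∈ (Finset.univ.offDiag : Finset (V × V)),
      (term G (Equiv.swap p.1 p.2)).coeff (Fintype.card V - 3)
        = -(2 * (G.edgeFinset.card : ℚ)) * av G p.1 p.2
          + av G p.1 p.2 * dv G p.1 + av G p.1 p.2 * dv G p.2 := by
    rintro ⟨i, j⟩ hp
    have hij : i ≠ j := (Finset.mem_offDiag.mp hp).2.2
    have h := term_swap_coeff G hij 1 (by omega)
    have h3 : Fintype.card V - 2 - 1 = Fintype.card V - 3 := by omega
    rw [h3] at h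
    have hcompl : ∑ x ∈ (({i, j} : Finset V)ᶜ), dv G x
        = 2 * (G.edgeFinset.card : ℚ) - (dv G i + dv G j) := by
      have hs := Finset.sum_add_sum_compl ({i, j} : Finset V) (dv G)
      rw [Finset.sum_pair hij] at hs
      rw [← dv_sum G]
      linarith
    rw [h, (Rv_coeffs (dv G) _).2.1, hcompl]
    ring
  rw [Finset.sum_congr rfl hcongr,
    sum_offDiag_eq _ (fun p hp => by beta_reduce; rw [← hp]; simp [av_self]),
    Finset.sum_congr rfl (fun i _ => Finset.sum_add_distrib),
    Finset.sum_add_distrib,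
    Finset.sum_congr rfl (fun i _ => Finset.sum_add_distrib),
    Finset.sum_add_distrib]
  have hA : ∑ i, ∑ j, -(2 * (G.edgeFinset.card : ℚ)) * av G i j
      = -(2 * (G.edgeFinset.card : ℚ)) * (2 * (G.edgeFinset.card : ℚ)) := by
    simp only [← Finset.mul_sum]
    rw [Finset.sum_congr rfl (fun i _ => av_row_sum G i), dv_sum]
  rw [hA, dv_sq_sum, dv_sq_sum']
  ring

lemma coeff_p3 (hn : 3 ≤ Fintype.card V) :
    (lapPermPoly G).coeff (Fintype.card V - 3) =
      -(1/3) * ∑ v, dv G v ^ 3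
        + ((G.edgeFinset.card : ℚ) + 1) * ∑ v, dv G v ^ 2
        - (4/3) * (G.edgeFinset.card : ℚ) ^ 3 - 2 * (G.edgeFinset.card : ℚ) ^ 2
        + 2 * ((G.cliqueFinset 3).card : ℚ) := by
  rw [perm_sum, Polynomial.finset_sum_coeff,
    ← Finset.sum_filter_add_sum_filter_not Finset.univ
      (fun σ : Equiv.Perm V => σ.support.card = 3)
      (fun σ => (term G σ).coeff (Fintype.card V - 3)),
    ← Finset.sum_filter_add_sum_filter_not
      (Finset.univ.filter (fun σ : Equiv.Perm V => ¬ σ.support.card = 3))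
      (fun σ : Equiv.Perm V => σ.support.card = 2)
      (fun σ => (term G σ).coeff (Fintype.card V - 3))]
  -- the three pieces
  have hfe : (Finset.univ.filter (fun σ : Equiv.Perm V => ¬ σ.support.card = 3)).filter
      (fun σ : Equiv.Perm V => σ.support.card = 2)
        = Finset.univ.filter (fun σ : Equiv.Perm V => σ.support.card = 2) := by
    ext σ
    simp only [Finset.mem_filter, Finset.mem_univ, true_and]
    omega
  -- 3-cycles
  have hcyc := (sum_cyc_fiberwise (fun σ : Equiv.Perm V =>
    (term G σ).coeff (Fintype.card V - 3))).symm
  have hcyc2 : ∑ x ∈ T3 V, (term G (cyc x.1 x.2.1 x.2.2)).coeff (Fintype.card V - 3)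
      = 6 * ((G.cliqueFinset 3).card : ℚ) := by
    have hcongr : ∀ x ∈ T3 V, (term G (cyc x.1 x.2.1 x.2.2)).coeff (Fintype.card V - 3)
        = av G x.1 x.2.1 * av G x.2.1 x.2.2 * av G x.2.2 x.1 := by
      rintro ⟨p, q, r⟩ hx
      obtain ⟨hpq, hqr, hpr⟩ : p ≠ q ∧ q ≠ r ∧ p ≠ r := by simpa [T3] using hx
      exact term_cyc_coeff G hpq hqr hpr hn
    rw [Finset.sum_congr rfl hcongr, sum_T3_eq, triangle_sum]
    rintro ⟨p, q, r⟩ h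
    rcases h with h | h | h <;> (simp only at h; subst h; simp [av_self])
  rw [hcyc2] at hcyc
  -- swaps
  have hswap := (sum_swap_fiberwise (fun σ : Equiv.Perm V =>
    (term G σ).coeff (Fintype.card V - 3))).symm
  rw [sum_swap3 G hn] at hswap
  rw [hfe]
  -- identity
  have hrest : ∑ σ ∈ (Finset.univ.filter
        (fun σ : Equiv.Perm V => ¬ σ.support.card = 3)).filter
        (fun σ : Equiv.Perm V => ¬ σ.support.card = 2),
      (term G σ).coeff (Fintype.card V - 3)
        = -((∑ i, dv G i)^3 - 3*(∑ i, dv G i)*(∑ i, dv G i ^ 2)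
            + 2*∑ i, dv G i ^ 3)/6 := by
    rw [Finset.sum_eq_single_of_mem (1 : Equiv.Perm V)
      (Finset.mem_filter.mpr ⟨Finset.mem_filter.mpr ⟨Finset.mem_univ _,
          by simp only [Equiv.Perm.support_one, Finset.card_empty]; omega⟩,
        by simp only [Equiv.Perm.support_one, Finset.card_empty]; omega⟩)]
    · rw [term_one_coeff G 3 hn, (Rv_coeffs (dv G) Finset.univ).2.2.2]
    · intro σ hσ hσ1
      simp only [Finset.mem_filter, Finset.mem_univ, true_and] at hσ
      exact term_coeff_vanish G σ 3 (support_card_big hσ1 hσ.2 hσ.1)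
  rw [hrest, dv_sum]
  linear_combination (1/3) * hcyc + (1/2) * hswap

end LPP

/-- **Lemma 2.1.** The four leading coefficients of the Laplacian permanental
polynomial `π = ∑ᵢ pᵢ xⁿ⁻ⁱ` of a graph `G` with `n` vertices, `m` edges and degrees `dᵢ`:
`p₀ = 1`, `p₁ = −2m`, `p₂ = 2m² + m − (1/2)∑dᵢ²`, and
`p₃ = −(1/3)∑dᵢ³ + (m+1)∑dᵢ² − (4/3)m³ − 2m² + 2c₃(G)`. -/
theorem lapPermPoly_coeffs
    {V : Type*} [Fintype V] (G : SimpleGraph V) :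
    (lapPermPoly G).coeff (Fintype.card V) = 1 ∧
    (1 ≤ Fintype.card V →
      (lapPermPoly G).coeff (Fintype.card V - 1) = -2 * (G.edgeFinset.card : ℚ)) ∧
    (2 ≤ Fintype.card V →
      (lapPermPoly G).coeff (Fintype.card V - 2) =
        2 * (G.edgeFinset.card : ℚ) ^ 2 + (G.edgeFinset.card : ℚ)
          - (1/2) * ∑ v, (G.degree v : ℚ) ^ 2) ∧
    (3 ≤ Fintype.card V →
      (lapPermPoly G).coeff (Fintype.card V - 3) =
        -(1/3) * ∑ v, (G.degree v : ℚ) ^ 3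
          + ((G.edgeFinset.card : ℚ) + 1) * ∑ v, (G.degree v : ℚ) ^ 2
          - (4/3) * (G.edgeFinset.card : ℚ) ^ 3 - 2 * (G.edgeFinset.card : ℚ) ^ 2
          + 2 * (triangleCount G : ℚ)) := by
  refine ⟨LPP.coeff_p0 G, fun hn => LPP.coeff_p1 G hn, fun hn => ?_, fun hn => ?_⟩
  · have h := LPP.coeff_p2 G hn
    simpa only [LPP.dv] using h
  · have h := LPP.coeff_p3 G hn
    rw [triangleCount]
    simpa only [LPP.dv] using h
end
end

section
/- Let G be a simple graph with n vertices, m edges and degree sequence (d_1, …, d_n), and write its signless Laplacian permanental polynomial as π(Q(G); x) = Σ_i q_i(G) x^{n−i}. Then: (i) q_0(G) = 1; (ii) q_1(G) = −2m; (iii) q_2(G) = 2m² + m − (1/2) Σ_i d_i²; and (iv) q_3(G) = −(1/3) Σ_i d_i³ + (m+1) Σ_i d_i² − (4/3)m³ − 2m² − 2c₃(G), where c₃(G) is the number of triangles in G. -/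
open scoped Classical
open Polynomial

noncomputable section

set_option linter.unusedSectionVars false
set_option linter.unusedVariables false
set_option linter.unusedTactic false
set_option maxHeartbeats 2000000

namespace QPermAux

variable {V : Type*} [Fintype V]

/-- Rational adjacency indicator. -/
def aQ (G : SimpleGraph V) (u v : V) : ℚ := if G.Adj u v then 1 else 0

variable (G : SimpleGraph V)

lemma aQ_comm (u v : V) : aQ G u v = aQ G v u := by
  simp [aQ, SimpleGraph.adj_comm]

lemma aQ_self (u : V) : aQ G u u = 0 := by simp [aQ]

lemma sum_aQ (u : V) : ∑ v, aQ G u v = (G.degree u : ℚ) := by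
  simp [aQ, Finset.sum_boole, SimpleGraph.degree, SimpleGraph.neighborFinset_eq_filter]

lemma slm_diag (v : V) : signlessLapMatrix G v v = (G.degree v : ℚ) := by
  simp [signlessLapMatrix, SimpleGraph.degMatrix, Matrix.add_apply]

lemma slm_off {u v : V} (h : u ≠ v) : signlessLapMatrix G u v = aQ G u v := by
  simp [signlessLapMatrix, SimpleGraph.degMatrix, Matrix.add_apply,
    Matrix.diagonal_apply_ne _ h, aQ]

/-- permutations supported inside `T` -/
def permsOn (T : Finset V) : Finset (Equiv.Perm V) :=
  Finset.univ.filter fun σ => ∀ i ∉ T, σ i = i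

lemma mem_permsOn {T : Finset V} {σ : Equiv.Perm V} :
    σ ∈ permsOn T ↔ ∀ i ∉ T, σ i = i := by
  simp [permsOn]

lemma permsOn_maps {T : Finset V} {σ : Equiv.Perm V} (h : σ ∈ permsOn T) {i : V}
    (hi : i ∈ T) : σ i ∈ T := by
  by_contra hc
  have h3 : σ i = i := σ.injective (mem_permsOn.1 h _ hc)
  rw [h3] at hc
  exact hc hi

lemma permsOn_ext {T : Finset V} {σ τ : Equiv.Perm V} (hσ : σ ∈ permsOn T)
    (hτ : τ ∈ permsOn T) (h : ∀ i ∈ T, σ i = τ i) : σ = τ := by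
  ext i
  by_cases hi : i ∈ T
  · exact h i hi
  · rw [mem_permsOn.1 hσ i hi, mem_permsOn.1 hτ i hi]

lemma one_mem_permsOn (T : Finset V) : (1 : Equiv.Perm V) ∈ permsOn T :=
  mem_permsOn.2 fun _ _ => rfl

lemma swap_mem_permsOn {T : Finset V} {a b : V} (ha : a ∈ T) (hb : b ∈ T) :
    Equiv.swap a b ∈ permsOn T :=
  mem_permsOn.2 fun i hi =>
    Equiv.swap_apply_of_ne_of_ne (fun h => hi (h ▸ ha)) (fun h => hi (h ▸ hb))

lemma mul_mem_permsOn {T : Finset V} {σ τ : Equiv.Perm V} (hσ : σ ∈ permsOn T)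
    (hτ : τ ∈ permsOn T) : σ * τ ∈ permsOn T :=
  mem_permsOn.2 fun i hi => by
    rw [Equiv.Perm.mul_apply, mem_permsOn.1 hτ i hi, mem_permsOn.1 hσ i hi]

lemma permsOn_empty : permsOn (∅ : Finset V) = {1} := by
  ext σ
  simp only [Finset.mem_singleton]
  constructor
  · intro h
    exact permsOn_ext h (one_mem_permsOn _) (by simp)
  · rintro rfl; exact one_mem_permsOn _

lemma permsOn_singleton (a : V) : permsOn ({a} : Finset V) = {1} := by
  ext σ
  simp only [Finset.mem_singleton]
  constructor
  · intro h
    refine permsOn_ext h (one_mem_permsOn _) ?_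
    intro i hi
    rw [Finset.mem_singleton] at hi
    subst hi
    have := permsOn_maps h (Finset.mem_singleton_self i)
    simpa using this
  · rintro rfl; exact one_mem_permsOn _

lemma permsOn_pair {a b : V} (hab : a ≠ b) :
    permsOn ({a, b} : Finset V) = {1, Equiv.swap a b} := by
  have haT : a ∈ ({a, b} : Finset V) := by simp
  have hbT : b ∈ ({a, b} : Finset V) := by simp
  ext σ
  simp only [Finset.mem_insert, Finset.mem_singleton]
  constructor
  · intro h
    have ha := permsOn_maps h haT
    have hb := permsOn_maps h hbT
    simp only [Finset.mem_insert, Finset.mem_singleton] at ha hb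
    have dab : σ a ≠ σ b := fun h' => hab (σ.injective h')
    rcases ha with ha | ha
    · left
      refine permsOn_ext h (one_mem_permsOn _) ?_
      intro i hi
      simp only [Finset.mem_insert, Finset.mem_singleton] at hi
      have hb' : σ b = b := by
        rcases hb with hb | hb
        · exact absurd (ha.trans hb.symm) dab
        · exact hb
      rcases hi with rfl | rfl <;> simpa
    · right
      have hb' : σ b = a := by
        rcases hb with hb | hb
        · exact hb
        · exact absurd (ha.trans hb.symm) dab
      refine permsOn_ext h (swap_mem_permsOn haT hbT) ?_
      intro i hi
      simp only [Finset.mem_insert, Finset.mem_singleton] at hi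
      rcases hi with rfl | rfl
      · rw [ha, Equiv.swap_apply_left]
      · rw [hb', Equiv.swap_apply_right]
  · rintro (rfl | rfl)
    · exact one_mem_permsOn _
    · exact swap_mem_permsOn haT hbT

lemma permsOn_triple {a b c : V} (hab : a ≠ b) (hac : a ≠ c) (hbc : b ≠ c) :
    permsOn ({a, b, c} : Finset V) =
      {1, Equiv.swap a b, Equiv.swap a c, Equiv.swap b c,
        Equiv.swap a c * Equiv.swap a b, Equiv.swap a b * Equiv.swap a c} := by
  have haT : a ∈ ({a, b, c} : Finset V) := by simp
  have hbT : b ∈ ({a, b, c} : Finset V) := by simp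
  have hcT : c ∈ ({a, b, c} : Finset V) := by simp
  have s1a : Equiv.swap a b a = b := Equiv.swap_apply_left a b
  have s1b : Equiv.swap a b b = a := Equiv.swap_apply_right a b
  have s1c : Equiv.swap a b c = c := Equiv.swap_apply_of_ne_of_ne hac.symm hbc.symm
  have s2a : Equiv.swap a c a = c := Equiv.swap_apply_left a c
  have s2b : Equiv.swap a c b = b := Equiv.swap_apply_of_ne_of_ne hab.symm hbc
  have s2c : Equiv.swap a c c = a := Equiv.swap_apply_right a c
  have s3a : Equiv.swap b c a = a := Equiv.swap_apply_of_ne_of_ne hab hac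
  have s3b : Equiv.swap b c b = c := Equiv.swap_apply_left b c
  have s3c : Equiv.swap b c c = b := Equiv.swap_apply_right b c
  have r1a : (Equiv.swap a c * Equiv.swap a b) a = b := by
    rw [Equiv.Perm.mul_apply, s1a, s2b]
  have r1b : (Equiv.swap a c * Equiv.swap a b) b = c := by
    rw [Equiv.Perm.mul_apply, s1b, s2a]
  have r1c : (Equiv.swap a c * Equiv.swap a b) c = a := by
    rw [Equiv.Perm.mul_apply, s1c, s2c]
  have r2a : (Equiv.swap a b * Equiv.swap a c) a = c := by
    rw [Equiv.Perm.mul_apply, s2a, s1c]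
  have r2b : (Equiv.swap a b * Equiv.swap a c) b = a := by
    rw [Equiv.Perm.mul_apply, s2b, s1b]
  have r2c : (Equiv.swap a b * Equiv.swap a c) c = b := by
    rw [Equiv.Perm.mul_apply, s2c, s1a]
  ext σ
  simp only [Finset.mem_insert, Finset.mem_singleton]
  constructor
  · intro h
    have key : ∀ τ : Equiv.Perm V, τ ∈ permsOn ({a, b, c} : Finset V) →
        σ a = τ a → σ b = τ b → σ c = τ c → σ = τ := by
      intro τ hτ h1 h2 h3
      refine permsOn_ext h hτ ?_
      intro i hi
      simp only [Finset.mem_insert, Finset.mem_singleton] at hi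
      rcases hi with rfl | rfl | rfl <;> assumption
    have ha := permsOn_maps h haT
    have hb := permsOn_maps h hbT
    have hc := permsOn_maps h hcT
    simp only [Finset.mem_insert, Finset.mem_singleton] at ha hb hc
    have dab : σ a ≠ σ b := fun h' => hab (σ.injective h')
    have dac : σ a ≠ σ c := fun h' => hac (σ.injective h')
    have dbc : σ b ≠ σ c := fun h' => hbc (σ.injective h')
    rcases ha with ha | ha | ha
    · rcases hb with hb | hb | hb
      · exact absurd (ha.trans hb.symm) dab
      · have hc' : σ c = c := by
          rcases hc with hc | hc | hc
          · exact absurd (ha.trans hc.symm) dac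
          · exact absurd (hb.trans hc.symm) dbc
          · exact hc
        exact Or.inl (key 1 (one_mem_permsOn _) (by simpa using ha) (by simpa using hb)
          (by simpa using hc'))
      · have hc' : σ c = b := by
          rcases hc with hc | hc | hc
          · exact absurd (ha.trans hc.symm) dac
          · exact hc
          · exact absurd (hb.trans hc.symm) dbc
        refine Or.inr (Or.inr (Or.inr (Or.inl (key _ (swap_mem_permsOn hbT hcT) ?_ ?_ ?_))))
        · rw [ha, s3a]
        · rw [hb, s3b]
        · rw [hc', s3c]
    · rcases hb with hb | hb | hb
      · have hc' : σ c = c := by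
          rcases hc with hc | hc | hc
          · exact absurd (hb.trans hc.symm) dbc
          · exact absurd (ha.trans hc.symm) dac
          · exact hc
        refine Or.inr (Or.inl (key _ (swap_mem_permsOn haT hbT) ?_ ?_ ?_))
        · rw [ha, s1a]
        · rw [hb, s1b]
        · rw [hc', s1c]
      · exact absurd (ha.trans hb.symm) dab
      · have hc' : σ c = a := by
          rcases hc with hc | hc | hc
          · exact hc
          · exact absurd (ha.trans hc.symm) dac
          · exact absurd (hb.trans hc.symm) dbc
        refine Or.inr (Or.inr (Or.inr (Or.inr (Or.inl
          (key _ (mul_mem_permsOn (swap_mem_permsOn haT hcT) (swap_mem_permsOn haT hbT))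
            ?_ ?_ ?_)))))
        · rw [ha, r1a]
        · rw [hb, r1b]
        · rw [hc', r1c]
    · rcases hb with hb | hb | hb
      · have hc' : σ c = b := by
          rcases hc with hc | hc | hc
          · exact absurd (hb.trans hc.symm) dbc
          · exact hc
          · exact absurd (ha.trans hc.symm) dac
        refine Or.inr (Or.inr (Or.inr (Or.inr (Or.inr
          (key _ (mul_mem_permsOn (swap_mem_permsOn haT hbT) (swap_mem_permsOn haT hcT))
            ?_ ?_ ?_)))))
        · rw [ha, r2a]
        · rw [hb, r2b]
        · rw [hc', r2c]
      · have hc' : σ c = a := by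
          rcases hc with hc | hc | hc
          · exact hc
          · exact absurd (hb.trans hc.symm) dbc
          · exact absurd (ha.trans hc.symm) dac
        refine Or.inr (Or.inr (Or.inl (key _ (swap_mem_permsOn haT hcT) ?_ ?_ ?_)))
        · rw [ha, s2a]
        · rw [hb, s2b]
        · rw [hc', s2c]
      · exact absurd (ha.trans hb.symm) dab
  · rintro (rfl | rfl | rfl | rfl | rfl | rfl)
    · exact one_mem_permsOn _
    · exact swap_mem_permsOn haT hbT
    · exact swap_mem_permsOn haT hcT
    · exact swap_mem_permsOn hbT hcT
    · exact mul_mem_permsOn (swap_mem_permsOn haT hcT) (swap_mem_permsOn haT hbT)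
    · exact mul_mem_permsOn (swap_mem_permsOn haT hbT) (swap_mem_permsOn haT hcT)

/-- The sum over permutations supported in `T` of products of entries of `Q(G)`. -/
def PP (G : SimpleGraph V) (T : Finset V) : ℚ :=
  ∑ σ ∈ permsOn T, ∏ i ∈ T, signlessLapMatrix G (σ i) i

lemma prod_neg' (s : Finset V) (f : V → Polynomial ℚ) :
    ∏ i ∈ s, (-f i) = (-1) ^ s.card * ∏ i ∈ s, f i := by
  rw [← Finset.prod_const (-1 : Polynomial ℚ), ← Finset.prod_mul_distrib]
  exact Finset.prod_congr rfl fun i _ => by ring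

lemma qPermPoly_eq :
    qPermPoly G = ∑ T : Finset V,
      Polynomial.C ((-1) ^ T.card * PP G T) * X ^ (Fintype.card V - T.card) := by
  unfold qPermPoly Matrix.permanent
  have hentry : ∀ (σ : Equiv.Perm V) (i : V),
      (Matrix.diagonal (fun _ : V => (X : Polynomial ℚ))
        - (signlessLapMatrix G).map Polynomial.C) (σ i) i
      = (if σ i = i then (X : Polynomial ℚ) else 0)
        + (- Polynomial.C (signlessLapMatrix G (σ i) i)) := by
    intro σ i
    simp [Matrix.sub_apply, Matrix.map_apply, Matrix.diagonal_apply, sub_eq_add_neg]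
  simp_rw [hentry, Finset.prod_add, Finset.powerset_univ]
  have hprod : ∀ (σ : Equiv.Perm V) (t : Finset V),
      (∏ i ∈ t, if σ i = i then (X : Polynomial ℚ) else 0)
        = if ∀ i ∈ t, σ i = i then X ^ t.card else 0 := by
    intro σ t
    by_cases h : ∀ i ∈ t, σ i = i
    · rw [if_pos h, Finset.prod_congr rfl fun i hi => if_pos (h i hi), Finset.prod_const]
    · push_neg at h
      obtain ⟨i, hi, hne⟩ := h
      rw [if_neg (by push_neg; exact ⟨i, hi, hne⟩)]
      exact Finset.prod_eq_zero hi (if_neg hne)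
  simp_rw [hprod]
  rw [Finset.sum_comm]
  refine Fintype.sum_bijective compl
    (Function.Involutive.bijective fun s : Finset V => compl_compl s) _ _ fun t => ?_
  have hcond : ∀ σ : Equiv.Perm V, (∀ i ∈ t, σ i = i) ↔ (∀ i ∉ tᶜ, σ i = i) := by
    intro σ
    constructor
    · intro h i hi
      exact h i (by simpa using hi)
    · intro h i hi
      exact h i (by simpa using hi)
  have hsd : (Finset.univ : Finset V) \ t = tᶜ := (Finset.compl_eq_univ_sdiff t).symm
  have hcard : t.card = Fintype.card V - tᶜ.card := by
    have h1 : tᶜ.card = Fintype.card V - t.card := Finset.card_compl t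
    have h2 : t.card ≤ Fintype.card V := Finset.card_le_univ t
    omega
  simp_rw [hsd]
  calc ∑ σ : Equiv.Perm V,
        (if ∀ i ∈ t, σ i = i then (X : Polynomial ℚ) ^ t.card else 0)
          * ∏ i ∈ tᶜ, -Polynomial.C (signlessLapMatrix G (σ i) i)
      = ∑ σ ∈ permsOn tᶜ,
          (X : Polynomial ℚ) ^ t.card
            * ((-1) ^ tᶜ.card * Polynomial.C (∏ i ∈ tᶜ, signlessLapMatrix G (σ i) i)) := by
        rw [permsOn, Finset.sum_filter]
        refine Finset.sum_congr rfl fun σ _ => ?_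
        by_cases h : ∀ i ∈ t, σ i = i
        · rw [if_pos h, if_pos ((hcond σ).1 h), prod_neg', map_prod]
        · rw [if_neg h, if_neg (fun hh => h ((hcond σ).2 hh)), zero_mul]
    _ = Polynomial.C ((-1) ^ tᶜ.card * PP G tᶜ) * X ^ (Fintype.card V - tᶜ.card) := by
        rw [PP, ← hcard]
        simp only [map_mul, map_sum, map_pow, map_neg, map_one, Finset.mul_sum,
          Finset.sum_mul]
        exact Finset.sum_congr rfl fun σ _ => by ring

lemma coeff_qPermPoly {k : ℕ} (hk : k ≤ Fintype.card V) :
    (qPermPoly G).coeff (Fintype.card V - k)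
      = (-1) ^ k * ∑ T ∈ Finset.powersetCard k (Finset.univ : Finset V), PP G T := by
  rw [qPermPoly_eq, Polynomial.finset_sum_coeff]
  simp only [Polynomial.coeff_C_mul, Polynomial.coeff_X_pow]
  have hcond : ∀ T : Finset V,
      (Fintype.card V - k = Fintype.card V - T.card) ↔ T.card = k := by
    intro T
    have := Finset.card_le_univ T
    omega
  calc ∑ T : Finset V,
        (-1) ^ T.card * PP G T
          * (if Fintype.card V - k = Fintype.card V - T.card then (1:ℚ) else 0)
      = ∑ T : Finset V, (if T.card = k then (-1) ^ k * PP G T else 0) := by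
        refine Finset.sum_congr rfl fun T _ => ?_
        by_cases h : T.card = k
        · rw [if_pos ((hcond T).2 h), if_pos h, h]; ring
        · rw [if_neg (fun hh => h ((hcond T).1 hh)), if_neg h]; ring
    _ = ∑ T ∈ Finset.univ.filter (fun T : Finset V => T.card = k), (-1) ^ k * PP G T :=
        (Finset.sum_filter _ _).symm
    _ = (-1) ^ k * ∑ T ∈ Finset.powersetCard k (Finset.univ : Finset V), PP G T := by
        rw [← Finset.mul_sum]
        congr 1
        refine Finset.sum_congr ?_ fun _ _ => rfl
        ext T
        simp [Finset.mem_powersetCard_univ]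

lemma sum_powersetCard_succ (s : Finset V) (k : ℕ) (F : Finset V → ℚ) :
    ∑ a ∈ s, ∑ t ∈ (s.erase a).powersetCard k, F (insert a t)
      = (k + 1 : ℚ) * ∑ t ∈ s.powersetCard (k + 1), F t := by
  rw [Finset.mul_sum]
  have hstep : ∀ t ∈ s.powersetCard (k + 1), (k + 1 : ℚ) * F t = ∑ a ∈ t, F t := by
    intro t ht
    rw [Finset.sum_const, (Finset.mem_powersetCard.1 ht).2]
    push_cast
    ring
  rw [Finset.sum_congr rfl hstep, Finset.sum_sigma', Finset.sum_sigma']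
  refine Finset.sum_nbij' (fun p => ⟨insert p.1 p.2, p.1⟩) (fun q => ⟨q.2, q.1.erase q.2⟩)
    ?_ ?_ ?_ ?_ ?_
  · rintro ⟨a, t⟩ hp
    simp only [Finset.mem_sigma] at hp ⊢
    obtain ⟨ha, ht⟩ := hp
    obtain ⟨hsub, hcard⟩ := Finset.mem_powersetCard.1 ht
    have hat : a ∉ t := fun h => (Finset.mem_erase.1 (hsub h)).1 rfl
    refine ⟨Finset.mem_powersetCard.2 ⟨?_, ?_⟩, Finset.mem_insert_self _ _⟩
    · exact Finset.insert_subset ha (hsub.trans (Finset.erase_subset _ _))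
    · rw [Finset.card_insert_of_notMem hat, hcard]
  · rintro ⟨t, a⟩ hq
    simp only [Finset.mem_sigma] at hq ⊢
    obtain ⟨ht, ha⟩ := hq
    obtain ⟨hsub, hcard⟩ := Finset.mem_powersetCard.1 ht
    refine ⟨hsub ha, Finset.mem_powersetCard.2 ⟨Finset.erase_subset_erase _ hsub, ?_⟩⟩
    rw [Finset.card_erase_of_mem ha, hcard]
    omega
  · rintro ⟨a, t⟩ hp
    simp only [Finset.mem_sigma] at hp
    obtain ⟨ha, ht⟩ := hp
    obtain ⟨hsub, hcard⟩ := Finset.mem_powersetCard.1 ht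
    have hat : a ∉ t := fun h => (Finset.mem_erase.1 (hsub h)).1 rfl
    simp [Finset.erase_insert hat]
  · rintro ⟨t, a⟩ hq
    simp only [Finset.mem_sigma] at hq
    simp [Finset.insert_erase hq.2]
  · rintro ⟨a, t⟩ hp
    rfl

lemma sum_pCard1 (s : Finset V) (F : Finset V → ℚ) :
    ∑ t ∈ s.powersetCard 1, F t = ∑ b ∈ s, F {b} := by
  rw [Finset.powersetCard_one, Finset.sum_map]
  rfl

lemma sum_pCard2 (s : Finset V) (F : Finset V → ℚ) :
    ∑ t ∈ s.powersetCard 2, F t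
      = (1 / 2 : ℚ) * ∑ a ∈ s, ∑ b ∈ s.erase a, F {a, b} := by
  have h := sum_powersetCard_succ s 1 F
  have h2 : ∀ a ∈ s, ∑ t ∈ (s.erase a).powersetCard 1, F (insert a t)
      = ∑ b ∈ s.erase a, F {a, b} := fun a _ => sum_pCard1 _ _
  rw [Finset.sum_congr rfl h2] at h
  norm_num at h
  linarith

lemma sum_pCard3 (s : Finset V) (F : Finset V → ℚ) :
    ∑ t ∈ s.powersetCard 3, F t
      = (1 / 6 : ℚ) * ∑ a ∈ s, ∑ b ∈ s.erase a, ∑ c ∈ (s.erase a).erase b, F {a, b, c} := by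
  have h := sum_powersetCard_succ s 2 F
  have h2 : ∀ a ∈ s, ∑ t ∈ (s.erase a).powersetCard 2, F (insert a t)
      = (1 / 2 : ℚ) * ∑ b ∈ s.erase a, ∑ c ∈ (s.erase a).erase b, F {a, b, c} :=
    fun a _ => sum_pCard2 _ _
  rw [Finset.sum_congr rfl h2, ← Finset.mul_sum] at h
  norm_num at h
  linarith

lemma PP_empty : PP G (∅ : Finset V) = 1 := by
  rw [PP, permsOn_empty]
  simp

lemma PP_singleton (a : V) : PP G ({a} : Finset V) = (G.degree a : ℚ) := by
  rw [PP, permsOn_singleton]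
  simp [slm_diag]

lemma PP_pair {a b : V} (hab : a ≠ b) :
    PP G ({a, b} : Finset V) = (G.degree a : ℚ) * (G.degree b : ℚ) + aQ G a b := by
  rw [PP, permsOn_pair hab]
  have s1a : Equiv.swap a b a = b := Equiv.swap_apply_left a b
  have s1b : Equiv.swap a b b = a := Equiv.swap_apply_right a b
  have hne1 : (1 : Equiv.Perm V) ≠ Equiv.swap a b := by
    intro h
    apply hab
    have := congrArg (fun σ : Equiv.Perm V => σ a) h
    simpa [s1a] using this
  rw [Finset.sum_pair hne1]
  have hprodab : ∀ f : V → ℚ, ∏ i ∈ ({a, b} : Finset V), f i = f a * f b :=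
    fun f => Finset.prod_pair hab
  simp only [hprodab, Equiv.Perm.one_apply, s1a, s1b]
  rw [slm_diag, slm_diag, slm_off G hab.symm, slm_off G hab, aQ_comm G b a]
  have : aQ G a b * aQ G a b = aQ G a b := by
    by_cases h : G.Adj a b <;> simp [aQ, h]
  rw [this]

lemma PP_triple {a b c : V} (hab : a ≠ b) (hac : a ≠ c) (hbc : b ≠ c) :
    PP G ({a, b, c} : Finset V)
      = (G.degree a : ℚ) * (G.degree b : ℚ) * (G.degree c : ℚ)
        + (G.degree a : ℚ) * aQ G b c + (G.degree b : ℚ) * aQ G a c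
        + (G.degree c : ℚ) * aQ G a b
        + 2 * (aQ G a b * (aQ G b c * aQ G a c)) := by
  rw [PP, permsOn_triple hab hac hbc]
  have s1a : Equiv.swap a b a = b := Equiv.swap_apply_left a b
  have s1b : Equiv.swap a b b = a := Equiv.swap_apply_right a b
  have s1c : Equiv.swap a b c = c := Equiv.swap_apply_of_ne_of_ne hac.symm hbc.symm
  have s2a : Equiv.swap a c a = c := Equiv.swap_apply_left a c
  have s2b : Equiv.swap a c b = b := Equiv.swap_apply_of_ne_of_ne hab.symm hbc
  have s2c : Equiv.swap a c c = a := Equiv.swap_apply_right a c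
  have s3a : Equiv.swap b c a = a := Equiv.swap_apply_of_ne_of_ne hab hac
  have s3b : Equiv.swap b c b = c := Equiv.swap_apply_left b c
  have s3c : Equiv.swap b c c = b := Equiv.swap_apply_right b c
  have r1a : (Equiv.swap a c * Equiv.swap a b) a = b := by
    rw [Equiv.Perm.mul_apply, s1a, s2b]
  have r1b : (Equiv.swap a c * Equiv.swap a b) b = c := by
    rw [Equiv.Perm.mul_apply, s1b, s2a]
  have r1c : (Equiv.swap a c * Equiv.swap a b) c = a := by
    rw [Equiv.Perm.mul_apply, s1c, s2c]
  have r2a : (Equiv.swap a b * Equiv.swap a c) a = c := by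
    rw [Equiv.Perm.mul_apply, s2a, s1c]
  have r2b : (Equiv.swap a b * Equiv.swap a c) b = a := by
    rw [Equiv.Perm.mul_apply, s2b, s1b]
  have r2c : (Equiv.swap a b * Equiv.swap a c) c = b := by
    rw [Equiv.Perm.mul_apply, s2c, s1a]
  have hne : ∀ (σ τ : Equiv.Perm V) (w : V), σ w ≠ τ w → σ ≠ τ :=
    fun σ τ w h heq => h (by rw [heq])
  have one_a : (1 : Equiv.Perm V) a = a := rfl
  have one_b : (1 : Equiv.Perm V) b = b := rfl
  have ne01 : (1 : Equiv.Perm V) ≠ Equiv.swap a b := hne _ _ a (by rw [one_a, s1a]; exact hab)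
  have ne02 : (1 : Equiv.Perm V) ≠ Equiv.swap a c := hne _ _ a (by rw [one_a, s2a]; exact hac)
  have ne03 : (1 : Equiv.Perm V) ≠ Equiv.swap b c := hne _ _ b (by rw [one_b, s3b]; exact hbc)
  have ne04 : (1 : Equiv.Perm V) ≠ Equiv.swap a c * Equiv.swap a b :=
    hne _ _ a (by rw [one_a, r1a]; exact hab)
  have ne05 : (1 : Equiv.Perm V) ≠ Equiv.swap a b * Equiv.swap a c :=
    hne _ _ a (by rw [one_a, r2a]; exact hac)
  have ne12 : Equiv.swap a b ≠ Equiv.swap a c := hne _ _ a (by rw [s1a, s2a]; exact hbc)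
  have ne13 : Equiv.swap a b ≠ Equiv.swap b c := hne _ _ a (by rw [s1a, s3a]; exact hab.symm)
  have ne14 : Equiv.swap a b ≠ Equiv.swap a c * Equiv.swap a b :=
    hne _ _ b (by rw [s1b, r1b]; exact hac)
  have ne15 : Equiv.swap a b ≠ Equiv.swap a b * Equiv.swap a c :=
    hne _ _ a (by rw [s1a, r2a]; exact hbc)
  have ne23 : Equiv.swap a c ≠ Equiv.swap b c := hne _ _ a (by rw [s2a, s3a]; exact hac.symm)
  have ne24 : Equiv.swap a c ≠ Equiv.swap a c * Equiv.swap a b :=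
    hne _ _ a (by rw [s2a, r1a]; exact hbc.symm)
  have ne25 : Equiv.swap a c ≠ Equiv.swap a b * Equiv.swap a c :=
    hne _ _ b (by rw [s2b, r2b]; exact hab.symm)
  have ne34 : Equiv.swap b c ≠ Equiv.swap a c * Equiv.swap a b :=
    hne _ _ a (by rw [s3a, r1a]; exact hab)
  have ne35 : Equiv.swap b c ≠ Equiv.swap a b * Equiv.swap a c :=
    hne _ _ a (by rw [s3a, r2a]; exact hac)
  have ne45 : Equiv.swap a c * Equiv.swap a b ≠ Equiv.swap a b * Equiv.swap a c :=
    hne _ _ a (by rw [r1a, r2a]; exact hbc)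
  rw [Finset.sum_insert (by
        simp only [Finset.mem_insert, Finset.mem_singleton]
        push_neg
        exact ⟨ne01, ne02, ne03, ne04, ne05⟩),
      Finset.sum_insert (by
        simp only [Finset.mem_insert, Finset.mem_singleton]
        push_neg
        exact ⟨ne12, ne13, ne14, ne15⟩),
      Finset.sum_insert (by
        simp only [Finset.mem_insert, Finset.mem_singleton]
        push_neg
        exact ⟨ne23, ne24, ne25⟩),
      Finset.sum_insert (by
        simp only [Finset.mem_insert, Finset.mem_singleton]
        push_neg
        exact ⟨ne34, ne35⟩),
      Finset.sum_pair ne45]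
  have hprodabc : ∀ f : V → ℚ, ∏ i ∈ ({a, b, c} : Finset V), f i = f a * (f b * f c) := by
    intro f
    rw [show ({a, b, c} : Finset V) = insert a {b, c} from rfl,
      Finset.prod_insert (by simp [hab, hac]), Finset.prod_pair hbc]
  simp only [hprodabc, Equiv.Perm.one_apply, s1a, s1b, s1c, s2a, s2b, s2c, s3a, s3b, s3c,
    r1a, r1b, r1c, r2a, r2b, r2c]
  rw [slm_diag, slm_diag, slm_diag,
    slm_off G hab, slm_off G hab.symm, slm_off G hac, slm_off G hac.symm,
    slm_off G hbc, slm_off G hbc.symm]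
  simp only [aQ_comm G b a, aQ_comm G c a, aQ_comm G c b]
  by_cases h1 : G.Adj a b <;> by_cases h2 : G.Adj b c <;> by_cases h3 : G.Adj a c <;>
    simp only [aQ, h1, h2, h3, if_true, if_false] <;> ring

end QPermAux

open QPermAux in
/-- **Lemma 2.2.** The four leading coefficients of the signless Laplacian permanental
polynomial `π = ∑ᵢ qᵢ xⁿ⁻ⁱ` of a graph `G` with `n` vertices, `m` edges and degrees `dᵢ`:
`q₀ = 1`, `q₁ = −2m`, `q₂ = 2m² + m − (1/2)∑dᵢ²`, and
`q₃ = −(1/3)∑dᵢ³ + (m+1)∑dᵢ² − (4/3)m³ − 2m² - 2c₃(G)`. -/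
theorem qPermPoly_coeffs
    {V : Type*} [Fintype V] (G : SimpleGraph V) :
    (qPermPoly G).coeff (Fintype.card V) = 1 ∧
    (1 ≤ Fintype.card V →
      (qPermPoly G).coeff (Fintype.card V - 1) = -2 * (G.edgeFinset.card : ℚ)) ∧
    (2 ≤ Fintype.card V →
      (qPermPoly G).coeff (Fintype.card V - 2) =
        2 * (G.edgeFinset.card : ℚ) ^ 2 + (G.edgeFinset.card : ℚ)
          - (1/2) * ∑ v, (G.degree v : ℚ) ^ 2) ∧
    (3 ≤ Fintype.card V →
      (qPermPoly G).coeff (Fintype.card V - 3) =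
        -(1/3) * ∑ v, (G.degree v : ℚ) ^ 3
          + ((G.edgeFinset.card : ℚ) + 1) * ∑ v, (G.degree v : ℚ) ^ 2
          - (4/3) * (G.edgeFinset.card : ℚ) ^ 3 - 2 * (G.edgeFinset.card : ℚ) ^ 2
          - 2 * (triangleCount G : ℚ)) := by
  have hp1 : ∑ v, (G.degree v : ℚ) = 2 * (G.edgeFinset.card : ℚ) := by
    have := SimpleGraph.sum_degrees_eq_twice_card_edges G
    exact_mod_cast this
  have hera : ∀ (f : V → ℚ) (a : V),
      ∑ b ∈ Finset.univ.erase a, f b = (∑ v, f v) - f a :=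
    fun f a => Finset.sum_erase_eq_sub (Finset.mem_univ a)
  have herab : ∀ (f : V → ℚ) (a b : V), b ≠ a →
      ∑ c ∈ (Finset.univ.erase a).erase b, f c = (∑ v, f v) - f a - f b := by
    intro f a b hba
    rw [Finset.sum_erase_eq_sub (Finset.mem_erase.2 ⟨hba, Finset.mem_univ b⟩), hera f a]
  have hU : ∑ a, ∑ v, aQ G a v * (G.degree v : ℚ) = ∑ v, (G.degree v : ℚ) ^ 2 := by
    rw [Finset.sum_comm]
    refine Finset.sum_congr rfl fun b _ => ?_
    rw [← Finset.sum_mul,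
      Finset.sum_congr rfl (fun a _ => aQ_comm G a b), sum_aQ]
    ring
  refine ⟨?_, ?_, ?_, ?_⟩
  · -- q₀ = 1
    have h := coeff_qPermPoly G (k := 0) (Nat.zero_le _)
    rw [Nat.sub_zero] at h
    rw [h, Finset.powersetCard_zero, Finset.sum_singleton, PP_empty]
    norm_num
  · -- q₁ = -2m
    intro h1
    have h := coeff_qPermPoly G (k := 1) h1
    rw [QPermAux.sum_pCard1, Finset.sum_congr rfl fun a _ => PP_singleton G a, hp1] at h
    rw [h]; ring
  · -- q₂
    intro h2
    have e2 := coeff_qPermPoly G (k := 2) h2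
    rw [QPermAux.sum_pCard2] at e2
    have step1 : ∀ a ∈ (Finset.univ : Finset V),
        ∑ b ∈ Finset.univ.erase a, PP G {a, b}
        = (G.degree a : ℚ) * ((∑ v, (G.degree v : ℚ)) - (G.degree a : ℚ))
            + ((G.degree a : ℚ) - 0) := by
      intro a _
      have hcongr : ∀ b ∈ Finset.univ.erase a, PP G {a, b}
          = (G.degree a : ℚ) * (G.degree b : ℚ) + aQ G a b :=
        fun b hb => PP_pair G ((Finset.mem_erase.1 hb).1).symm
      rw [Finset.sum_congr rfl hcongr, Finset.sum_add_distrib, ← Finset.mul_sum,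
        hera (fun v => (G.degree v : ℚ)) a, hera (aQ G a) a, sum_aQ, aQ_self]
    rw [Finset.sum_congr rfl step1] at e2
    have step2 : ∑ a, ((G.degree a : ℚ) * ((∑ v, (G.degree v : ℚ)) - (G.degree a : ℚ))
            + ((G.degree a : ℚ) - 0))
        = (∑ v, (G.degree v : ℚ)) * (∑ v, (G.degree v : ℚ))
            - (∑ v, (G.degree v : ℚ) ^ 2) + (∑ v, (G.degree v : ℚ)) := by
      have hcongr : ∀ a ∈ (Finset.univ : Finset V),
          (G.degree a : ℚ) * ((∑ v, (G.degree v : ℚ)) - (G.degree a : ℚ))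
            + ((G.degree a : ℚ) - 0)
          = (∑ v, (G.degree v : ℚ)) * (G.degree a : ℚ) + (-1) * (G.degree a : ℚ) ^ 2
            + (G.degree a : ℚ) := fun a _ => by ring
      rw [Finset.sum_congr rfl hcongr]
      simp only [Finset.sum_add_distrib]
      rw [← Finset.mul_sum, ← Finset.mul_sum]
      ring
    rw [step2, hp1] at e2
    rw [e2]; ring
  · -- q₃
    intro h3
    have e3 := coeff_qPermPoly G (k := 3) h3
    rw [QPermAux.sum_pCard3] at e3
    have hSA : ∑ a, ∑ b ∈ Finset.univ.erase a, ∑ c ∈ (Finset.univ.erase a).erase b,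
          PP G {a, b, c}
        = (∑ a, ∑ b ∈ Finset.univ.erase a, ∑ c ∈ (Finset.univ.erase a).erase b,
            (((G.degree a : ℚ) * (G.degree b : ℚ) + aQ G a b) * (G.degree c : ℚ)
              + (G.degree a : ℚ) * aQ G b c + (G.degree b : ℚ) * aQ G a c))
          + ∑ a, ∑ b ∈ Finset.univ.erase a, ∑ c ∈ (Finset.univ.erase a).erase b,
            (2 * (aQ G a b * (aQ G b c * aQ G a c))) := by
      rw [← Finset.sum_add_distrib]
      refine Finset.sum_congr rfl fun a _ => ?_
      rw [← Finset.sum_add_distrib]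
      refine Finset.sum_congr rfl fun b hb => ?_
      rw [← Finset.sum_add_distrib]
      refine Finset.sum_congr rfl fun c hc => ?_
      have hba : b ≠ a := (Finset.mem_erase.1 hb).1
      have hcb : c ≠ b := (Finset.mem_erase.1 hc).1
      have hca : c ≠ a := (Finset.mem_erase.1 (Finset.mem_erase.1 hc).2).1
      rw [PP_triple G hba.symm hca.symm hcb.symm]
      ring
    have htri : ∑ a, ∑ b ∈ Finset.univ.erase a, ∑ c ∈ (Finset.univ.erase a).erase b,
          (2 * (aQ G a b * (aQ G b c * aQ G a c)))
        = 12 * (triangleCount G : ℚ) := by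
      have hFcongr : ∑ a, ∑ b ∈ Finset.univ.erase a, ∑ c ∈ (Finset.univ.erase a).erase b,
            (2 * (aQ G a b * (aQ G b c * aQ G a c)))
          = ∑ a, ∑ b ∈ Finset.univ.erase a, ∑ c ∈ (Finset.univ.erase a).erase b,
            (fun t : Finset V => if G.IsNClique 3 t then (2 : ℚ) else 0) {a, b, c} := by
        refine Finset.sum_congr rfl fun a _ => ?_
        refine Finset.sum_congr rfl fun b hb => ?_
        refine Finset.sum_congr rfl fun c hc => ?_
        have hba : b ≠ a := (Finset.mem_erase.1 hb).1
        have hcb : c ≠ b := (Finset.mem_erase.1 hc).1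
        have hca : c ≠ a := (Finset.mem_erase.1 (Finset.mem_erase.1 hc).2).1
        simp only
        by_cases h1 : G.Adj a b
        · by_cases h2 : G.Adj b c
          · by_cases h3' : G.Adj a c
            · rw [if_pos (SimpleGraph.is3Clique_triple_iff.2 ⟨h1, h3', h2⟩)]
              simp [aQ, h1, h2, h3']
            · rw [if_neg (fun hcl => h3' (SimpleGraph.is3Clique_triple_iff.1 hcl).2.1)]
              simp [aQ, h3']
          · rw [if_neg (fun hcl => h2 (SimpleGraph.is3Clique_triple_iff.1 hcl).2.2)]
            simp [aQ, h2]
        · rw [if_neg (fun hcl => h1 (SimpleGraph.is3Clique_triple_iff.1 hcl).1)]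
          simp [aQ, h1]
      rw [hFcongr]
      have hs := QPermAux.sum_pCard3 (Finset.univ : Finset V)
        (fun t : Finset V => if G.IsNClique 3 t then (2 : ℚ) else 0)
      have hcount : ∑ t ∈ Finset.powersetCard 3 (Finset.univ : Finset V),
          (if G.IsNClique 3 t then (2 : ℚ) else 0) = 2 * (triangleCount G : ℚ) := by
        have : ∀ t ∈ Finset.powersetCard 3 (Finset.univ : Finset V),
            (if G.IsNClique 3 t then (2 : ℚ) else 0)
              = 2 * (if G.IsNClique 3 t then (1 : ℚ) else 0) := by
          intro t _
          by_cases h : G.IsNClique 3 t <;> simp [h]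
        rw [Finset.sum_congr rfl this, ← Finset.mul_sum, Finset.sum_boole]
        congr 2
        rw [triangleCount]
        congr 1
        ext t
        simp only [Finset.mem_filter, Finset.mem_powersetCard_univ,
          SimpleGraph.mem_cliqueFinset_iff]
        exact ⟨fun h => h.2, fun h => ⟨h.card_eq, h⟩⟩
      rw [hcount] at hs
      linarith
    have hN : ∑ a, ∑ b ∈ Finset.univ.erase a, ∑ c ∈ (Finset.univ.erase a).erase b,
          (((G.degree a : ℚ) * (G.degree b : ℚ) + aQ G a b) * (G.degree c : ℚ)
            + (G.degree a : ℚ) * aQ G b c + (G.degree b : ℚ) * aQ G a c)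
        = (∑ v, (G.degree v : ℚ)) ^ 3
            - 3 * (∑ v, (G.degree v : ℚ)) * (∑ v, (G.degree v : ℚ) ^ 2)
            + 2 * (∑ v, (G.degree v : ℚ) ^ 3)
            + 3 * (∑ v, (G.degree v : ℚ)) ^ 2 - 6 * (∑ v, (G.degree v : ℚ) ^ 2) := by
      have hmid : ∀ a ∈ (Finset.univ : Finset V),
          ∑ b ∈ Finset.univ.erase a, ∑ c ∈ (Finset.univ.erase a).erase b,
            (((G.degree a : ℚ) * (G.degree b : ℚ) + aQ G a b) * (G.degree c : ℚ)
              + (G.degree a : ℚ) * aQ G b c + (G.degree b : ℚ) * aQ G a c)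
          = ((∑ v, (G.degree v : ℚ)) ^ 2 + 3 * (∑ v, (G.degree v : ℚ))
                - (∑ v, (G.degree v : ℚ) ^ 2)) * (G.degree a : ℚ)
              + (-(2 * (∑ v, (G.degree v : ℚ)) + 4)) * (G.degree a : ℚ) ^ 2
              + 2 * (G.degree a : ℚ) ^ 3
              + (-2) * (∑ v, aQ G a v * (G.degree v : ℚ)) := by
        intro a _
        have hinner : ∀ b ∈ Finset.univ.erase a,
            ∑ c ∈ (Finset.univ.erase a).erase b,
              (((G.degree a : ℚ) * (G.degree b : ℚ) + aQ G a b) * (G.degree c : ℚ)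
                + (G.degree a : ℚ) * aQ G b c + (G.degree b : ℚ) * aQ G a c)
            = ((G.degree a : ℚ) * (∑ v, (G.degree v : ℚ)) - (G.degree a : ℚ) ^ 2
                  + 2 * (G.degree a : ℚ)) * (G.degree b : ℚ)
                + (-(G.degree a : ℚ)) * (G.degree b : ℚ) ^ 2
                + ((∑ v, (G.degree v : ℚ)) - 2 * (G.degree a : ℚ)) * aQ G a b
                + (-2) * (aQ G a b * (G.degree b : ℚ)) := by
          intro b hb
          have hba : b ≠ a := (Finset.mem_erase.1 hb).1
          rw [Finset.sum_add_distrib, Finset.sum_add_distrib, ← Finset.mul_sum,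
            ← Finset.mul_sum, ← Finset.mul_sum,
            herab (fun v => (G.degree v : ℚ)) a b hba,
            herab (aQ G b) a b hba, herab (aQ G a) a b hba,
            sum_aQ, sum_aQ, aQ_self, aQ_self, aQ_comm G b a]
          ring
        rw [Finset.sum_congr rfl hinner]
        simp only [Finset.sum_add_distrib]
        rw [← Finset.mul_sum, ← Finset.mul_sum, ← Finset.mul_sum, ← Finset.mul_sum,
          hera (fun v => (G.degree v : ℚ)) a, hera (fun v => (G.degree v : ℚ) ^ 2) a,
          hera (aQ G a) a, hera (fun v => aQ G a v * (G.degree v : ℚ)) a,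
          sum_aQ, aQ_self]
        ring
      rw [Finset.sum_congr rfl hmid]
      simp only [Finset.sum_add_distrib]
      rw [← Finset.mul_sum, ← Finset.mul_sum, ← Finset.mul_sum, ← Finset.mul_sum, hU]
      ring
    rw [hSA, htri, hN, hp1] at e3
    rw [e3]; ring
end
end

section
/- For every integer n ≥ 3, the signless Laplacian permanental polynomial of the cycle C_n evaluated at x = 2 satisfies per(2I − Q(C_n)) = 3(−1)^n + 1. -/
open scoped Classical
open Polynomial

noncomputable section

/-- The signless Laplacian permanental polynomial of `G` evaluated at `x = 2`:
`per(2·I − Q(G))`. -/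
def qPermAtTwo {V : Type*} [Fintype V] (G : SimpleGraph V) : ℚ :=
  Matrix.permanent (Matrix.diagonal (fun _ : V => (2 : ℚ)) - signlessLapMatrix G)

namespace CycPermAux

open Fin.CommRing

variable {m : ℕ}

lemma two_ne_zero' : (2 : Fin (m+3)) ≠ 0 := by
  intro h
  simp [Fin.ext_iff] at h
  rw [Nat.mod_eq_of_lt (by omega)] at h
  omega

lemma one_ne_negone : (1 : Fin (m+3)) ≠ -1 := by
  intro h
  apply two_ne_zero' (m := m)
  linear_combination h

lemma cyc_adj (u v : Fin (m+3)) :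
    (SimpleGraph.cycleGraph (m+3)).Adj u v ↔ u = v + 1 ∨ u = v - 1 := by
  rw [show (m+3) = (m+1)+2 from rfl] at *
  rw [SimpleGraph.cycleGraph_adj]
  constructor
  · rintro (h | h)
    · left; linear_combination h
    · right; linear_combination -h
  · rintro (h | h)
    · left; linear_combination h
    · right; linear_combination -h

/-- the "step" condition -/
def Nice (σ : Equiv.Perm (Fin (m+3))) : Prop := ∀ i, σ i = i + 1 ∨ σ i = i - 1

lemma step {σ : Equiv.Perm (Fin (m+3))} (hσ : Nice σ) (i : Fin (m+3)) :
    σ (i + 2) = σ i + 2 := by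
  have h2 := two_ne_zero' (m := m)
  rcases hσ i with h1 | h1 <;> rcases hσ (i + 2) with h3 | h3
  · rw [h1, h3]; ring
  · exfalso
    have heq : σ (i + 2) = σ i := by rw [h1, h3]; ring
    have := σ.injective heq
    exact h2 (by linear_combination this)
  · exfalso
    obtain ⟨j, hj⟩ := σ.surjective (i + 1)
    rcases hσ j with h4 | h4
    · have hji : j = i := by linear_combination hj - h4
      rw [hji] at h4
      rw [h1] at h4
      exact h2 (by linear_combination -h4)
    · have hji : j = i + 2 := by linear_combination hj - h4
      rw [hji] at h4
      rw [h3] at h4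
      exact h2 (by linear_combination h4)
  · rw [h1, h3]; ring


lemma iter {σ : Equiv.Perm (Fin (m+3))} (hσ : Nice σ) (k : ℕ) (i : Fin (m+3)) :
    σ (i + ((2 * k : ℕ) : Fin (m+3))) = σ i + ((2 * k : ℕ) : Fin (m+3)) := by
  induction k with
  | zero => simp
  | succ k ih =>
      have hc : ((2 * (k+1) : ℕ) : Fin (m+3)) = ((2 * k : ℕ) : Fin (m+3)) + 2 := by
        push_cast
        ring
      rw [hc, ← add_assoc, step hσ, ih, add_assoc]

lemma decomp (i : Fin (m+3)) :
    i = ((i.val % 2 : ℕ) : Fin (m+3)) + ((2 * (i.val / 2) : ℕ) : Fin (m+3)) := by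
  rw [← Nat.cast_add]
  conv_lhs => rw [← Fin.cast_val_eq_self i]
  congr 1
  omega

lemma detm {σ : Equiv.Perm (Fin (m+3))} (hσ : Nice σ) (i : Fin (m+3)) :
    σ i = σ ((i.val % 2 : ℕ) : Fin (m+3)) + ((2 * (i.val / 2) : ℕ) : Fin (m+3)) := by
  conv_lhs => rw [decomp i]
  exact iter hσ _ _


def pRot (m : ℕ) : Equiv.Perm (Fin (m+3)) := Equiv.addRight 1

lemma pRot_apply (i : Fin (m+3)) : pRot m i = i + 1 := rfl

lemma pRot_inv_apply (i : Fin (m+3)) : (pRot m)⁻¹ i = i - 1 := by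
  simp [pRot, Equiv.Perm.inv_def, sub_eq_add_neg]

def mAfun (m : ℕ) : Fin (m+3) → Fin (m+3) := fun i => if i.val % 2 = 0 then i + 1 else i - 1

lemma val_sub_one' (i : Fin (m+3)) :
    ((i - 1 : Fin (m+3))).val = if i.val = 0 then m + 2 else i.val - 1 := by
  have h := Fin.coe_sub_one i
  by_cases h0 : i = 0
  · rw [if_pos h0] at h
    rw [if_pos (by simp [h0])]
    exact h
  · rw [if_neg h0] at h
    rw [if_neg (show ¬ i.val = 0 from fun hv => h0 (Fin.ext hv))]
    exact h

lemma val_add_one' (i : Fin (m+3)) (h : i.val < m + 2) :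
    ((i + 1 : Fin (m+3))).val = i.val + 1 := by
  apply Fin.val_add_one_of_lt
  simp [Fin.lt_def, Fin.last, h]

lemma mA_invol (he : (m+3) % 2 = 0) : Function.Involutive (mAfun m) := by
  intro i
  unfold mAfun
  by_cases h : i.val % 2 = 0
  · rw [if_pos h]
    have hlt : i.val < m + 2 := by have := i.isLt; omega
    have hv := val_add_one' i hlt
    rw [if_neg (by rw [hv]; omega)]
    ring
  · rw [if_neg h]
    have hv : ((i - 1 : Fin (m+3))).val = i.val - 1 := by
      rw [val_sub_one', if_neg (by omega)]
    rw [if_pos (by rw [hv]; omega)]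
    ring

def mA (he : (m+3) % 2 = 0) : Equiv.Perm (Fin (m+3)) :=
  Function.Involutive.toPerm _ (mA_invol he)

def mB (he : (m+3) % 2 = 0) : Equiv.Perm (Fin (m+3)) :=
  (Equiv.addRight (1 : Fin (m+3))).symm.trans ((mA he).trans (Equiv.addRight 1))

lemma mA_apply (he : (m+3) % 2 = 0) (i : Fin (m+3)) :
    mA he i = if i.val % 2 = 0 then i + 1 else i - 1 := rfl

lemma mB_apply (he : (m+3) % 2 = 0) (i : Fin (m+3)) :
    mB he i = if i.val % 2 = 0 then i - 1 else i + 1 := by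
  have h1 : mB he i = mAfun m (i - 1) + 1 := by
    simp [mB, mA, Equiv.trans_apply, Function.Involutive.coe_toPerm, sub_eq_add_neg]
  rw [h1]
  unfold mAfun
  have hpar : ((i - 1 : Fin (m+3))).val % 2 = (i.val + 1) % 2 := by
    rw [val_sub_one']
    have := i.isLt
    split_ifs with h0 <;> omega
  by_cases h : i.val % 2 = 0
  · rw [if_neg (by omega : ¬ ((i - 1 : Fin (m+3))).val % 2 = 0), if_pos h]
    ring
  · rw [if_pos (by omega : ((i - 1 : Fin (m+3))).val % 2 = 0), if_neg h]
    ring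

lemma nice_pRot : Nice (pRot m) := fun i => Or.inl rfl

lemma nice_pRot_inv : Nice (pRot m)⁻¹ := fun i => Or.inr (pRot_inv_apply i)

lemma nice_mA (he : (m+3) % 2 = 0) : Nice (mA he) := by
  intro i
  rw [mA_apply]
  by_cases h : i.val % 2 = 0
  · left; rw [if_pos h]
  · right; rw [if_neg h]

lemma nice_mB (he : (m+3) % 2 = 0) : Nice (mB he) := by
  intro i
  rw [mB_apply]
  by_cases h : i.val % 2 = 0
  · right; rw [if_pos h]
  · left; rw [if_neg h]


lemma ext_of_01 {σ τ : Equiv.Perm (Fin (m+3))} (hσ : Nice σ) (hτ : Nice τ)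
    (h0 : σ 0 = τ 0) (h1 : σ 1 = τ 1) : σ = τ := by
  ext i
  rw [detm hσ i, detm hτ i]
  rcases Nat.mod_two_eq_zero_or_one i.val with h | h <;> rw [h]
  · simp only [Nat.cast_zero]; rw [h0]
  · simp only [Nat.cast_one]; rw [h1]

lemma odd_sum (ho : (m+3) % 2 = 1) {σ : Equiv.Perm (Fin (m+3))} (hσ : Nice σ) :
    σ 1 = σ 0 + 1 := by
  have hc : ((2 * ((m+4)/2) : ℕ) : Fin (m+3)) = 1 := by
    have h2 : 2 * ((m+4)/2) = (m+3) + 1 := by omega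
    rw [h2, Nat.cast_add, Fin.natCast_self, zero_add, Nat.cast_one]
  have h := iter hσ ((m+4)/2) 0
  rw [hc, zero_add] at h
  exact h

lemma classify {σ : Equiv.Perm (Fin (m+3))} (hσ : Nice σ) :
    σ = pRot m ∨ σ = (pRot m)⁻¹ ∨ ∃ he : (m+3) % 2 = 0, σ = mA he ∨ σ = mB he := by
  have h2 := two_ne_zero' (m := m)
  have h0 := hσ 0
  rw [zero_add, zero_sub] at h0
  have h1 := hσ 1
  rw [sub_self] at h1
  have h11 : (1 : Fin (m+3)) + 1 = 2 := by ring
  rw [h11] at h1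
  have hv1 : (1 : Fin (m+3)).val = 1 := rfl
  have hv0 : (0 : Fin (m+3)).val = 0 := rfl
  rcases h0 with h0 | h0 <;> rcases h1 with h1 | h1
  · left
    exact ext_of_01 hσ nice_pRot (by rw [pRot_apply, h0]; ring) (by rw [pRot_apply, h1]; ring)
  · -- σ 0 = 1, σ 1 = 0 : even case gives mA
    by_cases he : (m+3) % 2 = 0
    · right; right; exact ⟨he, Or.inl (ext_of_01 hσ (nice_mA he)
        (by rw [mA_apply, hv0, if_pos rfl, h0]; ring)
        (by rw [mA_apply, hv1, if_neg (by omega), h1]; ring))⟩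
    · exfalso
      have := odd_sum (by omega) hσ
      rw [h0, h1] at this
      exact h2 (by linear_combination -this)
  · -- σ 0 = -1, σ 1 = 2 : even case gives mB
    by_cases he : (m+3) % 2 = 0
    · right; right; exact ⟨he, Or.inr (ext_of_01 hσ (nice_mB he)
        (by rw [mB_apply, hv0, if_pos rfl, h0]; ring)
        (by rw [mB_apply, hv1, if_neg (by omega), h1]; ring))⟩
    · exfalso
      have := odd_sum (by omega) hσ
      rw [h0, h1] at this
      exact h2 (by linear_combination this)
  · right; left
    exact ext_of_01 hσ nice_pRot_inv (by rw [pRot_inv_apply, h0]; ring)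
      (by rw [pRot_inv_apply, h1]; ring)

lemma d1 : pRot m ≠ (pRot m)⁻¹ := by
  intro h
  rw [Equiv.ext_iff] at h
  have := h 0
  rw [pRot_apply, pRot_inv_apply] at this
  exact two_ne_zero' (m := m) (by linear_combination this)

lemma d2 (he : (m+3) % 2 = 0) : pRot m ≠ mA he := by
  intro h
  rw [Equiv.ext_iff] at h
  have := h 1
  rw [pRot_apply, mA_apply, if_neg (by simp)] at this
  exact two_ne_zero' (m := m) (by linear_combination this)

lemma d3 (he : (m+3) % 2 = 0) : pRot m ≠ mB he := by
  intro h
  rw [Equiv.ext_iff] at h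
  have := h 0
  rw [pRot_apply, mB_apply, if_pos (by simp)] at this
  exact two_ne_zero' (m := m) (by linear_combination this)

lemma d4 (he : (m+3) % 2 = 0) : (pRot m)⁻¹ ≠ mA he := by
  intro h
  rw [Equiv.ext_iff] at h
  have := h 0
  rw [pRot_inv_apply, mA_apply, if_pos (by simp)] at this
  exact two_ne_zero' (m := m) (by linear_combination -this)

lemma d5 (he : (m+3) % 2 = 0) : (pRot m)⁻¹ ≠ mB he := by
  intro h
  rw [Equiv.ext_iff] at h
  have := h 1
  rw [pRot_inv_apply, mB_apply, if_neg (by simp)] at this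
  exact two_ne_zero' (m := m) (by linear_combination -this)

lemma d6 (he : (m+3) % 2 = 0) : mA he ≠ mB he := by
  intro h
  rw [Equiv.ext_iff] at h
  have := h 0
  rw [mA_apply, mB_apply, if_pos (by simp), if_pos (by simp)] at this
  exact two_ne_zero' (m := m) (by linear_combination this)

lemma filter_odd (ho : (m+3) % 2 = 1) :
    (Finset.univ.filter fun σ : Equiv.Perm (Fin (m+3)) => Nice σ) = {pRot m, (pRot m)⁻¹} := by
  ext σ
  simp only [Finset.mem_filter, Finset.mem_univ, true_and, Finset.mem_insert,
    Finset.mem_singleton]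
  constructor
  · intro hσ
    rcases classify hσ with h | h | ⟨he, _⟩
    · exact Or.inl h
    · exact Or.inr h
    · omega
  · rintro (rfl | rfl)
    · exact nice_pRot
    · exact nice_pRot_inv

lemma filter_even (he : (m+3) % 2 = 0) :
    (Finset.univ.filter fun σ : Equiv.Perm (Fin (m+3)) => Nice σ)
      = {pRot m, (pRot m)⁻¹, mA he, mB he} := by
  ext σ
  simp only [Finset.mem_filter, Finset.mem_univ, true_and, Finset.mem_insert,
    Finset.mem_singleton]
  constructor
  · intro hσ
    rcases classify hσ with h | h | ⟨he', h⟩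
    · exact Or.inl h
    · exact Or.inr (Or.inl h)
    · rcases h with h | h
      · exact Or.inr (Or.inr (Or.inl h))
      · exact Or.inr (Or.inr (Or.inr h))
  · rintro (rfl | rfl | rfl | rfl)
    · exact nice_pRot
    · exact nice_pRot_inv
    · exact nice_mA he
    · exact nice_mB he

lemma card_odd (ho : (m+3) % 2 = 1) :
    (Finset.univ.filter fun σ : Equiv.Perm (Fin (m+3)) => Nice σ).card = 2 := by
  rw [filter_odd ho]
  rw [Finset.card_insert_of_notMem (by simp [d1]), Finset.card_singleton]

lemma card_even (he : (m+3) % 2 = 0) :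
    (Finset.univ.filter fun σ : Equiv.Perm (Fin (m+3)) => Nice σ).card = 4 := by
  rw [filter_even he]
  rw [Finset.card_insert_of_notMem (by simp [d1, d2 he, d3 he]),
    Finset.card_insert_of_notMem (by simp [d4 he, d5 he]),
    Finset.card_insert_of_notMem (by simp [d6 he]), Finset.card_singleton]


lemma perm_count :
    Matrix.permanent ((SimpleGraph.cycleGraph (m+3)).adjMatrix ℚ)
      = ((Finset.univ.filter fun σ : Equiv.Perm (Fin (m+3)) => Nice σ).card : ℚ) := by
  unfold Matrix.permanent
  have h1 : ∀ σ : Equiv.Perm (Fin (m+3)),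
      (∏ i, (SimpleGraph.cycleGraph (m+3)).adjMatrix ℚ (σ i) i)
        = if Nice σ then (1:ℚ) else 0 := by
    intro σ
    simp only [SimpleGraph.adjMatrix_apply]
    rw [Fintype.prod_boole]
    simp only [show (∀ i, (SimpleGraph.cycleGraph (m+3)).Adj (σ i) i) = Nice σ from
      propext ⟨fun h i => (cyc_adj _ _).mp (h i), fun h i => (cyc_adj _ _).mpr (h i)⟩]
  rw [Finset.sum_congr rfl fun σ _ => h1 σ, Finset.sum_boole]

end CycPermAux

lemma deg_any (m : ℕ) (v : Fin (m+3))
    (inst : Fintype ((SimpleGraph.cycleGraph (m+3)).neighborSet v)) :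
    @SimpleGraph.degree _ (SimpleGraph.cycleGraph (m+3)) v inst = 2 := by
  rw [Subsingleton.elim inst (SimpleGraph.neighborSetFintype _ v)]
  exact SimpleGraph.cycleGraph_degree_three_le

lemma perm_glue {m : ℕ} (i1 : DecidableEq (Fin (m+3))) (M : Matrix (Fin (m+3)) (Fin (m+3)) ℚ) :
    @Matrix.permanent _ i1 _ _ _ M = @Matrix.permanent _ (instDecidableEqFin (m+3)) _ _ _ M := by
  have h : i1 = instDecidableEqFin (m+3) := Subsingleton.elim _ _
  subst h
  rfl

lemma mat_glue (m : ℕ) (i1 : DecidableEq (Fin (m+3))) :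
    @Matrix.diagonal _ _ i1 _ (fun _ => (2:ℚ))
        - signlessLapMatrix (SimpleGraph.cycleGraph (m+3))
      = (-1 : ℚ) • ((SimpleGraph.cycleGraph (m+3)).adjMatrix ℚ) := by
  rw [Subsingleton.elim i1 inferInstance]
  unfold signlessLapMatrix SimpleGraph.degMatrix
  ext i j
  simp only [Matrix.sub_apply, Matrix.add_apply, Matrix.smul_apply, Matrix.diagonal_apply,
    SimpleGraph.adjMatrix_apply, smul_eq_mul]
  by_cases hij : i = j
  · subst hij
    rw [if_pos rfl, if_pos rfl, deg_any m i _]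
    simp
  · rw [if_neg hij, if_neg hij]
    ring

/-- **Lemma 2.10(d).** For `n ≥ 3`, the signless Laplacian permanental polynomial of the
cycle `Cₙ` evaluated at `x = 2` equals `3·(−1)ⁿ + 1`. -/
theorem qPermAtTwo_cycleGraph (n : ℕ) (hn : 3 ≤ n) :
    qPermAtTwo (SimpleGraph.cycleGraph n) = 3 * (-1 : ℚ) ^ n + 1 := by
  obtain ⟨m, rfl⟩ : ∃ m, n = m + 3 := ⟨n - 3, by omega⟩
  unfold qPermAtTwo
  rw [perm_glue]
  rw [mat_glue]
  rw [Matrix.permanent_smul (((SimpleGraph.cycleGraph (m+3)).adjMatrix ℚ)) (-1 : ℚ)]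
  rw [CycPermAux.perm_count]
  rw [Fintype.card_fin]
  by_cases he : (m+3) % 2 = 0
  · rw [CycPermAux.card_even he, Even.neg_one_pow (Nat.even_iff.mpr he)]
    norm_num
  · rw [CycPermAux.card_odd (by omega), Odd.neg_one_pow (Nat.odd_iff.mpr (by omega))]
    norm_num
end
end
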